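/- arXiv:2104.13753 — 3 statements merged into one kernel-verified Lean document; each statement's English description precedes it below -/
import Mathlib

section
/- Let μ be a nonzero finite Borel measure on ℝ^d with compact support and λ ≥ 0. Then the minimizer u_{μ,λ} of J_{μ,λ} is μ-regular. -/
open MeasureTheory Filter Topology ProbabilityTheory
open scoped ENNReal NNReal symmDiff Classical RealInnerProductSpace

noncomputable section

/-- `d`-dimensional Euclidean space. -/
abbrev Euc (d : ℕ) : Type := EuclideanSpace ℝ (Fin d)

/-- The sum-of-norms clustering functional
`J_{μ,λ}(u) = ∫ |u x - x|² dμ + λ ∬ |u x - u y| dμ dμ`. -/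
def SONJ {d : ℕ} (μ : Measure (Euc d)) (lam : ℝ) (u : Euc d → Euc d) : ℝ :=
  ∫ x, ‖u x - x‖ ^ 2 ∂μ + lam * ∫ x, ∫ y, ‖u x - u y‖ ∂μ ∂μ

/-- `u` is a minimizer of `J_{μ,λ}` over `L²(μ; ℝ^d)`.  Since `J_{μ,λ}` has a unique
minimizer (up to `μ`-a.e. equality), this predicate characterizes `u_{μ,λ}`. -/
def IsSONMin {d : ℕ} (μ : Measure (Euc d)) (lam : ℝ) (u : Euc d → Euc d) : Prop :=
  MemLp u 2 μ ∧ ∀ v : Euc d → Euc d, MemLp v 2 μ → SONJ μ lam u ≤ SONJ μ lam v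

/-- `μ` is `λ`-cohesive: the minimizer of `J_{μ,λ}` is `μ`-a.e. constant. -/
def Cohesive {d : ℕ} (μ : Measure (Euc d)) (lam : ℝ) : Prop :=
  ∃ u : Euc d → Euc d, IsSONMin μ lam u ∧ ∃ c : Euc d, u =ᵐ[μ] fun _ => c

/-- `μ` is `λ`-shattered: the minimizer of `J_{μ,λ}` agrees `μ`-a.e. with a measurable
injection. -/
def Shattered {d : ℕ} (μ : Measure (Euc d)) (lam : ℝ) : Prop :=
  ∃ u : Euc d → Euc d, IsSONMin μ lam u ∧
    ∃ v : Euc d → Euc d, Measurable v ∧ Function.Injective v ∧ u =ᵐ[μ] v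

/-- `λ₁(μ) = inf {λ ≥ 0 | μ is λ-cohesive}`. -/
def lambda1 {d : ℕ} (μ : Measure (Euc d)) : ℝ :=
  sInf {lam : ℝ | 0 ≤ lam ∧ Cohesive μ lam}

/-- `λ⋆(μ) = sup {λ ≥ 0 | μ is λ-shattered}`. -/
def lambdaStar {d : ℕ} (μ : Measure (Euc d)) : ℝ :=
  sSup {lam : ℝ | 0 ≤ lam ∧ Shattered μ lam}

/-- The level set (cluster) of `u` containing `x`: `V_{u,x} = u⁻¹({u x})`. -/
def Vset {d : ℕ} (u : Euc d → Euc d) (x : Euc d) : Set (Euc d) := {y | u y = u x}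

/-- The `μ`-centroid of a set `V`: the `μ`-average of `V` if `μ V > 0`, and the unique
element of `V` if `V` is a singleton (otherwise junk). -/
def muCentroid {d : ℕ} (μ : Measure (Euc d)) (V : Set (Euc d)) : Euc d :=
  if 0 < μ V then (μ V).toReal⁻¹ • ∫ x in V, x ∂μ
  else if h : ∃ x, V = {x} then h.choose else 0

/-- The first canonical basis vector of `ℝ^d`. -/
def e1 (d : ℕ) : Euc d := if h : 0 < d then EuclideanSpace.single (⟨0, h⟩ : Fin d) 1 else 0

/-- The constant `γ_d` from the paper. -/
def gammaD (d : ℕ) : ℝ :=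
  ((2 * (d : ℝ) + 1) / (2 * (d : ℝ) + 4)) *
    (if Even d then
      (((d : ℝ) + 1) * ((Nat.factorial (2 * d) : ℝ)) * Real.pi) /
        (2 ^ (3 * d) * ((Nat.factorial (d / 2) : ℝ)) ^ 2 * ((Nat.factorial d : ℝ)))
    else
      (((d : ℝ) + 1) * ((Nat.factorial ((d - 1) / 2) : ℝ)) ^ 2 *
          ((Nat.factorial (2 * d) : ℝ))) /
        (2 ^ d * ((Nat.factorial d : ℝ)) ^ 3))

/-- The union of the two open unit balls centered at `± r e₁`. -/
def ballUnion (d : ℕ) (r : ℝ) : Set (Euc d) :=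
  Metric.ball (-(r • e1 d)) 1 ∪ Metric.ball (r • e1 d) 1

/-- The empirical measure `μ_N = N⁻¹ ∑_{n<N} δ_{X n ω}`. -/
def empMeas {d : ℕ} {Ω : Type*} (X : ℕ → Ω → Euc d) (N : ℕ) (ω : Ω) : Measure (Euc d) :=
  (N : ℝ≥0∞)⁻¹ • ∑ n ∈ Finset.range N, Measure.dirac (X n ω)
namespace SON4
open MeasureTheory Filter Topology
open scoped ENNReal RealInnerProductSpace Classical

variable {d : ℕ}

def dirv (v : Euc d) : Euc d := if v = 0 then 0 else ‖v‖⁻¹ • v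

@[simp] lemma dirv_zero : dirv (0 : Euc d) = 0 := if_pos rfl

lemma dirv_of_ne (v : Euc d) (h : v ≠ 0) : dirv v = ‖v‖⁻¹ • v := if_neg h

lemma norm_dirv_le (v : Euc d) : ‖dirv v‖ ≤ 1 := by
  rcases eq_or_ne v 0 with rfl | h
  · simp
  · rw [dirv_of_ne v h, norm_smul, norm_inv, norm_norm,
      inv_mul_cancel₀ (norm_ne_zero_iff.mpr h)]

lemma inner_dirv (v : Euc d) : ⟪dirv v, v⟫ = ‖v‖ := by
  rcases eq_or_ne v 0 with rfl | h
  · simp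
  · rw [dirv_of_ne v h, real_inner_smul_left, real_inner_self_eq_norm_sq]
    rw [sq]; field_simp

lemma dirv_neg (v : Euc d) : dirv (-v) = - dirv v := by
  rcases eq_or_ne v 0 with rfl | h
  · simp
  · rw [dirv_of_ne _ (by simpa using h), dirv_of_ne _ h, norm_neg, smul_neg]

lemma measurable_dirv : Measurable (dirv : Euc d → Euc d) := by
  unfold dirv
  exact Measurable.ite measurableSet_eq measurable_const
    ((measurable_norm.inv).smul (measurable_id : Measurable (fun v : Euc d => v)))

lemma inner_dirv_smul (v w : Euc d) (h : v ≠ 0) : ⟪dirv v, w⟫ = ‖v‖⁻¹ * ⟪v, w⟫ := by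
  rw [dirv_of_ne v h, real_inner_smul_left]

lemma inner_dirv_sub_nonneg (a b : Euc d) : 0 ≤ ⟪dirv a - dirv b, a - b⟫ := by
  rcases eq_or_ne a 0 with rfl | ha
  · rw [dirv_zero, zero_sub, inner_neg_left, zero_sub, inner_neg_right, neg_neg, inner_dirv]
    exact norm_nonneg b
  rcases eq_or_ne b 0 with rfl | hb
  · rw [dirv_zero, sub_zero, sub_zero, inner_dirv]; exact norm_nonneg a
  · rw [inner_sub_left, inner_sub_right, inner_sub_right, inner_dirv_smul _ _ ha,
      inner_dirv_smul _ _ hb, inner_dirv_smul _ _ ha, inner_dirv_smul _ _ hb]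
    have h1 : ⟪a, b⟫ ≤ ‖a‖ * ‖b‖ := real_inner_le_norm a b
    have h2 : ⟪b, a⟫ = ⟪a, b⟫ := real_inner_comm a b
    have h3 : ⟪a, a⟫ = ‖a‖ * ‖a‖ := real_inner_self_eq_norm_mul_norm a
    have h4 : ⟪b, b⟫ = ‖b‖ * ‖b‖ := real_inner_self_eq_norm_mul_norm b
    have ha' : (0:ℝ) < ‖a‖ := norm_pos_iff.mpr ha
    have hb' : (0:ℝ) < ‖b‖ := norm_pos_iff.mpr hb
    rw [h2, h3, h4]
    have e1 : ‖a‖⁻¹ * (‖a‖*‖a‖) = ‖a‖ := by field_simp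
    have e2 : ‖b‖⁻¹ * (‖b‖*‖b‖) = ‖b‖ := by field_simp
    rw [e1, e2]
    have key : ‖a‖⁻¹ * ⟪a,b⟫ + ‖b‖⁻¹ * ⟪a,b⟫ ≤ ‖b‖ + ‖a‖ := by
      have l1 : ‖a‖⁻¹ * ⟪a,b⟫ ≤ ‖b‖ := by
        rw [inv_mul_le_iff₀ ha']; nlinarith
      have l2 : ‖b‖⁻¹ * ⟪a,b⟫ ≤ ‖a‖ := by
        rw [inv_mul_le_iff₀ hb']; nlinarith
      linarith
    linarith

end SON4
namespace SON4
open MeasureTheory Filter Topology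
open scoped ENNReal RealInnerProductSpace Classical

variable {d : ℕ}

lemma norm_add_sq_smul_le (a b : Euc d) (s : ℝ) (hs : 0 < s) (hb : ‖b‖ ≤ 2) :
    ‖a + s^2 • b‖ ≤ ‖a‖ + s^2 * ⟪dirv a, b⟫ + (if a = 0 then s^2 * ‖b‖ else 0)
      + 2*s^3 + (if a ≠ 0 ∧ ‖a‖ < s then 4*s^2 else 0) := by
  have hjunk : (0:ℝ) ≤ 2*s^3 := by positivity
  have hns : ‖(s^2:ℝ)‖ = s^2 := by rw [Real.norm_eq_abs, abs_of_nonneg (by positivity)]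
  rcases eq_or_ne a 0 with rfl | ha
  · rw [if_pos rfl, if_neg (by simp)]
    simp only [zero_add, norm_zero, dirv_zero, inner_zero_left]
    rw [norm_smul, hns]; linarith
  · have ha' : (0:ℝ) < ‖a‖ := norm_pos_iff.mpr ha
    rw [if_neg ha]
    by_cases hsmall : ‖a‖ < s
    · rw [if_pos ⟨ha, hsmall⟩]
      have h1 : ‖a + s^2 • b‖ ≤ ‖a‖ + s^2 * ‖b‖ := by
        calc ‖a + s^2 • b‖ ≤ ‖a‖ + ‖s^2 • b‖ := norm_add_le _ _
        _ = ‖a‖ + s^2 * ‖b‖ := by rw [norm_smul, hns]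
      have h2 : -‖b‖ ≤ ⟪dirv a, b⟫ := by
        have habs : |⟪dirv a, b⟫| ≤ ‖b‖ := by
          refine le_trans (abs_real_inner_le_norm (dirv a) b) ?_
          nlinarith [norm_dirv_le a, norm_nonneg b, norm_nonneg (dirv a)]
        linarith [neg_le_of_abs_le habs, neg_abs_le ⟪dirv a, b⟫]
      have hs2 : (0:ℝ) < s^2 := by positivity
      nlinarith
    · rw [if_neg (by push_neg; intro _; linarith)]
      push_neg at hsmall
      set h : ℝ := 2*(s^2 * ⟪a, b⟫) + (s^2)^2 * ‖b‖^2 with hh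
      have hexp : ‖a + s^2 • b‖^2 = ‖a‖^2 + h := by
        rw [hh, norm_add_sq_real, real_inner_smul_right, norm_smul, hns]; ring
      set R : ℝ := ‖a‖ + h / (2*‖a‖) with hR
      have hRnn : 0 ≤ R := by
        have hR2 : R = (‖a‖^2 + (‖a‖^2 + h)) / (2*‖a‖) := by rw [hR]; field_simp; ring
        rw [hR2, ← hexp]; positivity
      have hsq : ‖a + s^2 • b‖^2 ≤ R^2 := by
        rw [hexp, hR]
        have hexp2 : (‖a‖ + h/(2*‖a‖))^2 = ‖a‖^2 + h + (h/(2*‖a‖))^2 := by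
          field_simp; ring
        rw [hexp2]
        nlinarith [sq_nonneg (h/(2*‖a‖))]
      have hle : ‖a + s^2 • b‖ ≤ R :=
        (pow_le_pow_iff_left₀ (norm_nonneg _) hRnn two_ne_zero).mp hsq
      refine hle.trans ?_
      have hRval : R = ‖a‖ + s^2 * (‖a‖⁻¹ * ⟪a,b⟫) + s^4 * ‖b‖^2 / (2*‖a‖) := by
        rw [hR, hh]; field_simp; ring
      have herr : s^4 * ‖b‖^2 / (2*‖a‖) ≤ 2*s^3 := by
        rw [div_le_iff₀ (by positivity)]
        have hb2 : ‖b‖^2 ≤ 4 := by nlinarith [norm_nonneg b]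
        have h4 : s^4 * ‖b‖^2 ≤ 4 * s^4 := by nlinarith [pow_pos hs 4]
        have h5 : (4:ℝ) * s^4 ≤ 2*s^3 * (2*‖a‖) := by nlinarith [pow_pos hs 3]
        linarith
      rw [hRval, ← inner_dirv_smul a b ha]
      linarith

lemma integrable_of_bdd {α : Type*} {G : Type*} [MeasurableSpace α] [NormedAddCommGroup G]
    {ν : Measure α} [IsFiniteMeasure ν] {f : α → G} (hm : AEStronglyMeasurable f ν)
    (C : ℝ) (h : ∀ x, ‖f x‖ ≤ C) : Integrable f ν :=
  (integrable_const C).mono' hm (Filter.Eventually.of_forall h)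

lemma int_fst {G : Type*} [NormedAddCommGroup G]
    {μ ν : Measure (Euc d)} [IsFiniteMeasure μ] [IsFiniteMeasure ν] {f : Euc d → G}
    (hm : AEStronglyMeasurable f μ) (hf : Integrable f μ) :
    Integrable (fun p : Euc d × Euc d => f p.1) (μ.prod ν) := by
  have h1 : Integrable f (Measure.map Prod.fst (μ.prod ν)) := by
    rw [Measure.map_fst_prod]
    exact hf.smul_measure (measure_ne_top ν Set.univ)
  have h2 : AEStronglyMeasurable f (Measure.map Prod.fst (μ.prod ν)) := by
    rw [Measure.map_fst_prod]
    exact hm.smul_measure _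
  exact (integrable_map_measure h2 measurable_fst.aemeasurable).mp h1

lemma int_snd {G : Type*} [NormedAddCommGroup G]
    {μ ν : Measure (Euc d)} [IsFiniteMeasure μ] [IsFiniteMeasure ν] {f : Euc d → G}
    (hm : AEStronglyMeasurable f ν) (hf : Integrable f ν) :
    Integrable (fun p : Euc d × Euc d => f p.2) (μ.prod ν) := by
  have h1 : Integrable f (Measure.map Prod.snd (μ.prod ν)) := by
    rw [Measure.map_snd_prod]
    exact hf.smul_measure (measure_ne_top μ Set.univ)
  have h2 : AEStronglyMeasurable f (Measure.map Prod.snd (μ.prod ν)) := by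
    rw [Measure.map_snd_prod]
    exact hm.smul_measure _
  exact (integrable_map_measure h2 measurable_snd.aemeasurable).mp h1

lemma measurable_of_countable_support {f : Euc d → ℝ} {S : Set (Euc d)}
    (hS : S.Countable) (h0 : ∀ t, t ∉ S → f t = 0) : Measurable f := by
  intro B hB
  by_cases h0B : (0:ℝ) ∈ B
  · have hset : f ⁻¹' B = (S ∩ f ⁻¹' B) ∪ Sᶜ := by
      ext t
      constructor
      · intro ht
        by_cases htS : t ∈ S
        · exact Or.inl ⟨htS, ht⟩
        · exact Or.inr htS
      · rintro (⟨_, ht⟩ | ht)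
        · exact ht
        · show f t ∈ B
          rw [h0 t ht]; exact h0B
    rw [hset]
    exact ((hS.mono Set.inter_subset_left).measurableSet).union hS.measurableSet.compl
  · have hsub : f ⁻¹' B ⊆ S := by
      intro t ht
      by_contra htS
      rw [Set.mem_preimage, h0 t htS] at ht
      exact h0B ht
    exact (hS.mono hsub).measurableSet

lemma measurable_fiber_meas {w : Euc d → Euc d} (hwm : Measurable w)
    (μ : Measure (Euc d)) [IsFiniteMeasure μ] :
    Measurable (fun x => (μ {y | w y = w x}).toReal) := by
  have hg : Measurable (fun t => (μ {a | w a = t}).toReal) := by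
    apply measurable_of_countable_support (S := {t | 0 < μ {a | w a = t}})
      (Measure.countable_meas_level_set_pos hwm)
    intro t ht
    have : μ {a | w a = t} = 0 := by
      by_contra hne
      exact ht (pos_iff_ne_zero.mpr hne)
    rw [this, ENNReal.toReal_zero]
  exact hg.comp hwm

end SON4
namespace SON4
open MeasureTheory Filter Topology
open scoped ENNReal RealInnerProductSpace Classical

variable {d : ℕ}

/-- `F(w x) = ∫ dir(w x - w y) dμ(y)`. -/
def Fnv (μ : Measure (Euc d)) (w : Euc d → Euc d) (x : Euc d) : Euc d :=
  ∫ y, dirv (w x - w y) ∂μ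

lemma Fnv_congr {μ : Measure (Euc d)} {w : Euc d → Euc d} {x x' : Euc d}
    (h : w x = w x') : Fnv μ w x = Fnv μ w x' := by
  unfold Fnv; rw [h]

lemma measurable_Fnv {μ : Measure (Euc d)} [IsFiniteMeasure μ] {w : Euc d → Euc d}
    (hwm : Measurable w) : Measurable (Fnv μ w) := by
  have hsm : StronglyMeasurable (fun p : Euc d × Euc d => dirv (w p.1 - w p.2)) :=
    (measurable_dirv.comp ((hwm.comp measurable_fst).sub (hwm.comp measurable_snd))).stronglyMeasurable
  exact hsm.integral_prod_right'.measurable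

lemma norm_Fnv_le {μ : Measure (Euc d)} [IsFiniteMeasure μ] (w : Euc d → Euc d) (x : Euc d) :
    ‖Fnv μ w x‖ ≤ (μ Set.univ).toReal := by
  have := norm_integral_le_of_norm_le_const (μ := μ)
    (f := fun y => dirv (w x - w y)) (C := 1) (Filter.Eventually.of_forall fun y => norm_dirv_le _)
  exact (by simpa using this : ‖∫ y, dirv (w x - w y) ∂μ‖ ≤ μ.real Set.univ)

lemma SONJ_congr {μ : Measure (Euc d)} (lam : ℝ) {u v : Euc d → Euc d}
    (h : u =ᵐ[μ] v) : SONJ μ lam u = SONJ μ lam v := by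
  unfold SONJ
  have h1 : ∫ x, ‖u x - x‖^2 ∂μ = ∫ x, ‖v x - x‖^2 ∂μ :=
    integral_congr_ae (h.mono fun x hx => by simp only [hx])
  have h2 : ∫ x, ∫ y, ‖u x - u y‖ ∂μ ∂μ = ∫ x, ∫ y, ‖v x - v y‖ ∂μ ∂μ :=
    integral_congr_ae (h.mono fun x hx =>
      integral_congr_ae (h.mono fun y hy => by simp only [hx, hy]))
  rw [h1, h2]

lemma sq_norm_integrable {μ : Measure (Euc d)} {f : Euc d → Euc d} (hf : MemLp f 2 μ) :
    Integrable (fun x => ‖f x‖^2) μ := by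
  have := hf.integrable_norm_rpow (by norm_num) (by norm_num)
  have h2 : ((2:ℝ≥0∞)).toReal = (2:ℝ) := by norm_num
  rw [h2] at this
  refine this.congr (Filter.Eventually.of_forall fun x => ?_)
  show ‖f x‖ ^ ((2:ℕ):ℝ) = ‖f x‖ ^ (2:ℕ)
  rw [Real.rpow_natCast]

set_option maxHeartbeats 2000000 in
lemma weak_EL (μ : Measure (Euc d)) [IsFiniteMeasure μ] (lam : ℝ) (hlam : 0 ≤ lam)
    (w : Euc d → Euc d) (hwm : Measurable w) (hw2 : MemLp w 2 μ)
    (hid2 : MemLp (fun x : Euc d => x) 2 μ)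
    (hmin : ∀ v : Euc d → Euc d, MemLp v 2 μ → SONJ μ lam w ≤ SONJ μ lam v)
    (φ : Euc d → Euc d) (hφm : Measurable φ) (hφ1 : ∀ x, ‖φ x‖ ≤ 1) :
    ∫ x, ⟪x - w x - lam • Fnv μ w x, φ x⟫ ∂μ
      ≤ lam * ∫ x, (μ {y | w y = w x}).toReal * ‖φ x‖ ∂μ := by
  set π : Measure (Euc d × Euc d) := μ.prod μ with hπ
  set Δ : Euc d × Euc d → Euc d := fun p => w p.1 - w p.2 with hΔ
  have hΔm : Measurable Δ := (hwm.comp measurable_fst).sub (hwm.comp measurable_snd)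
  have hw1 : Integrable w μ := hw2.integrable one_le_two
  have hφ2 : MemLp φ 2 μ := MemLp.of_bound hφm.aestronglyMeasurable 1
    (Filter.Eventually.of_forall hφ1)
  have hid1 : Integrable (fun x : Euc d => x) μ := hid2.integrable one_le_two
  set g1 : Euc d → Euc d := fun x => w x - x with hg1
  have hg1m : Measurable g1 := hwm.sub measurable_id
  have hg1_2 : MemLp g1 2 μ := hw2.sub hid2
  have hg1_1 : Integrable g1 μ := hg1_2.integrable one_le_two
  set m : Euc d → ℝ := fun x => (μ {y | w y = w x}).toReal with hm
  have hm_meas : Measurable m := measurable_fiber_meas hwm μ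
  have hm_nonneg : ∀ x, 0 ≤ m x := fun x => ENNReal.toReal_nonneg
  have hm_bdd : ∀ x, m x ≤ (μ Set.univ).toReal := fun x =>
    ENNReal.toReal_mono (measure_ne_top _ _) (measure_mono (Set.subset_univ _))
  set Fn : Euc d → Euc d := Fnv μ w with hFn
  have hFnm : Measurable Fn := measurable_Fnv hwm
  have hFnb : ∀ x, ‖Fn x‖ ≤ (μ Set.univ).toReal := norm_Fnv_le w
  -- the four basic integrals
  set Qa : ℝ := ∫ x, ⟪g1 x, φ x⟫ ∂μ with hQa
  set Qb : ℝ := ∫ x, ⟪Fn x, φ x⟫ ∂μ with hQb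
  set Qc : ℝ := ∫ x, m x * ‖φ x‖ ∂μ with hQc
  set Z : ℝ := ∫ x, ‖φ x‖^2 ∂μ with hZ
  set c0 : ℝ := (π Set.univ).toReal with hc0
  -- integrability of single-variable integrands
  have hIQa : Integrable (fun x => ⟪g1 x, φ x⟫) μ := by
    refine (hg1_1.norm).mono' (hg1m.inner hφm).aestronglyMeasurable
      (Filter.Eventually.of_forall fun x => ?_)
    rw [Real.norm_eq_abs]
    calc |⟪g1 x, φ x⟫| ≤ ‖g1 x‖ * ‖φ x‖ := abs_real_inner_le_norm _ _
      _ ≤ ‖g1 x‖ * 1 := by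
          have := norm_nonneg (g1 x); nlinarith [hφ1 x, abs_nonneg ⟪g1 x, φ x⟫]
      _ = ‖g1 x‖ := mul_one _
  have hIQb : Integrable (fun x => ⟪Fn x, φ x⟫) μ := by
    refine integrable_of_bdd ((hFnm.inner hφm).aestronglyMeasurable) ((μ Set.univ).toReal) ?_
    intro x
    rw [Real.norm_eq_abs]
    calc |⟪Fn x, φ x⟫| ≤ ‖Fn x‖ * ‖φ x‖ := abs_real_inner_le_norm _ _
      _ ≤ (μ Set.univ).toReal * 1 := by
          have h1 := hFnb x; have h2 := hφ1 x
          have := norm_nonneg (Fn x); have := norm_nonneg (φ x)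
          nlinarith [ENNReal.toReal_nonneg (a := μ Set.univ)]
      _ = (μ Set.univ).toReal := mul_one _
  have hIQc : Integrable (fun x => m x * ‖φ x‖) μ := by
    refine integrable_of_bdd ((hm_meas.mul (measurable_norm.comp hφm)).aestronglyMeasurable)
      ((μ Set.univ).toReal) ?_
    intro x
    rw [Real.norm_eq_abs, abs_of_nonneg (mul_nonneg (hm_nonneg x) (norm_nonneg _))]
    calc m x * ‖φ x‖ ≤ m x * 1 := by nlinarith [hφ1 x, hm_nonneg x, norm_nonneg (φ x)]
      _ ≤ (μ Set.univ).toReal := by rw [mul_one]; exact hm_bdd x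
  have hIZ : Integrable (fun x => ‖φ x‖^2) μ := by
    refine integrable_of_bdd ((measurable_norm.comp hφm).pow_const 2).aestronglyMeasurable 1 ?_
    intro x
    rw [Real.norm_eq_abs, abs_of_nonneg (sq_nonneg _)]
    nlinarith [hφ1 x, norm_nonneg (φ x)]
  -- product-side integrability
  have hwf : Integrable (fun p : Euc d × Euc d => w p.1) π := int_fst hw1.aestronglyMeasurable hw1
  have hws : Integrable (fun p : Euc d × Euc d => w p.2) π := int_snd hw1.aestronglyMeasurable hw1
  have hΔi : Integrable Δ π := hwf.sub hws
  have hΔn : Integrable (fun p => ‖Δ p‖) π := hΔi.norm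
  have hφdiff : ∀ p : Euc d × Euc d, ‖φ p.1 - φ p.2‖ ≤ 2 := fun p => by
    calc ‖φ p.1 - φ p.2‖ ≤ ‖φ p.1‖ + ‖φ p.2‖ := norm_sub_le _ _
      _ ≤ 2 := by linarith [hφ1 p.1, hφ1 p.2]
  have hN1m : Measurable (fun p : Euc d × Euc d => ⟪dirv (Δ p), φ p.1 - φ p.2⟫) :=
    (measurable_dirv.comp hΔm).inner ((hφm.comp measurable_fst).sub (hφm.comp measurable_snd))
  have hN1i : Integrable (fun p : Euc d × Euc d => ⟪dirv (Δ p), φ p.1 - φ p.2⟫) π := by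
    refine integrable_of_bdd hN1m.aestronglyMeasurable 2 fun p => ?_
    rw [Real.norm_eq_abs]
    calc |⟪dirv (Δ p), φ p.1 - φ p.2⟫| ≤ ‖dirv (Δ p)‖ * ‖φ p.1 - φ p.2‖ :=
          abs_real_inner_le_norm _ _
      _ ≤ 1 * 2 := mul_le_mul (norm_dirv_le _) (hφdiff p) (norm_nonneg _) zero_le_one
      _ = 2 := by norm_num
  have hsetN2 : MeasurableSet {p : Euc d × Euc d | Δ p = 0} := hΔm (measurableSet_singleton 0)
  -- `IN1 = 2 Qb`
  have hb1 : Integrable (fun p : Euc d × Euc d => ⟪dirv (Δ p), φ p.1⟫) π := by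
    refine integrable_of_bdd ((measurable_dirv.comp hΔm).inner
      (hφm.comp measurable_fst)).aestronglyMeasurable 1 fun p => ?_
    rw [Real.norm_eq_abs]
    calc |⟪dirv (Δ p), φ p.1⟫| ≤ ‖dirv (Δ p)‖ * ‖φ p.1‖ := abs_real_inner_le_norm _ _
      _ ≤ 1 * 1 := mul_le_mul (norm_dirv_le _) (hφ1 p.1) (norm_nonneg _) zero_le_one
      _ = 1 := by norm_num
  have hb2 : Integrable (fun p : Euc d × Euc d => ⟪dirv (Δ p), φ p.2⟫) π := by
    refine integrable_of_bdd ((measurable_dirv.comp hΔm).inner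
      (hφm.comp measurable_snd)).aestronglyMeasurable 1 fun p => ?_
    rw [Real.norm_eq_abs]
    calc |⟪dirv (Δ p), φ p.2⟫| ≤ ‖dirv (Δ p)‖ * ‖φ p.2‖ := abs_real_inner_le_norm _ _
      _ ≤ 1 * 1 := mul_le_mul (norm_dirv_le _) (hφ1 p.2) (norm_nonneg _) zero_le_one
      _ = 1 := by norm_num
  have hfst1 : ∫ p, ⟪dirv (Δ p), φ p.1⟫ ∂π = Qb := by
    have hiter := integral_integral (μ := μ) (ν := μ)
      (f := fun x y => ⟪dirv (w x - w y), φ x⟫) hb1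
    rw [← hiter, hQb]
    refine integral_congr_ae (Filter.Eventually.of_forall fun x => ?_)
    have hin : Integrable (fun y => dirv (w x - w y)) μ :=
      integrable_of_bdd (measurable_dirv.comp ((measurable_const (a := w x)).sub
        hwm)).aestronglyMeasurable 1 fun y => norm_dirv_le _
    calc ∫ y, ⟪dirv (w x - w y), φ x⟫ ∂μ
        = ∫ y, ⟪φ x, dirv (w x - w y)⟫ ∂μ :=
          integral_congr_ae (Filter.Eventually.of_forall fun y => real_inner_comm _ _)
      _ = ⟪φ x, ∫ y, dirv (w x - w y) ∂μ⟫ := integral_inner hin (φ x)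
      _ = ⟪Fn x, φ x⟫ := real_inner_comm _ _
  have hswap1 : ∫ p, ⟪dirv (Δ p), φ p.2⟫ ∂π = - Qb := by
    have h := integral_prod_swap (μ := μ) (ν := μ)
      (f := fun p : Euc d × Euc d => ⟪dirv (Δ p), φ p.2⟫)
    rw [show (π = μ.prod μ) from rfl, ← h]
    have hpt : ∀ p : Euc d × Euc d,
        ⟪dirv (w p.2 - w p.1), φ p.1⟫ = - ⟪dirv (Δ p), φ p.1⟫ := by
      intro p
      have hneg : w p.2 - w p.1 = -(Δ p) := by simp only [hΔ]; abel
      rw [hneg, dirv_neg, inner_neg_left]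
    calc ∫ p : Euc d × Euc d, ⟪dirv (w p.swap.1 - w p.swap.2), φ p.swap.2⟫ ∂(μ.prod μ)
        = ∫ p : Euc d × Euc d, - ⟪dirv (Δ p), φ p.1⟫ ∂(μ.prod μ) :=
          integral_congr_ae (Filter.Eventually.of_forall fun p => hpt p)
      _ = - Qb := by rw [integral_neg, hfst1]
  have hIN1 : ∫ p, ⟪dirv (Δ p), φ p.1 - φ p.2⟫ ∂π = 2 * Qb := by
    calc ∫ p, ⟪dirv (Δ p), φ p.1 - φ p.2⟫ ∂π
        = ∫ p, (⟪dirv (Δ p), φ p.1⟫ - ⟪dirv (Δ p), φ p.2⟫) ∂π :=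
          integral_congr_ae (Filter.Eventually.of_forall fun p => inner_sub_right _ _ _)
      _ = (∫ p, ⟪dirv (Δ p), φ p.1⟫ ∂π) - ∫ p, ⟪dirv (Δ p), φ p.2⟫ ∂π :=
          integral_sub hb1 hb2
      _ = Qb - (-Qb) := by rw [hfst1, hswap1]
      _ = 2 * Qb := by ring
  -- `IN2 ≤ 2 Qc`
  have hmi1 : Measurable (fun p : Euc d × Euc d => if Δ p = 0 then ‖φ p.1‖ else 0) :=
    Measurable.ite hsetN2 (measurable_norm.comp (hφm.comp measurable_fst)) measurable_const
  have hmi2 : Measurable (fun p : Euc d × Euc d => if Δ p = 0 then ‖φ p.2‖ else 0) :=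
    Measurable.ite hsetN2 (measurable_norm.comp (hφm.comp measurable_snd)) measurable_const
  have hbnd : ∀ (q : ℝ), 0 ≤ q → q ≤ 1 → ‖q‖ ≤ 1 := fun q h0 h1 => by
    rw [Real.norm_eq_abs, abs_of_nonneg h0]; exact h1
  have hind1 : Integrable (fun p : Euc d × Euc d => if Δ p = 0 then ‖φ p.1‖ else 0) π := by
    refine integrable_of_bdd hmi1.aestronglyMeasurable 1 fun p => ?_
    by_cases h : Δ p = 0
    · simpa [h] using hφ1 p.1
    · simp [h]
  have hind2 : Integrable (fun p : Euc d × Euc d => if Δ p = 0 then ‖φ p.2‖ else 0) π := by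
    refine integrable_of_bdd hmi2.aestronglyMeasurable 1 fun p => ?_
    by_cases h : Δ p = 0
    · simpa [h] using hφ1 p.2
    · simp [h]
  have hN2m : Measurable (fun p : Euc d × Euc d => if Δ p = 0 then ‖φ p.1 - φ p.2‖ else 0) :=
    Measurable.ite hsetN2 (measurable_norm.comp
      ((hφm.comp measurable_fst).sub (hφm.comp measurable_snd))) measurable_const
  have hN2i : Integrable (fun p : Euc d × Euc d => if Δ p = 0 then ‖φ p.1 - φ p.2‖ else 0) π := by
    refine integrable_of_bdd hN2m.aestronglyMeasurable 2 fun p => ?_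
    by_cases h : Δ p = 0
    · simpa [h] using hφdiff p
    · simp [h]
  have hfst2 : ∫ p, (if Δ p = 0 then ‖φ p.1‖ else 0) ∂π = Qc := by
    have hiter := integral_integral (μ := μ) (ν := μ)
      (f := fun x y => if w x - w y = 0 then ‖φ x‖ else 0) hind1
    rw [← hiter, hQc]
    refine integral_congr_ae (Filter.Eventually.of_forall fun x => ?_)
    show (∫ y, (if w x - w y = 0 then ‖φ x‖ else 0) ∂μ) = m x * ‖φ x‖
    have hindeq : (fun y => if w x - w y = 0 then ‖φ x‖ else 0)
        = ({y | w y = w x}).indicator (fun _ => ‖φ x‖) := by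
      funext y
      rw [Set.indicator_apply]
      refine if_congr ?_ rfl rfl
      rw [sub_eq_zero, Set.mem_setOf_eq]
      exact eq_comm
    have hVm : MeasurableSet {y | w y = w x} := hwm (measurableSet_singleton (w x))
    rw [hindeq, integral_indicator_const _ hVm, smul_eq_mul]
    rfl
  have hswap2 : ∫ p, (if Δ p = 0 then ‖φ p.2‖ else 0) ∂π = Qc := by
    have h := integral_prod_swap (μ := μ) (ν := μ)
      (f := fun p : Euc d × Euc d => if Δ p = 0 then ‖φ p.2‖ else 0)
    rw [show (π = μ.prod μ) from rfl, ← h, ← hfst2]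
    refine integral_congr_ae (Filter.Eventually.of_forall fun p => ?_)
    show (if w p.2 - w p.1 = 0 then ‖φ p.1‖ else 0) = (if Δ p = 0 then ‖φ p.1‖ else 0)
    refine if_congr ?_ rfl rfl
    rw [sub_eq_zero, sub_eq_zero]
    exact eq_comm
  have hIN2 : ∫ p, (if Δ p = 0 then ‖φ p.1 - φ p.2‖ else 0) ∂π ≤ 2 * Qc := by
    calc ∫ p, (if Δ p = 0 then ‖φ p.1 - φ p.2‖ else 0) ∂π
        ≤ ∫ p, ((if Δ p = 0 then ‖φ p.1‖ else 0) + (if Δ p = 0 then ‖φ p.2‖ else 0)) ∂π := by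
          refine integral_mono hN2i (hind1.add hind2) fun p => ?_
          by_cases h : Δ p = 0 <;> simp [h]
          exact norm_sub_le _ _
      _ = Qc + Qc := by rw [integral_add hind1 hind2, hfst2, hswap2]
      _ = 2 * Qc := by ring
  -- small parameters and smallness sets
  set sn : ℕ → ℝ := fun n => 1 / ((n:ℝ)+1) with hsn
  have hsnpos : ∀ n, 0 < sn n := fun n => by positivity
  set Sset : ℕ → Set (Euc d × Euc d) := fun n => {p | Δ p ≠ 0 ∧ ‖Δ p‖ < sn n} with hSset
  have hSm : ∀ n, MeasurableSet (Sset n) := fun n =>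
    (hsetN2.compl).inter ((measurable_norm.comp hΔm) measurableSet_Iio)
  set P : ℕ → ℝ := fun n => (π (Sset n)).toReal with hPdef
  -- the master inequality
  have hmaster : ∀ n : ℕ, 0 ≤ 2*Qa + 2*lam*Qb + 2*lam*Qc
      + (sn n)^2 * Z + 2*lam*(sn n)*c0 + 4*lam*(P n) := by
    intro n
    set s : ℝ := sn n with hsdef
    have hs : 0 < s := hsnpos n
    set v : Euc d → Euc d := fun x => w x + s^2 • φ x with hv
    have hv2 : MemLp v 2 μ := by
      have h1 : MemLp (fun x => s^2 • φ x) 2 μ := hφ2.const_smul (s^2)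
      exact MemLp.ae_eq (Filter.Eventually.of_forall fun x => rfl) (hw2.add h1)
    have hvm : Measurable v := hwm.add (hφm.const_smul (s^2))
    have hv1 : Integrable v μ := hv2.integrable one_le_two
    have hJ : SONJ μ lam w ≤ SONJ μ lam v := hmin v hv2
    -- expand the first term of `SONJ v`
    have hIg1sq : Integrable (fun x => ‖g1 x‖^2) μ := sq_norm_integrable hg1_2
    have hT1 : ∫ x, ‖v x - x‖^2 ∂μ
        = (∫ x, ‖g1 x‖^2 ∂μ) + (2*s^2*Qa + (s^2)^2*Z) := by
      have hpt : ∀ x, ‖v x - x‖^2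
          = ‖g1 x‖^2 + ((2*s^2) * ⟪g1 x, φ x⟫ + ((s^2)^2) * ‖φ x‖^2) := by
        intro x
        have hvx : v x - x = g1 x + s^2 • φ x := by
          simp only [hv, hg1]; abel
        rw [hvx, norm_add_sq_real, real_inner_smul_right, norm_smul,
          Real.norm_eq_abs, abs_of_nonneg (by positivity : (0:ℝ) ≤ s^2)]
        ring
      calc ∫ x, ‖v x - x‖^2 ∂μ
          = ∫ x, (‖g1 x‖^2 + ((2*s^2) * ⟪g1 x, φ x⟫ + ((s^2)^2) * ‖φ x‖^2)) ∂μ :=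
            integral_congr_ae (Filter.Eventually.of_forall hpt)
        _ = (∫ x, ‖g1 x‖^2 ∂μ)
            + ((∫ x, (2*s^2) * ⟪g1 x, φ x⟫ ∂μ) + ∫ x, ((s^2)^2) * ‖φ x‖^2 ∂μ) := by
            have i1 : Integrable (fun x => (2*s^2) * ⟪g1 x, φ x⟫) μ := hIQa.const_mul _
            have i2 : Integrable (fun x => ((s^2)^2) * ‖φ x‖^2) μ := hIZ.const_mul _
            have i12 : Integrable
                (fun x => (2*s^2) * ⟪g1 x, φ x⟫ + ((s^2)^2) * ‖φ x‖^2) μ := i1.add i2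
            rw [integral_add hIg1sq i12, integral_add i1 i2]
        _ = (∫ x, ‖g1 x‖^2 ∂μ) + (2*s^2*Qa + (s^2)^2*Z) := by
            rw [integral_const_mul, integral_const_mul, ← hQa, ← hZ]
            try ring
    -- second term comparison
    have hvd : Integrable (fun p : Euc d × Euc d => v p.1 - v p.2) π :=
      (int_fst hv1.aestronglyMeasurable hv1).sub (int_snd hv1.aestronglyMeasurable hv1)
    have hvn : Integrable (fun p : Euc d × Euc d => ‖v p.1 - v p.2‖) π := hvd.norm
    have hvΔ : ∀ p : Euc d × Euc d, v p.1 - v p.2 = Δ p + s^2 • (φ p.1 - φ p.2) := by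
      intro p
      simp only [hv, hΔ, smul_sub]
      abel
    have hN3eq : (fun p : Euc d × Euc d => if Δ p ≠ 0 ∧ ‖Δ p‖ < s then 4*s^2 else 0)
        = (Sset n).indicator (fun _ => 4*s^2) := by
      funext p
      rw [Set.indicator_apply]
      rfl
    have hN3i : Integrable
        (fun p : Euc d × Euc d => if Δ p ≠ 0 ∧ ‖Δ p‖ < s then 4*s^2 else 0) π := by
      rw [hN3eq]
      exact (integrable_const _).indicator (hSm n)
    have hpt2 : ∀ p : Euc d × Euc d, ‖v p.1 - v p.2‖
        ≤ ‖Δ p‖ + s^2 * ⟪dirv (Δ p), φ p.1 - φ p.2⟫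
          + (if Δ p = 0 then s^2 * ‖φ p.1 - φ p.2‖ else 0)
          + 2*s^3 + (if Δ p ≠ 0 ∧ ‖Δ p‖ < s then 4*s^2 else 0) := by
      intro p
      rw [hvΔ p]
      exact norm_add_sq_smul_le (Δ p) (φ p.1 - φ p.2) s hs (hφdiff p)
    have hifeq : ∀ p : Euc d × Euc d, (if Δ p = 0 then s^2 * ‖φ p.1 - φ p.2‖ else 0)
        = s^2 * (if Δ p = 0 then ‖φ p.1 - φ p.2‖ else 0) := by
      intro p
      by_cases h : Δ p = 0 <;> simp [h]
    have hRHSi : Integrable (fun p : Euc d × Euc d =>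
        ‖Δ p‖ + s^2 * ⟪dirv (Δ p), φ p.1 - φ p.2⟫
          + (if Δ p = 0 then s^2 * ‖φ p.1 - φ p.2‖ else 0)
          + 2*s^3 + (if Δ p ≠ 0 ∧ ‖Δ p‖ < s then 4*s^2 else 0)) π := by
      refine ((((hΔn.add (hN1i.const_mul (s^2))).add ?_).add (integrable_const _)).add hN3i)
      refine (hN2i.const_mul (s^2)).congr
        (Filter.Eventually.of_forall fun p => (hifeq p).symm)
    have hIN2nn : ∫ p, (if Δ p = 0 then ‖φ p.1 - φ p.2‖ else 0) ∂π ≥ 0 :=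
      integral_nonneg fun p => by by_cases h : Δ p = 0 <;> simp [h]
    have hsplit : ∫ p, (‖Δ p‖
        + s^2 * ⟪dirv (Δ p), φ p.1 - φ p.2⟫
        + (if Δ p = 0 then s^2 * ‖φ p.1 - φ p.2‖ else 0)
        + 2*s^3 + (if Δ p ≠ 0 ∧ ‖Δ p‖ < s then 4*s^2 else 0)) ∂π
        = (∫ p, ‖Δ p‖ ∂π) + s^2*(2*Qb)
          + s^2*(∫ p, (if Δ p = 0 then ‖φ p.1 - φ p.2‖ else 0) ∂π)
          + 2*s^3*c0 + 4*s^2*(P n) := by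
      have e0 : Integrable (fun p : Euc d × Euc d =>
          if Δ p = 0 then s^2 * ‖φ p.1 - φ p.2‖ else 0) π :=
        (hN2i.const_mul (s^2)).congr (Filter.Eventually.of_forall fun p => (hifeq p).symm)
      have iB : Integrable (fun p : Euc d × Euc d =>
          s^2 * ⟪dirv (Δ p), φ p.1 - φ p.2⟫) π := hN1i.const_mul _
      have iD : Integrable (fun _ : Euc d × Euc d => (2*s^3 : ℝ)) π := integrable_const _
      have iAB : Integrable (fun p : Euc d × Euc d =>
          ‖Δ p‖ + s^2 * ⟪dirv (Δ p), φ p.1 - φ p.2⟫) π := hΔn.add iB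
      have iABC : Integrable (fun p : Euc d × Euc d =>
          ‖Δ p‖ + s^2 * ⟪dirv (Δ p), φ p.1 - φ p.2⟫
          + (if Δ p = 0 then s^2 * ‖φ p.1 - φ p.2‖ else 0)) π := iAB.add e0
      have iABCD : Integrable (fun p : Euc d × Euc d =>
          ‖Δ p‖ + s^2 * ⟪dirv (Δ p), φ p.1 - φ p.2⟫
          + (if Δ p = 0 then s^2 * ‖φ p.1 - φ p.2‖ else 0) + 2*s^3) π := iABC.add iD
      rw [integral_add iABCD hN3i, integral_add iABC iD, integral_add iAB e0,
        integral_add hΔn iB, integral_const_mul]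
      have e1 : ∫ p, (if Δ p = 0 then s^2 * ‖φ p.1 - φ p.2‖ else 0) ∂π
          = s^2 * ∫ p, (if Δ p = 0 then ‖φ p.1 - φ p.2‖ else 0) ∂π := by
        rw [← integral_const_mul]
        exact integral_congr_ae (Filter.Eventually.of_forall fun p => hifeq p)
      have e2 : ∫ _p : Euc d × Euc d, (2*s^3 : ℝ) ∂π = 2*s^3*c0 := by
        rw [integral_const, smul_eq_mul, hc0]; unfold Measure.real; ring
      have e3 : ∫ p, (if Δ p ≠ 0 ∧ ‖Δ p‖ < s then 4*s^2 else 0) ∂π = 4*s^2*(P n) := by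
        rw [hN3eq, integral_indicator_const _ (hSm n), smul_eq_mul, hPdef]; unfold Measure.real; ring
      rw [e1, e2, e3, hIN1]
    have hTineq : ∫ p, ‖v p.1 - v p.2‖ ∂π
        ≤ (∫ p, ‖Δ p‖ ∂π) + s^2*(2*Qb) + s^2*(2*Qc) + 2*s^3*c0 + 4*s^2*(P n) := by
      have h1 : ∫ p, ‖v p.1 - v p.2‖ ∂π ≤ ∫ p, (‖Δ p‖
          + s^2 * ⟪dirv (Δ p), φ p.1 - φ p.2⟫
          + (if Δ p = 0 then s^2 * ‖φ p.1 - φ p.2‖ else 0)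
          + 2*s^3 + (if Δ p ≠ 0 ∧ ‖Δ p‖ < s then 4*s^2 else 0)) ∂π :=
        integral_mono hvn hRHSi hpt2
      rw [hsplit] at h1
      have h2 : s^2*(∫ p, (if Δ p = 0 then ‖φ p.1 - φ p.2‖ else 0) ∂π) ≤ s^2*(2*Qc) :=
        mul_le_mul_of_nonneg_left hIN2 (by positivity)
      linarith
    -- expand SONJ on both sides
    have hiter_w : ∫ x, ∫ y, ‖w x - w y‖ ∂μ ∂μ = ∫ p, ‖Δ p‖ ∂π :=
      integral_integral (f := fun x y => ‖w x - w y‖) hΔn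
    have hiter_v : ∫ x, ∫ y, ‖v x - v y‖ ∂μ ∂μ = ∫ p, ‖v p.1 - v p.2‖ ∂π :=
      integral_integral (f := fun x y => ‖v x - v y‖) hvn
    have hexp_w : SONJ μ lam w = (∫ x, ‖g1 x‖^2 ∂μ) + lam * (∫ p, ‖Δ p‖ ∂π) := by
      unfold SONJ
      rw [hiter_w]
    have hexp_v : SONJ μ lam v = ((∫ x, ‖g1 x‖^2 ∂μ) + (2*s^2*Qa + (s^2)^2*Z))
        + lam * (∫ p, ‖v p.1 - v p.2‖ ∂π) := by
      unfold SONJ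
      rw [hiter_v, hT1]
    rw [hexp_w, hexp_v] at hJ
    have hlam2 : lam * (∫ p, ‖v p.1 - v p.2‖ ∂π)
        ≤ lam * ((∫ p, ‖Δ p‖ ∂π) + s^2*(2*Qb) + s^2*(2*Qc) + 2*s^3*c0 + 4*s^2*(P n)) :=
      mul_le_mul_of_nonneg_left hTineq hlam
    have hs2 : (0:ℝ) < s^2 := by positivity
    have hfinal : 0 ≤ s^2 * (2*Qa + 2*lam*Qb + 2*lam*Qc + s^2 * Z + 2*lam*s*c0 + 4*lam*(P n)) := by
      nlinarith [hJ, hlam2]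
    have := (mul_nonneg_iff_of_pos_left hs2).mp hfinal
    linarith
  -- pass to the limit `n → ∞`
  have hsn0 : Tendsto sn atTop (𝓝 0) := tendsto_one_div_add_atTop_nhds_zero_nat
  have hP0 : Tendsto P atTop (𝓝 0) := by
    have hanti : Antitone Sset := by
      intro a b hab p hp
      refine ⟨hp.1, lt_of_lt_of_le hp.2 ?_⟩
      apply one_div_le_one_div_of_le (by positivity)
      have : (a:ℝ) ≤ (b:ℝ) := Nat.cast_le.mpr hab
      linarith
    have hiI : ⋂ n, Sset n = ∅ := by
      ext p
      simp only [Set.mem_iInter, Set.mem_empty_iff_false, iff_false, not_forall]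
      by_contra hall
      push_neg at hall
      have h0 := hall 0
      have hpos : 0 < ‖Δ p‖ := norm_pos_iff.mpr h0.1
      obtain ⟨n, hn⟩ := exists_nat_one_div_lt hpos
      exact absurd (hall n).2 (not_lt.mpr hn.le)
    have h1 : Tendsto (fun n => π (Sset n)) atTop (𝓝 (π (⋂ n, Sset n))) :=
      tendsto_measure_iInter_atTop (fun n => (hSm n).nullMeasurableSet)
        hanti ⟨0, measure_ne_top _ _⟩
    rw [hiI, measure_empty] at h1
    have h2 : Tendsto (fun n => (π (Sset n)).toReal) atTop (𝓝 ((0:ℝ≥0∞)).toReal) :=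
      (ENNReal.tendsto_toReal (by simp)).comp h1
    simpa using h2
  have htends : Tendsto (fun n => 2*Qa + 2*lam*Qb + 2*lam*Qc
      + (sn n)^2 * Z + 2*lam*(sn n)*c0 + 4*lam*(P n)) atTop
      (𝓝 (2*Qa + 2*lam*Qb + 2*lam*Qc + 0^2*Z + 2*lam*0*c0 + 4*lam*0)) := by
    refine Filter.Tendsto.add (Filter.Tendsto.add (Filter.Tendsto.add tendsto_const_nhds
      ((hsn0.pow 2).mul_const Z)) ?_) (hP0.const_mul (4*lam))
    exact ((tendsto_const_nhds.mul hsn0).mul_const c0)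
  have hQ : 0 ≤ 2*Qa + 2*lam*Qb + 2*lam*Qc := by
    have hlim := ge_of_tendsto htends (Filter.Eventually.of_forall hmaster)
    nlinarith [hlim]
  -- conclude
  have hgoal : ∫ x, ⟪x - w x - lam • Fn x, φ x⟫ ∂μ = -Qa - lam*Qb := by
    have hpt : ∀ x, ⟪x - w x - lam • Fn x, φ x⟫
        = -⟪g1 x, φ x⟫ - lam * ⟪Fn x, φ x⟫ := by
      intro x
      have hxx : x - w x - lam • Fn x = -(g1 x) - lam • Fn x := by
        simp only [hg1]; abel
      rw [hxx, inner_sub_left, inner_neg_left, real_inner_smul_left]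
    calc ∫ x, ⟪x - w x - lam • Fn x, φ x⟫ ∂μ
        = ∫ x, (-⟪g1 x, φ x⟫ - lam * ⟪Fn x, φ x⟫) ∂μ :=
          integral_congr_ae (Filter.Eventually.of_forall hpt)
      _ = -Qa - lam*Qb := by
          have i1 : Integrable (fun x => -⟪g1 x, φ x⟫) μ := hIQa.neg
          have i2 : Integrable (fun x => lam * ⟪Fn x, φ x⟫) μ := hIQb.const_mul _
          rw [integral_sub i1 i2, integral_neg, integral_const_mul, ← hQa, ← hQb]
  show ∫ x, ⟪x - w x - lam • Fn x, φ x⟫ ∂μ ≤ lam * Qc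
  rw [hgoal]
  linarith
end SON4
namespace SON4
open MeasureTheory Filter Topology
open scoped ENNReal RealInnerProductSpace Classical

variable {d : ℕ}

set_option maxHeartbeats 1000000 in
lemma EL_pointwise (μ : Measure (Euc d)) [IsFiniteMeasure μ] (lam : ℝ) (hlam : 0 ≤ lam)
    (w : Euc d → Euc d) (hwm : Measurable w) (hw2 : MemLp w 2 μ)
    (hid2 : MemLp (fun x : Euc d => x) 2 μ)
    (hmin : ∀ v : Euc d → Euc d, MemLp v 2 μ → SONJ μ lam w ≤ SONJ μ lam v) :
    ∀ᵐ x ∂μ, ‖x - w x - lam • Fnv μ w x‖ ≤ lam * (μ {y | w y = w x}).toReal := by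
  set m : Euc d → ℝ := fun x => (μ {y | w y = w x}).toReal with hm
  have hm_meas : Measurable m := measurable_fiber_meas hwm μ
  have hm_nonneg : ∀ x, 0 ≤ m x := fun x => ENNReal.toReal_nonneg
  have hm_bdd : ∀ x, m x ≤ (μ Set.univ).toReal := fun x =>
    ENNReal.toReal_mono (measure_ne_top _ _) (measure_mono (Set.subset_univ _))
  set H : Euc d → Euc d := fun x => x - w x - lam • Fnv μ w x with hH
  have hHm : Measurable H :=
    (measurable_id.sub hwm).sub ((measurable_Fnv hwm).const_smul lam)
  have hH2 : MemLp H 2 μ := by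
    have hFn2 : MemLp (Fnv μ w) 2 μ := MemLp.of_bound (measurable_Fnv hwm).aestronglyMeasurable
      ((μ Set.univ).toReal) (Filter.Eventually.of_forall (norm_Fnv_le w))
    exact MemLp.ae_eq (Filter.Eventually.of_forall fun x => rfl)
      ((hid2.sub hw2).sub (hFn2.const_smul lam))
  have hH1 : Integrable H μ := hH2.integrable one_le_two
  have hHnorm_int : Integrable (fun x => ‖H x‖) μ := hH1.norm
  have hmb : Integrable m μ := by
    refine integrable_of_bdd hm_meas.aestronglyMeasurable ((μ Set.univ).toReal) fun x => ?_
    rw [Real.norm_eq_abs, abs_of_nonneg (hm_nonneg x)]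
    exact hm_bdd x
  set S : Set (Euc d) := {x | lam * m x < ‖H x‖} with hS
  have hSmeas : MeasurableSet S :=
    measurableSet_lt (hm_meas.const_mul lam) (measurable_norm.comp hHm)
  set φ : Euc d → Euc d := S.indicator (fun x => dirv (H x)) with hφ
  have hφm : Measurable φ := (measurable_dirv.comp hHm).indicator hSmeas
  have hφ1 : ∀ x, ‖φ x‖ ≤ 1 := by
    intro x
    rw [hφ, Set.indicator_apply]
    split
    · exact norm_dirv_le _
    · simp
  have key := weak_EL μ lam hlam w hwm hw2 hid2 hmin φ hφm hφ1
  have hL : ∫ x, ⟪H x, φ x⟫ ∂μ = ∫ x, S.indicator (fun x => ‖H x‖) x ∂μ := by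
    refine integral_congr_ae (Filter.Eventually.of_forall fun x => ?_)
    show ⟪H x, φ x⟫ = S.indicator (fun x => ‖H x‖) x
    simp only [hφ, Set.indicator_apply]
    split
    · rw [real_inner_comm, inner_dirv]
    · rw [inner_zero_right]
  have hR : ∫ x, m x * ‖φ x‖ ∂μ ≤ ∫ x, S.indicator m x ∂μ := by
    have him : Integrable (fun x => m x * ‖φ x‖) μ := by
      refine integrable_of_bdd (hm_meas.mul (measurable_norm.comp hφm)).aestronglyMeasurable
        ((μ Set.univ).toReal) fun x => ?_
      rw [Real.norm_eq_abs, abs_of_nonneg (mul_nonneg (hm_nonneg x) (norm_nonneg _))]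
      calc m x * ‖φ x‖ ≤ m x * 1 :=
            mul_le_mul_of_nonneg_left (hφ1 x) (hm_nonneg x)
        _ ≤ (μ Set.univ).toReal := by rw [mul_one]; exact hm_bdd x
    refine integral_mono him (hmb.indicator hSmeas) fun x => ?_
    show m x * ‖φ x‖ ≤ S.indicator m x
    simp only [hφ, Set.indicator_apply]
    split
    · calc m x * ‖dirv (H x)‖ ≤ m x * 1 :=
          mul_le_mul_of_nonneg_left (norm_dirv_le _) (hm_nonneg x)
        _ = m x := mul_one _
    · simp
  have hcomb : ∫ x in S, ‖H x‖ ∂μ ≤ lam * ∫ x in S, m x ∂μ := by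
    rw [← integral_indicator hSmeas, ← integral_indicator hSmeas]
    calc ∫ x, S.indicator (fun x => ‖H x‖) x ∂μ = ∫ x, ⟪H x, φ x⟫ ∂μ := hL.symm
      _ ≤ lam * ∫ x, m x * ‖φ x‖ ∂μ := key
      _ ≤ lam * ∫ x, S.indicator m x ∂μ := mul_le_mul_of_nonneg_left hR hlam
  have hμS : μ S = 0 := by
    by_contra hne
    set Sn : ℕ → Set (Euc d) := fun n => {x | lam * m x + 1/((n:ℝ)+1) ≤ ‖H x‖} with hSn
    have hSnm : ∀ n, MeasurableSet (Sn n) := fun n =>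
      measurableSet_le ((hm_meas.const_mul lam).add measurable_const)
        (measurable_norm.comp hHm)
    have hcover : S ⊆ ⋃ n, S ∩ Sn n := by
      intro x hx
      have hgap : 0 < ‖H x‖ - lam * m x := sub_pos.mpr hx
      obtain ⟨n, hn⟩ := exists_nat_one_div_lt hgap
      exact Set.mem_iUnion.mpr ⟨n, ⟨hx, by simp only [hSn, Set.mem_setOf_eq]; linarith⟩⟩
    have hex : ∃ n, μ (S ∩ Sn n) ≠ 0 := by
      by_contra hall
      push_neg at hall
      have h0 : μ S = 0 := by
        refine le_antisymm ?_ (zero_le)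
        calc μ S ≤ μ (⋃ n, S ∩ Sn n) := measure_mono hcover
          _ ≤ ∑' n, μ (S ∩ Sn n) := measure_iUnion_le _
          _ = 0 := by simp [hall]
      exact hne h0
    obtain ⟨n, hn⟩ := hex
    have hTm : MeasurableSet (S ∩ Sn n) := hSmeas.inter (hSnm n)
    have hTpos : 0 < (μ (S ∩ Sn n)).toReal := ENNReal.toReal_pos hn (measure_ne_top _ _)
    have hfint : Integrable (fun x => ‖H x‖ - lam * m x) μ :=
      hHnorm_int.sub (hmb.const_mul lam)
    have h1 : (1/((n:ℝ)+1)) * (μ (S ∩ Sn n)).toReal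
        ≤ ∫ x in S ∩ Sn n, (‖H x‖ - lam * m x) ∂μ := by
      rw [show (1/((n:ℝ)+1)) * (μ (S ∩ Sn n)).toReal
          = μ.real (S ∩ Sn n) • (1/((n:ℝ)+1)) by rw [smul_eq_mul, mul_comm]; rfl]
      refine setIntegral_ge_of_const_le hTm (measure_ne_top _ _) (fun x hx => ?_)
        hfint.integrableOn
      have := hx.2
      simp only [hSn, Set.mem_setOf_eq] at this
      linarith
    have h2 : ∫ x in S ∩ Sn n, (‖H x‖ - lam * m x) ∂μ
        ≤ ∫ x in S, (‖H x‖ - lam * m x) ∂μ := by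
      refine setIntegral_mono_set hfint.integrableOn ?_
        (HasSubset.Subset.eventuallyLE Set.inter_subset_left)
      rw [Filter.EventuallyLE, ae_restrict_iff' hSmeas]
      refine Filter.Eventually.of_forall fun x hx => ?_
      have : lam * m x < ‖H x‖ := hx
      simp only [Pi.zero_apply]
      linarith
    have h3 : ∫ x in S, (‖H x‖ - lam * m x) ∂μ ≤ 0 := by
      rw [integral_sub hHnorm_int.integrableOn ((hmb.const_mul lam).integrableOn),
        integral_const_mul]
      linarith [hcomb]
    have h4 : (0:ℝ) < (1/((n:ℝ)+1)) * (μ (S ∩ Sn n)).toReal := by positivity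
    linarith
  have hae : ∀ᵐ x ∂μ, x ∉ S := measure_eq_zero_iff_ae_notMem.mp hμS
  refine hae.mono fun x hx => ?_
  have : ¬ (lam * m x < ‖H x‖) := hx
  exact not_lt.mp this

lemma Fmono_surplus (μ : Measure (Euc d)) [IsFiniteMeasure μ]
    (w : Euc d → Euc d) (hwm : Measurable w) {x z : Euc d} (hne : w x ≠ w z) :
    ((μ {y | w y = w x}).toReal + (μ {y | w y = w z}).toReal) * ‖w x - w z‖
      ≤ ⟪Fnv μ w x - Fnv μ w z, w x - w z⟫ := by
  have hix : Integrable (fun y => dirv (w x - w y)) μ :=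
    integrable_of_bdd (measurable_dirv.comp
      ((measurable_const (a := w x)).sub hwm)).aestronglyMeasurable 1 fun y => norm_dirv_le _
  have hiz : Integrable (fun y => dirv (w z - w y)) μ :=
    integrable_of_bdd (measurable_dirv.comp
      ((measurable_const (a := w z)).sub hwm)).aestronglyMeasurable 1 fun y => norm_dirv_le _
  have hinner : ⟪Fnv μ w x - Fnv μ w z, w x - w z⟫
      = ∫ y, ⟪dirv (w x - w y) - dirv (w z - w y), w x - w z⟫ ∂μ := by
    have hsub : Fnv μ w x - Fnv μ w z
        = ∫ y, (dirv (w x - w y) - dirv (w z - w y)) ∂μ := (integral_sub hix hiz).symm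
    have hsubint : Integrable (fun y => dirv (w x - w y) - dirv (w z - w y)) μ :=
      hix.sub hiz
    rw [hsub, real_inner_comm, ← integral_inner hsubint (w x - w z)]
    exact integral_congr_ae (Filter.Eventually.of_forall fun y => real_inner_comm _ _)
  rw [hinner]
  have hmx : MeasurableSet {y | w y = w x} := hwm (measurableSet_singleton (w x))
  have hmz : MeasurableSet {y | w y = w z} := hwm (measurableSet_singleton (w z))
  have hg : ∀ y, ({y : Euc d | w y = w x}).indicator (fun _ => ‖w x - w z‖) y
      + ({y : Euc d | w y = w z}).indicator (fun _ => ‖w x - w z‖) y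
      ≤ ⟪dirv (w x - w y) - dirv (w z - w y), w x - w z⟫ := by
    intro y
    by_cases h1 : w y = w x
    · have h2 : ¬ (w y = w z) := fun h => hne (h1.symm.trans h)
      rw [Set.indicator_of_mem (show y ∈ {y : Euc d | w y = w x} from h1),
        Set.indicator_of_notMem (show y ∉ {y : Euc d | w y = w z} from h2)]
      have e1 : w x - w y = 0 := by rw [h1]; exact sub_self _
      have e2 : w z - w y = -(w x - w z) := by rw [h1]; abel
      rw [e1, dirv_zero, e2, dirv_neg, zero_sub, neg_neg, inner_dirv, add_zero]
    · by_cases h2 : w y = w z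
      · rw [Set.indicator_of_notMem (show y ∉ {y : Euc d | w y = w x} from h1),
          Set.indicator_of_mem (show y ∈ {y : Euc d | w y = w z} from h2)]
        have e1 : w x - w y = w x - w z := by rw [h2]
        have e2 : w z - w y = 0 := by rw [h2]; exact sub_self _
        rw [e1, e2, dirv_zero, sub_zero, inner_dirv, zero_add]
      · rw [Set.indicator_of_notMem (show y ∉ {y : Euc d | w y = w x} from h1),
          Set.indicator_of_notMem (show y ∉ {y : Euc d | w y = w z} from h2)]
        have e3 : w x - w z = (w x - w y) - (w z - w y) := by abel
        rw [e3, add_zero]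
        exact inner_dirv_sub_nonneg _ _
  have hgm : Measurable (fun y => ⟪dirv (w x - w y) - dirv (w z - w y), w x - w z⟫) :=
    ((measurable_dirv.comp ((measurable_const (a := w x)).sub hwm)).sub
      (measurable_dirv.comp ((measurable_const (a := w z)).sub hwm))).inner measurable_const
  have hgint : Integrable (fun y => ⟪dirv (w x - w y) - dirv (w z - w y), w x - w z⟫) μ := by
    refine integrable_of_bdd hgm.aestronglyMeasurable (2 * ‖w x - w z‖) fun y => ?_
    rw [Real.norm_eq_abs]
    calc |⟪dirv (w x - w y) - dirv (w z - w y), w x - w z⟫|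
        ≤ ‖dirv (w x - w y) - dirv (w z - w y)‖ * ‖w x - w z‖ := abs_real_inner_le_norm _ _
      _ ≤ 2 * ‖w x - w z‖ := by
          refine mul_le_mul_of_nonneg_right ?_ (norm_nonneg _)
          calc ‖dirv (w x - w y) - dirv (w z - w y)‖
              ≤ ‖dirv (w x - w y)‖ + ‖dirv (w z - w y)‖ := norm_sub_le _ _
            _ ≤ 2 := by linarith [norm_dirv_le (w x - w y), norm_dirv_le (w z - w y)]
  have hindint1 : Integrable (({y : Euc d | w y = w x}).indicator
      (fun _ => ‖w x - w z‖)) μ := (integrable_const _).indicator hmx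
  have hindint2 : Integrable (({y : Euc d | w y = w z}).indicator
      (fun _ => ‖w x - w z‖)) μ := (integrable_const _).indicator hmz
  calc ((μ {y | w y = w x}).toReal + (μ {y | w y = w z}).toReal) * ‖w x - w z‖
      = ∫ y, (({y : Euc d | w y = w x}).indicator (fun _ => ‖w x - w z‖) y
        + ({y : Euc d | w y = w z}).indicator (fun _ => ‖w x - w z‖) y) ∂μ := by
        rw [integral_add hindint1 hindint2, integral_indicator_const _ hmx,
          integral_indicator_const _ hmz, smul_eq_mul, smul_eq_mul]
        unfold Measure.real
        ring
    _ ≤ _ := integral_mono (hindint1.add hindint2) hgint hg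

end SON4
open SON4 in
/-- **Proposition (the minimizer is `μ`-regular).**  There is a Borel set `A` of full
`μ`-measure such that `μ`-a.e. cluster `V_{u_{μ,λ},x} ∩ A` is `μ`-regular (a singleton
or of positive measure), and distinct clusters have distinct `μ`-centroids. -/
theorem stmt4
    (d : ℕ) (μ : Measure (Euc d)) [IsFiniteMeasure μ] (hμ0 : μ ≠ 0)
    (hsupp : ∃ K : Set (Euc d), IsCompact K ∧ μ Kᶜ = 0)
    (lam : ℝ) (hlam : 0 ≤ lam)
    (u : Euc d → Euc d) (hu : IsSONMin μ lam u) :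
    ∃ A : Set (Euc d), MeasurableSet A ∧ μ Aᶜ = 0 ∧
      (∀ᵐ x ∂μ, (∃ y, Vset u x ∩ A = {y}) ∨ 0 < μ (Vset u x ∩ A)) ∧
      (∀ᵐ x ∂μ, ∀ᵐ z ∂μ, u x ≠ u z →
        muCentroid μ (Vset u x ∩ A) ≠ muCentroid μ (Vset u z ∩ A)) := by
  classical
  obtain ⟨K, hK, hKc⟩ := hsupp
  obtain ⟨w, hwsm, hww⟩ := hu.1.aestronglyMeasurable
  have hwm : Measurable w := hwsm.measurable
  have hw2 : MemLp w 2 μ := MemLp.ae_eq hww hu.1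
  have hid2 : MemLp (fun x : Euc d => x) 2 μ := by
    obtain ⟨r, hr⟩ := hK.isBounded.subset_closedBall 0
    refine MemLp.of_bound aestronglyMeasurable_id r ?_
    have hKa : ∀ᵐ x ∂μ, x ∈ K :=
      (measure_eq_zero_iff_ae_notMem.mp hKc).mono fun x hx => not_not.mp hx
    exact hKa.mono fun x hx => by
      have := hr hx
      rwa [Metric.mem_closedBall, dist_zero_right] at this
  have hid1 : Integrable (fun x : Euc d => x) μ := hid2.integrable one_le_two
  have hmin : ∀ v : Euc d → Euc d, MemLp v 2 μ → SONJ μ lam w ≤ SONJ μ lam v := by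
    intro v hv
    rw [← SONJ_congr lam hww]
    exact hu.2 v hv
  have hEL := EL_pointwise μ lam hlam w hwm hw2 hid2 hmin
  -- the good set `A`
  set N : Set (Euc d) := {x | ¬ (u x = w x ∧
    ‖x - w x - lam • Fnv μ w x‖ ≤ lam * (μ {y | w y = w x}).toReal)} with hNdef
  have hNnull : μ N = 0 := by
    have hae : ∀ᵐ x ∂μ, u x = w x ∧
        ‖x - w x - lam • Fnv μ w x‖ ≤ lam * (μ {y | w y = w x}).toReal := hww.and hEL
    exact ae_iff.mp hae
  set A : Set (Euc d) := (toMeasurable μ N)ᶜ with hAdef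
  have hAm : MeasurableSet A := (measurableSet_toMeasurable μ N).compl
  have hAc : μ Aᶜ = 0 := by
    rw [hAdef, compl_compl, measure_toMeasurable]
    exact hNnull
  have hNA : ∀ x ∈ A, u x = w x ∧
      ‖x - w x - lam • Fnv μ w x‖ ≤ lam * (μ {y | w y = w x}).toReal := by
    intro x hx
    by_contra hcon
    exact hx (subset_toMeasurable μ N hcon)
  have hmem_ae : ∀ᵐ x ∂μ, x ∈ A :=
    (measure_eq_zero_iff_ae_notMem.mp hAc).mono fun x hx => not_not.mp hx
  have hVA : ∀ x ∈ A, Vset u x ∩ A = Vset w x ∩ A := by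
    intro x hx
    ext y
    simp only [Vset, Set.mem_inter_iff, Set.mem_setOf_eq]
    constructor
    · rintro ⟨h1, h2⟩
      exact ⟨by rw [← (hNA y h2).1, h1, (hNA x hx).1], h2⟩
    · rintro ⟨h1, h2⟩
      exact ⟨by rw [(hNA y h2).1, h1, ← (hNA x hx).1], h2⟩
  -- EL rewritten at points of the same cluster
  have hELpt : ∀ x ∈ A, ∀ y, w y = w x → y ∈ A →
      ‖y - (w x + lam • Fnv μ w x)‖ ≤ lam * (μ (Vset w x)).toReal := by
    intro x _hx y hy1 hy2
    have h := (hNA y hy2).2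
    have e0 : {z | w z = w y} = {z | w z = w x} := by
      ext z; simp only [Set.mem_setOf_eq, hy1]
    have e1 : w x + lam • Fnv μ w x = w y + lam • Fnv μ w y := by
      rw [← hy1, ← Fnv_congr hy1]
    rw [e1, ← sub_sub]
    rw [e0] at h
    exact h
  -- singleton clusters
  have hsing : ∀ x ∈ A, μ (Vset w x) = 0 → Vset u x ∩ A = {x} := by
    intro x hx h0
    rw [hVA x hx]
    have hxx : x = w x + lam • Fnv μ w x := by
      have h := hELpt x hx x rfl hx
      rw [h0, ENNReal.toReal_zero, mul_zero, norm_le_zero_iff, sub_eq_zero] at h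
      exact h
    refine Set.eq_singleton_iff_unique_mem.mpr ⟨⟨rfl, hx⟩, ?_⟩
    rintro y ⟨hy1, hy2⟩
    have h := hELpt x hx y hy1 hy2
    rw [h0, ENNReal.toReal_zero, mul_zero, norm_le_zero_iff, sub_eq_zero] at h
    rw [h, ← hxx]
  have hμV : ∀ x, μ (Vset w x ∩ A) = μ (Vset w x) := by
    intro x
    refine le_antisymm (measure_mono Set.inter_subset_left) ?_
    calc μ (Vset w x) ≤ μ (Vset w x ∩ A) + μ (Vset w x \ A) :=
        measure_le_inter_add_diff μ _ _
      _ ≤ μ (Vset w x ∩ A) + μ Aᶜ :=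
        add_le_add le_rfl (measure_mono fun y hy => hy.2)
      _ = μ (Vset w x ∩ A) := by rw [hAc, add_zero]
  -- centroid bound
  have hcent : ∀ x ∈ A, ‖muCentroid μ (Vset u x ∩ A) - (w x + lam • Fnv μ w x)‖
      ≤ lam * (μ (Vset w x)).toReal := by
    intro x hx
    by_cases h0 : μ (Vset w x) = 0
    · have hsx := hsing x hx h0
      rw [hsx]
      have hne : ¬ 0 < μ ({x} : Set (Euc d)) := by
        have : μ ({x} : Set (Euc d)) ≤ μ (Vset w x) :=
          measure_mono (Set.singleton_subset_iff.mpr rfl)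
        rw [h0] at this
        simp [le_zero_iff.mp this]
      have hex : ∃ c : Euc d, ({x} : Set (Euc d)) = {c} := ⟨x, rfl⟩
      rw [muCentroid, if_neg hne, dif_pos hex]
      have hcx : hex.choose = x := (Set.singleton_eq_singleton_iff.mp hex.choose_spec).symm
      rw [hcx]
      have h := hELpt x hx x rfl hx
      exact h
    · have hpos : 0 < μ (Vset w x) := pos_iff_ne_zero.mpr h0
      have hVeq : Vset u x ∩ A = Vset w x ∩ A := hVA x hx
      have hposV : 0 < μ (Vset u x ∩ A) := by rw [hVeq, hμV]; exact hpos
      have hVwm : MeasurableSet (Vset w x) := hwm (measurableSet_singleton (w x))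
      have hVm : MeasurableSet (Vset w x ∩ A) := hVwm.inter hAm
      set c : Euc d := w x + lam • Fnv μ w x with hc
      have htoReal : (μ (Vset u x ∩ A)).toReal ≠ 0 :=
        ne_of_gt (ENNReal.toReal_pos (pos_iff_ne_zero.mp hposV) (measure_ne_top _ _))
      rw [muCentroid, if_pos hposV]
      have hbd : ∀ y ∈ Vset u x ∩ A, ‖y - c‖ ≤ lam * (μ (Vset w x)).toReal := by
        intro y hy
        rw [hVeq] at hy
        exact hELpt x hx y hy.1 hy.2
      have hVmm : MeasurableSet (Vset u x ∩ A) := by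
        rw [hVeq]; exact hVm
      have hnorm : ‖∫ y in Vset u x ∩ A, (y - c) ∂μ‖
          ≤ lam * (μ (Vset w x)).toReal * (μ (Vset u x ∩ A)).toReal :=
        norm_setIntegral_le_of_norm_le_const (measure_lt_top μ _) hbd
      have hInt : ∫ y in Vset u x ∩ A, (y - c) ∂μ
          = (∫ y in Vset u x ∩ A, y ∂μ) - (μ (Vset u x ∩ A)).toReal • c := by
        rw [integral_sub hid1.integrableOn ((integrableOn_const_iff (C := c)).mpr
          (Or.inr (measure_lt_top μ _))), setIntegral_const]
        rfl
      have halg : (μ (Vset u x ∩ A)).toReal⁻¹ • (∫ y in Vset u x ∩ A, y ∂μ) - c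
          = (μ (Vset u x ∩ A)).toReal⁻¹
            • ((∫ y in Vset u x ∩ A, y ∂μ) - (μ (Vset u x ∩ A)).toReal • c) := by
        rw [smul_sub, smul_smul, inv_mul_cancel₀ htoReal, one_smul]
      rw [halg, ← hInt, norm_smul, Real.norm_eq_abs,
        abs_of_nonneg (inv_nonneg.mpr ENNReal.toReal_nonneg)]
      calc (μ (Vset u x ∩ A)).toReal⁻¹ * ‖∫ y in Vset u x ∩ A, (y - c) ∂μ‖
          ≤ (μ (Vset u x ∩ A)).toReal⁻¹
            * (lam * (μ (Vset w x)).toReal * (μ (Vset u x ∩ A)).toReal) :=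
            mul_le_mul_of_nonneg_left hnorm (inv_nonneg.mpr ENNReal.toReal_nonneg)
        _ = lam * (μ (Vset w x)).toReal := by
            field_simp
  refine ⟨A, hAm, hAc, ?_, ?_⟩
  · filter_upwards [hmem_ae] with x hx
    by_cases h0 : μ (Vset w x) = 0
    · exact Or.inl ⟨x, hsing x hx h0⟩
    · right
      rw [hVA x hx, hμV x]
      exact pos_iff_ne_zero.mpr h0
  · filter_upwards [hmem_ae] with x hx
    filter_upwards [hmem_ae] with z hz
    intro hne
    have hwx : w x ≠ w z := by
      rw [← (hNA x hx).1, ← (hNA z hz).1]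
      exact hne
    intro heq
    set Cx : Euc d := muCentroid μ (Vset u x ∩ A) with hCx
    set Cz : Euc d := muCentroid μ (Vset u z ∩ A) with hCz
    have h1 := hcent x hx
    have h2 := hcent z hz
    have h3 := Fmono_surplus μ w hwm hwx
    have hdecomp : ⟪Cx - Cz, w x - w z⟫
        = ⟪w x - w z, w x - w z⟫ + lam * ⟪Fnv μ w x - Fnv μ w z, w x - w z⟫
          + ⟪(Cx - (w x + lam • Fnv μ w x)) - (Cz - (w z + lam • Fnv μ w z)), w x - w z⟫ := by
      have hsplit : Cx - Cz = ((w x - w z) + lam • (Fnv μ w x - Fnv μ w z))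
          + ((Cx - (w x + lam • Fnv μ w x)) - (Cz - (w z + lam • Fnv μ w z))) := by
        rw [smul_sub]
        abel
      rw [hsplit, inner_add_left, inner_add_left, real_inner_smul_left]
    have hcs : |⟪(Cx - (w x + lam • Fnv μ w x)) - (Cz - (w z + lam • Fnv μ w z)), w x - w z⟫|
        ≤ (lam * (μ (Vset w x)).toReal + lam * (μ (Vset w z)).toReal) * ‖w x - w z‖ := by
      calc |⟪(Cx - (w x + lam • Fnv μ w x)) - (Cz - (w z + lam • Fnv μ w z)), w x - w z⟫|
          ≤ ‖(Cx - (w x + lam • Fnv μ w x)) - (Cz - (w z + lam • Fnv μ w z))‖ * ‖w x - w z‖ :=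
            abs_real_inner_le_norm _ _
        _ ≤ (lam * (μ (Vset w x)).toReal + lam * (μ (Vset w z)).toReal) * ‖w x - w z‖ := by
            refine mul_le_mul_of_nonneg_right ?_ (norm_nonneg _)
            calc ‖(Cx - (w x + lam • Fnv μ w x)) - (Cz - (w z + lam • Fnv μ w z))‖
                ≤ ‖Cx - (w x + lam • Fnv μ w x)‖ + ‖Cz - (w z + lam • Fnv μ w z)‖ :=
                  norm_sub_le _ _
              _ ≤ lam * (μ (Vset w x)).toReal + lam * (μ (Vset w z)).toReal :=
                  add_le_add h1 h2
    have hself : ⟪w x - w z, w x - w z⟫ = ‖w x - w z‖^2 := real_inner_self_eq_norm_sq _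
    have hnormpos : 0 < ‖w x - w z‖ := norm_pos_iff.mpr (sub_ne_zero.mpr hwx)
    have hsq : 0 < ‖w x - w z‖^2 := pow_pos hnormpos 2
    have hFl : lam * (((μ {y | w y = w x}).toReal + (μ {y | w y = w z}).toReal) * ‖w x - w z‖)
        ≤ lam * ⟪Fnv μ w x - Fnv μ w z, w x - w z⟫ := mul_le_mul_of_nonneg_left h3 hlam
    have hkey : 0 < ⟪Cx - Cz, w x - w z⟫ := by
      have hlow := neg_abs_le
        ⟪(Cx - (w x + lam • Fnv μ w x)) - (Cz - (w z + lam • Fnv μ w z)), w x - w z⟫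
      have e1 : (μ {y | w y = w x}).toReal = (μ (Vset w x)).toReal := rfl
      have e2 : (μ {y | w y = w z}).toReal = (μ (Vset w z)).toReal := rfl
      rw [e1, e2] at hFl
      nlinarith [hdecomp, hcs, hself, hsq, hFl, hlow]
    rw [heq] at hkey
    simp at hkey
end
end

section
/- (Dual characterization of λ₁) Let μ be a nonzero finite Borel measure on ℝ^d with compact support. Then λ₁(μ) = μ(ℝ^d)^{-1} · min_{q ∈ Q(μ)} ‖q‖_{L^∞(μ⊗μ)}, where Q(μ) is the set of all q ∈ L^∞(μ⊗μ; ℝ^d) such that, for μ-a.e. x, y ∈ ℝ^d, q(x,y) = −q(y,x) and x − C_μ(ℝ^d) = ⨍ q(x,z) dμ(z); in particular the minimum over Q(μ) is attained. -/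
open MeasureTheory Filter Topology ProbabilityTheory
open scoped ENNReal NNReal symmDiff Classical RealInnerProductSpace

noncomputable section

/-- Membership in the dual feasible set `Q(μ)`: `q ∈ L^∞(μ⊗μ; ℝ^d)`, `q` is `μ⊗μ`-a.e.
antisymmetric, and `x - C_μ(ℝ^d) = ⨍ q(x,z) dμ(z)` for `μ`-a.e. `x`. -/
def QsetMem {d : ℕ} (μ : Measure (Euc d)) (q : Euc d → Euc d → Euc d) : Prop :=
  MemLp (fun p : Euc d × Euc d => q p.1 p.2) ⊤ (μ.prod μ) ∧
  (∀ᵐ p ∂μ.prod μ, q p.1 p.2 = -q p.2 p.1) ∧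
  (∀ᵐ x ∂μ, x - muCentroid μ Set.univ = ⨍ z, q x z ∂μ)

namespace Stmt7Aux
set_option linter.unusedSectionVars false

variable {d : ℕ} {μ : Measure (Euc d)} [IsFiniteMeasure μ]

lemma measM_pos (hμ0 : μ ≠ 0) : 0 < (μ Set.univ).toReal := by
  apply ENNReal.toReal_pos
  · simpa using (Measure.measure_univ_pos).2 hμ0
  · exact (measure_ne_top μ _)

lemma exists_bound (hsupp : ∃ K : Set (Euc d), IsCompact K ∧ μ Kᶜ = 0) :
    ∃ R : ℝ, 0 ≤ R ∧ ∀ᵐ x ∂μ, ‖x‖ ≤ R := by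
  obtain ⟨K, hK, hKc⟩ := hsupp
  obtain ⟨R, hR⟩ := hK.isBounded.subset_closedBall 0
  refine ⟨max R 0, le_max_right _ _, ?_⟩
  have : ∀ᵐ x ∂μ, x ∈ K := by
    rw [MeasureTheory.ae_iff]
    exact hKc
  filter_upwards [this] with x hx
  have := hR hx
  simp only [Metric.mem_closedBall, dist_zero_right] at this
  exact this.trans (le_max_left _ _)

lemma memℒp_id {R : ℝ} (hR : ∀ᵐ x ∂μ, ‖x‖ ≤ R) (p : ℝ≥0∞) :
    MemLp (fun x : Euc d => x) p μ :=
  MemLp.of_bound aestronglyMeasurable_id R hR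

lemma ctr_eq (hμ0 : μ ≠ 0) :
    muCentroid μ Set.univ = (μ Set.univ).toReal⁻¹ • ∫ x, x ∂μ := by
  rw [muCentroid, if_pos ((Measure.measure_univ_pos).2 hμ0)]
  rw [Measure.restrict_univ]

lemma integral_id_eq (hμ0 : μ ≠ 0) :
    ∫ x, x ∂μ = (μ Set.univ).toReal • muCentroid μ Set.univ := by
  rw [ctr_eq hμ0, smul_inv_smul₀ (measM_pos hμ0).ne']

lemma integral_sub_ctr (hμ0 : μ ≠ 0) {R : ℝ} (hR : ∀ᵐ x ∂μ, ‖x‖ ≤ R) :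
    ∫ x, (x - muCentroid μ Set.univ) ∂μ = 0 := by
  rw [integral_sub ((memℒp_id hR 1).integrable le_rfl) (integrable_const _),
    integral_const, integral_id_eq hμ0]
  simp [measureReal_def]

lemma integrable_inner_of_bound {α : Type*} [MeasurableSpace α] {f v : α → Euc d}
    {ν : Measure α}
    (hf : AEStronglyMeasurable f ν) {C : ℝ} (hfb : ∀ᵐ x ∂ν, ‖f x‖ ≤ C)
    (hv : Integrable v ν) : Integrable (fun x => ⟪f x, v x⟫) ν := by
  refine Integrable.mono' (hv.norm.const_mul C) (hf.inner hv.1) ?_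
  filter_upwards [hfb] with x hx
  calc ‖⟪f x, v x⟫‖ ≤ ‖f x‖ * ‖v x‖ := norm_inner_le_norm _ _
  _ ≤ C * ‖v x‖ := mul_le_mul_of_nonneg_right hx (norm_nonneg _)


lemma integrable_fst {v : Euc d → Euc d} (hv : MemLp v 2 μ) :
    Integrable (fun p : Euc d × Euc d => v p.1) (μ.prod μ) := by
  rw [integrable_prod_iff (hv.aestronglyMeasurable.comp_fst)]
  constructor
  · exact Eventually.of_forall fun x => by simpa using integrable_const (v x)
  · have : (fun x : Euc d => ∫ _, ‖v x‖ ∂μ) = fun x => (μ Set.univ).toReal * ‖v x‖ := by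
      funext x; simp [integral_const, smul_eq_mul, measureReal_def]
    rw [this]
    exact (hv.integrable one_le_two).norm.const_mul _

lemma integrable_snd {v : Euc d → Euc d} (hv : MemLp v 2 μ) :
    Integrable (fun p : Euc d × Euc d => v p.2) (μ.prod μ) :=
  (integrable_fst hv).swap

lemma integrable_normsq {α : Type*} [MeasurableSpace α] {μ : Measure α} [IsFiniteMeasure μ]
    {v : α → Euc d} (hv : MemLp v 2 μ) :
    Integrable (fun x => ‖v x‖ ^ 2) μ := by
  have h := hv.integrable_norm_rpow (by norm_num) (by norm_num)
  have : (fun x => ‖v x‖ ^ (2 : ℝ≥0∞).toReal) = fun x => ‖v x‖ ^ 2 := by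
    funext x
    rw [show (2 : ℝ≥0∞).toReal = ((2 : ℕ) : ℝ) by norm_num, Real.rpow_natCast]
  rwa [this] at h

/-- T1: antisymmetric reduction. -/
lemma antisym_reduce {q : Euc d × Euc d → Euc d}
    (hqm : AEStronglyMeasurable q (μ.prod μ)) {C : ℝ}
    (hqb : ∀ᵐ p ∂μ.prod μ, ‖q p‖ ≤ C)
    (hanti : ∀ᵐ p ∂μ.prod μ, q p = - q p.swap)
    {v : Euc d → Euc d} (hv : MemLp v 2 μ) :
    ∫ p, ⟪q p, v p.1 - v p.2⟫ ∂μ.prod μ = 2 * ∫ p, ⟪q p, v p.1⟫ ∂μ.prod μ := by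
  have i1 := integrable_fst hv
  have i2 := integrable_snd hv
  have iq1 : Integrable (fun p => ⟪q p, v p.1⟫) (μ.prod μ) :=
    integrable_inner_of_bound hqm hqb i1
  have iq2 : Integrable (fun p => ⟪q p, v p.2⟫) (μ.prod μ) :=
    integrable_inner_of_bound hqm hqb i2
  have hsplit : ∫ p, ⟪q p, v p.1 - v p.2⟫ ∂μ.prod μ
      = ∫ p, ⟪q p, v p.1⟫ ∂μ.prod μ - ∫ p, ⟪q p, v p.2⟫ ∂μ.prod μ := by
    rw [← integral_sub iq1 iq2]
    congr 1; funext p; rw [inner_sub_right]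
  have hswap : ∫ p, ⟪q p.swap, v p.1⟫ ∂μ.prod μ = ∫ p, ⟪q p, v p.2⟫ ∂μ.prod μ := by
    exact integral_prod_swap (fun p : Euc d × Euc d => ⟪q p, v p.2⟫)
  have hneg : ∫ p, ⟪q p.swap, v p.1⟫ ∂μ.prod μ = - ∫ p, ⟪q p, v p.1⟫ ∂μ.prod μ := by
    rw [← integral_neg]
    refine integral_congr_ae ?_
    filter_upwards [hanti] with p hp
    rw [hp]; simp [inner_neg_left]
  have : ∫ p, ⟪q p, v p.2⟫ ∂μ.prod μ = - ∫ p, ⟪q p, v p.1⟫ ∂μ.prod μ := by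
    rw [← hswap, hneg]
  rw [hsplit, this]; ring

/-- T2: Fubini for bounded kernels against first-coordinate L² functions. -/
lemma fubini_inner {q : Euc d × Euc d → Euc d}
    (hqm : AEStronglyMeasurable q (μ.prod μ)) {C : ℝ}
    (hqb : ∀ᵐ p ∂μ.prod μ, ‖q p‖ ≤ C)
    {v : Euc d → Euc d} (hv : MemLp v 2 μ) :
    ∫ p, ⟪q p, v p.1⟫ ∂μ.prod μ = ∫ x, ⟪∫ y, q (x, y) ∂μ, v x⟫ ∂μ := by
  have i1 := integrable_fst hv
  have iq : Integrable (fun p => ⟪q p, v p.1⟫) (μ.prod μ) :=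
    integrable_inner_of_bound hqm hqb i1
  rw [MeasureTheory.integral_prod _ iq]
  refine integral_congr_ae ?_
  filter_upwards [hqm.prodMk_left, Measure.ae_ae_of_ae_prod hqb] with x hm hb
  have hint : Integrable (fun y => q (x, y)) μ :=
    Integrable.mono' (integrable_const C) hm hb
  calc ∫ y, ⟪q (x, y), v x⟫ ∂μ = ∫ y, ⟪v x, q (x, y)⟫ ∂μ := by
        simp_rw [real_inner_comm]
    _ = ⟪v x, ∫ y, q (x, y) ∂μ⟫ := integral_inner hint (v x)
    _ = ⟪∫ y, q (x, y) ∂μ, v x⟫ := real_inner_comm _ _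


lemma SONJ_const (lam : ℝ) (c₀ : Euc d) :
    SONJ μ lam (fun _ => c₀) = ∫ x, ‖c₀ - x‖ ^ 2 ∂μ := by
  simp [SONJ]

lemma SONJ_congr {lam : ℝ} {u u' : Euc d → Euc d} (h : u =ᵐ[μ] u') :
    SONJ μ lam u = SONJ μ lam u' := by
  unfold SONJ
  congr 1
  · exact integral_congr_ae (h.mono fun x hx => by simp [hx])
  · congr 1
    refine integral_congr_ae ?_
    filter_upwards [h] with x hx
    exact integral_congr_ae (h.mono fun y hy => by simp [hx, hy])

lemma inner_sum_identity (c₀ a b : Euc d) :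
    ⟪a - c₀, c₀ - b⟫ + ⟪b - c₀, a⟫ = ⟪c₀, b - c₀⟫ := by
  simp only [inner_sub_left, inner_sub_right]
  rw [real_inner_comm a c₀, real_inner_comm a b]
  ring

lemma isSONMin_const_of_q (hμ0 : μ ≠ 0) {R : ℝ} (hR : ∀ᵐ x ∂μ, ‖x‖ ≤ R)
    {q : Euc d × Euc d → Euc d} (hqm : AEStronglyMeasurable q (μ.prod μ)) {Λ : ℝ}
    (hqb : ∀ᵐ p ∂μ.prod μ, ‖q p‖ ≤ Λ)
    (hanti : ∀ᵐ p ∂μ.prod μ, q p = - q p.swap)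
    (hconstr : ∀ᵐ x ∂μ, ∫ y, q (x, y) ∂μ
      = (μ Set.univ).toReal • (x - muCentroid μ Set.univ)) :
    IsSONMin μ ((μ Set.univ).toReal⁻¹ * Λ) (fun _ => muCentroid μ Set.univ) := by
  set M := (μ Set.univ).toReal with hM
  set c := muCentroid μ Set.univ with hc
  have hMpos : 0 < M := measM_pos hμ0
  refine ⟨memLp_const c, fun v hv => ?_⟩
  rw [SONJ_const]
  -- integrability facts
  have hvc : MemLp (fun x => v x - c) 2 μ := hv.sub (memLp_const c)
  have hvi : Integrable v μ := hv.integrable one_le_two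
  have hidint : Integrable (fun x : Euc d => x) μ := (memℒp_id hR 1).integrable le_rfl
  have hcx_meas : AEStronglyMeasurable (fun x : Euc d => c - x) μ :=
    aestronglyMeasurable_const.sub aestronglyMeasurable_id
  have hcx_bd : ∀ᵐ x ∂μ, ‖c - x‖ ≤ ‖c‖ + R := by
    filter_upwards [hR] with x hx
    exact (norm_sub_le _ _).trans (by linarith)
  have hxc_meas : AEStronglyMeasurable (fun x : Euc d => x - c) μ :=
    aestronglyMeasurable_id.sub aestronglyMeasurable_const
  have hxc_bd : ∀ᵐ x ∂μ, ‖x - c‖ ≤ R + ‖c‖ := by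
    filter_upwards [hR] with x hx
    exact (norm_sub_le _ _).trans (by linarith)
  have Ia : Integrable (fun x => ‖v x - c‖ ^ 2) μ := integrable_normsq hvc
  have Ib : Integrable (fun x => ⟪v x - c, c - x⟫) μ := by
    have h' : Integrable (fun x => ⟪c - x, v x - c⟫) μ :=
      integrable_inner_of_bound hcx_meas hcx_bd (hvc.integrable one_le_two)
    refine h'.congr (Eventually.of_forall fun x => real_inner_comm _ _)
  have Ic : Integrable (fun x => ‖c - x‖ ^ 2) μ :=
    integrable_normsq ((memLp_const c).sub (memℒp_id hR 2))
  have Id' : Integrable (fun x => ⟪x - c, v x⟫) μ :=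
    integrable_inner_of_bound hxc_meas hxc_bd hvi
  -- expansion of the quadratic term
  have e1 : ∫ x, ‖v x - x‖ ^ 2 ∂μ
      = ∫ x, ‖v x - c‖ ^ 2 ∂μ + 2 * ∫ x, ⟪v x - c, c - x⟫ ∂μ + ∫ x, ‖c - x‖ ^ 2 ∂μ := by
    have hpt : ∀ x, ‖v x - x‖ ^ 2
        = ‖v x - c‖ ^ 2 + 2 * ⟪v x - c, c - x⟫ + ‖c - x‖ ^ 2 := by
      intro x
      rw [show v x - x = (v x - c) + (c - x) by abel]
      exact norm_add_sq_real _ _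
    calc ∫ x, ‖v x - x‖ ^ 2 ∂μ
        = ∫ x, (‖v x - c‖ ^ 2 + 2 * ⟪v x - c, c - x⟫ + ‖c - x‖ ^ 2) ∂μ :=
          integral_congr_ae (Eventually.of_forall hpt)
      _ = (∫ x, (‖v x - c‖ ^ 2 + 2 * ⟪v x - c, c - x⟫) ∂μ) + ∫ x, ‖c - x‖ ^ 2 ∂μ := by
          exact integral_add (Ia.add (Ib.const_mul 2)) Ic
      _ = (∫ x, ‖v x - c‖ ^ 2 ∂μ) + (∫ x, 2 * ⟪v x - c, c - x⟫ ∂μ) + ∫ x, ‖c - x‖ ^ 2 ∂μ := by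
          rw [integral_add Ia (Ib.const_mul 2)]
      _ = _ := by rw [integral_const_mul]
  -- the double term bound
  have hTv_int : Integrable (fun p : Euc d × Euc d => v p.1 - v p.2) (μ.prod μ) :=
    (integrable_fst hv).sub (integrable_snd hv)
  have hdouble : ∫ x, ∫ y, ‖v x - v y‖ ∂μ ∂μ
      = ∫ p, ‖v p.1 - v p.2‖ ∂(μ.prod μ) := by
    exact integral_integral (f := fun x y => ‖v x - v y‖) hTv_int.norm
  have iqsub : Integrable (fun p => ⟪q p, v p.1 - v p.2⟫) (μ.prod μ) :=
    integrable_inner_of_bound hqm hqb hTv_int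
  have hlow : ∫ p, ⟪q p, v p.1 - v p.2⟫ ∂(μ.prod μ)
      ≤ Λ * ∫ p, ‖v p.1 - v p.2‖ ∂(μ.prod μ) := by
    rw [← integral_const_mul]
    refine integral_mono_ae iqsub (hTv_int.norm.const_mul Λ) ?_
    filter_upwards [hqb] with p hp
    calc ⟪q p, v p.1 - v p.2⟫ ≤ ‖q p‖ * ‖v p.1 - v p.2‖ := real_inner_le_norm _ _
      _ ≤ Λ * ‖v p.1 - v p.2‖ := mul_le_mul_of_nonneg_right hp (norm_nonneg _)
  have hkey : ∫ p, ⟪q p, v p.1 - v p.2⟫ ∂(μ.prod μ)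
      = 2 * M * ∫ x, ⟪x - c, v x⟫ ∂μ := by
    rw [antisym_reduce hqm hqb hanti hv, fubini_inner hqm hqb hv]
    have : ∫ x, ⟪∫ y, q (x, y) ∂μ, v x⟫ ∂μ = M * ∫ x, ⟪x - c, v x⟫ ∂μ := by
      rw [← integral_const_mul]
      refine integral_congr_ae ?_
      filter_upwards [hconstr] with x hx
      rw [hx, real_inner_smul_left]
    rw [this]; ring
  have hlam : 2 * ∫ x, ⟪x - c, v x⟫ ∂μ
      ≤ M⁻¹ * Λ * ∫ x, ∫ y, ‖v x - v y‖ ∂μ ∂μ := by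
    have h1 : 2 * ∫ x, ⟪x - c, v x⟫ ∂μ
        = M⁻¹ * ∫ p, ⟪q p, v p.1 - v p.2⟫ ∂(μ.prod μ) := by
      rw [hkey]; field_simp
    rw [h1, hdouble, mul_assoc]
    exact mul_le_mul_of_nonneg_left hlow (inv_nonneg.2 hMpos.le)
  -- the mixed term vanishes
  have hzero : ∫ x, ⟪v x - c, c - x⟫ ∂μ + ∫ x, ⟪x - c, v x⟫ ∂μ = 0 := by
    rw [← integral_add Ib Id']
    have : ∀ x, ⟪v x - c, c - x⟫ + ⟪x - c, v x⟫ = ⟪c, x - c⟫ :=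
      fun x => inner_sum_identity c (v x) x
    calc ∫ x, (⟪v x - c, c - x⟫ + ⟪x - c, v x⟫) ∂μ
        = ∫ x, ⟪c, x - c⟫ ∂μ := integral_congr_ae (Eventually.of_forall this)
      _ = ⟪c, ∫ x, (x - c) ∂μ⟫ := integral_inner (hidint.sub (integrable_const c)) c
      _ = 0 := by rw [integral_sub_ctr hμ0 hR, inner_zero_right]
  have hnn : 0 ≤ ∫ x, ‖v x - c‖ ^ 2 ∂μ :=
    integral_nonneg fun x => sq_nonneg _
  unfold SONJ
  linarith [hlam, e1, hzero, hnn]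


lemma ae_fst_bound {R : ℝ} (hR : ∀ᵐ x ∂μ, ‖x‖ ≤ R) :
    ∀ᵐ p : Euc d × Euc d ∂μ.prod μ, ‖p.1‖ ≤ R :=
  Measure.quasiMeasurePreserving_fst.ae hR

lemma ae_snd_bound {R : ℝ} (hR : ∀ᵐ x ∂μ, ‖x‖ ≤ R) :
    ∀ᵐ p : Euc d × Euc d ∂μ.prod μ, ‖p.2‖ ≤ R :=
  Measure.quasiMeasurePreserving_snd.ae hR

/-- The variational (first-order) inequality at a constant minimizer. -/
lemma variational (hμ0 : μ ≠ 0) {R : ℝ} (hR : ∀ᵐ x ∂μ, ‖x‖ ≤ R) {lam : ℝ} {c₀ : Euc d}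
    (hmin : IsSONMin μ lam (fun _ => c₀)) {v : Euc d → Euc d} (hv : MemLp v 2 μ) :
    2 * ∫ x, ⟪x - c₀, v x⟫ ∂μ ≤ lam * ∫ x, ∫ y, ‖v x - v y‖ ∂μ ∂μ := by
  have hvi : Integrable v μ := hv.integrable one_le_two
  have hcx_meas : AEStronglyMeasurable (fun x : Euc d => c₀ - x) μ :=
    aestronglyMeasurable_const.sub aestronglyMeasurable_id
  have hcx_bd : ∀ᵐ x ∂μ, ‖c₀ - x‖ ≤ ‖c₀‖ + R := by
    filter_upwards [hR] with x hx
    exact (norm_sub_le _ _).trans (by linarith)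
  have Ib : Integrable (fun x => ⟪c₀ - x, v x⟫) μ :=
    integrable_inner_of_bound hcx_meas hcx_bd hvi
  have Inorm : Integrable (fun x => ‖v x‖ ^ 2) μ := integrable_normsq hv
  have Ic : Integrable (fun x => ‖c₀ - x‖ ^ 2) μ :=
    integrable_normsq ((memLp_const c₀).sub (memℒp_id hR 2))
  set A := 2 * ∫ x, ⟪c₀ - x, v x⟫ ∂μ + lam * ∫ x, ∫ y, ‖v x - v y‖ ∂μ ∂μ with hA
  set B := ∫ x, ‖v x‖ ^ 2 ∂μ with hB
  have hBnn : 0 ≤ B := integral_nonneg fun x => sq_nonneg _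
  have key : ∀ t : ℝ, 0 < t → 0 ≤ A + t * B := by
    intro t ht
    have h := hmin.2 (fun x => c₀ + t • v x) ((memLp_const c₀).add (hv.const_smul t))
    rw [SONJ_const] at h
    unfold SONJ at h
    have e1 : ∫ x, ‖(c₀ + t • v x) - x‖ ^ 2 ∂μ
        = ∫ x, ‖c₀ - x‖ ^ 2 ∂μ + (2 * t) * ∫ x, ⟪c₀ - x, v x⟫ ∂μ
          + t ^ 2 * ∫ x, ‖v x‖ ^ 2 ∂μ := by
      have hpt : ∀ x : Euc d, ‖(c₀ + t • v x) - x‖ ^ 2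
          = ‖c₀ - x‖ ^ 2 + (2 * t) * ⟪c₀ - x, v x⟫ + t ^ 2 * ‖v x‖ ^ 2 := by
        intro x
        have h1 : (c₀ + t • v x) - x = (c₀ - x) + t • v x := by abel
        rw [h1, norm_add_sq_real, real_inner_smul_right, norm_smul]
        simp [mul_pow, sq_abs]
        ring
      calc ∫ x, ‖(c₀ + t • v x) - x‖ ^ 2 ∂μ
          = ∫ x, (‖c₀ - x‖ ^ 2 + (2 * t) * ⟪c₀ - x, v x⟫ + t ^ 2 * ‖v x‖ ^ 2) ∂μ :=
            integral_congr_ae (Eventually.of_forall hpt)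
        _ = (∫ x, (‖c₀ - x‖ ^ 2 + (2 * t) * ⟪c₀ - x, v x⟫) ∂μ)
              + ∫ x, t ^ 2 * ‖v x‖ ^ 2 ∂μ :=
            integral_add (Ic.add (Ib.const_mul _)) (Inorm.const_mul _)
        _ = _ := by rw [integral_add Ic (Ib.const_mul _), integral_const_mul, integral_const_mul]
    have e2 : ∫ x, ∫ y, ‖(c₀ + t • v x) - (c₀ + t • v y)‖ ∂μ ∂μ
        = t * ∫ x, ∫ y, ‖v x - v y‖ ∂μ ∂μ := by
      rw [← integral_const_mul]
      refine integral_congr_ae (Eventually.of_forall fun x => ?_)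
      show (∫ y, ‖(c₀ + t • v x) - (c₀ + t • v y)‖ ∂μ) = t * ∫ y, ‖v x - v y‖ ∂μ
      rw [← integral_const_mul]
      refine integral_congr_ae (Eventually.of_forall fun y => ?_)
      show ‖(c₀ + t • v x) - (c₀ + t • v y)‖ = t * ‖v x - v y‖
      have h3 : (c₀ + t • v x) - (c₀ + t • v y) = t • (v x - v y) := by
        rw [smul_sub]; abel
      rw [h3, norm_smul, Real.norm_eq_abs, abs_of_pos ht]
    rw [e1, e2] at h
    have h2 : 0 ≤ t * (A + t * B) := by rw [hA, hB]; nlinarith [h]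
    exact nonneg_of_mul_nonneg_right h2 ht
  have hAnn : 0 ≤ A := by
    by_contra hneg
    push_neg at hneg
    have hBp : (0:ℝ) < B + 1 := by linarith
    have ht : 0 < -A / (B + 1) := div_pos (by linarith) hBp
    have h1 := key _ ht
    have h2 : A + -A / (B + 1) * B = A / (B + 1) := by field_simp; ring
    rw [h2] at h1
    have : (0:ℝ) * (B+1) ≤ A := (le_div_iff₀ hBp).1 h1
    linarith
  have hflip : ∫ x, ⟪x - c₀, v x⟫ ∂μ = - ∫ x, ⟪c₀ - x, v x⟫ ∂μ := by
    rw [← integral_neg]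
    refine integral_congr_ae (Eventually.of_forall fun x => ?_)
    show ⟪x - c₀, v x⟫ = -⟪c₀ - x, v x⟫
    rw [show x - c₀ = -(c₀ - x) by abel, inner_neg_left]
  rw [hflip] at *
  linarith [hAnn]

lemma ctr_forced (hμ0 : μ ≠ 0) {R : ℝ} (hR : ∀ᵐ x ∂μ, ‖x‖ ≤ R) {lam : ℝ} {c₀ : Euc d}
    (hmin : IsSONMin μ lam (fun _ => c₀)) : c₀ = muCentroid μ Set.univ := by
  have hidint : Integrable (fun x : Euc d => x) μ := (memℒp_id hR 1).integrable le_rfl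
  set k := ∫ x, (x - c₀) ∂μ with hk
  have hvar := variational hμ0 hR hmin (memLp_const k)
  have hz : ∫ x, ∫ y, ‖k - k‖ ∂μ ∂μ = (0:ℝ) := by simp
  rw [hz, mul_zero] at hvar
  have hkk : ∫ x, ⟪x - c₀, k⟫ ∂μ = ‖k‖ ^ 2 := by
    calc ∫ x, ⟪x - c₀, k⟫ ∂μ = ∫ x, ⟪k, x - c₀⟫ ∂μ := by simp_rw [real_inner_comm]
      _ = ⟪k, ∫ x, (x - c₀) ∂μ⟫ := integral_inner (hidint.sub (integrable_const c₀)) k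
      _ = ‖k‖ ^ 2 := real_inner_self_eq_norm_sq k
  rw [hkk] at hvar
  have hk0 : k = 0 := by
    have : ‖k‖ ^ 2 ≤ 0 := by linarith
    have : ‖k‖ = 0 := by nlinarith [norm_nonneg k, sq_nonneg ‖k‖]
    exact norm_eq_zero.1 this
  have h1 : ∫ x, (x - c₀) ∂μ = ∫ x, (x : Euc d) ∂μ - (μ Set.univ).toReal • c₀ := by
    rw [integral_sub hidint (integrable_const c₀), integral_const]
    rfl
  have h2 : ∫ x, (x : Euc d) ∂μ = (μ Set.univ).toReal • c₀ := by
    have := hk0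
    rw [hk, h1] at this
    exact sub_eq_zero.1 this
  rw [integral_id_eq hμ0] at h2
  exact (smul_right_injective (Euc d) (measM_pos hμ0).ne' h2.symm)

lemma isSONMin_ctr_of_cohesive (hμ0 : μ ≠ 0) {R : ℝ} (hR : ∀ᵐ x ∂μ, ‖x‖ ≤ R) {lam : ℝ}
    (h : Cohesive μ lam) : IsSONMin μ lam (fun _ => muCentroid μ Set.univ) := by
  obtain ⟨u, hm, c', hc'⟩ := h
  have hconst : IsSONMin μ lam (fun _ => c') :=
    ⟨memLp_const c', fun v hv => by rw [← SONJ_congr hc']; exact hm.2 v hv⟩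
  rwa [ctr_forced hμ0 hR hconst] at hconst

lemma Sset_nonempty (hμ0 : μ ≠ 0) {R : ℝ} (hR0 : 0 ≤ R) (hR : ∀ᵐ x ∂μ, ‖x‖ ≤ R) :
    {lam : ℝ | 0 ≤ lam ∧ Cohesive μ lam}.Nonempty := by
  set c := muCentroid μ Set.univ with hc
  have hqm : AEStronglyMeasurable (fun p : Euc d × Euc d => p.1 - p.2) (μ.prod μ) :=
    (continuous_fst.sub continuous_snd).aestronglyMeasurable
  have hqb : ∀ᵐ p : Euc d × Euc d ∂μ.prod μ, ‖p.1 - p.2‖ ≤ R + R := by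
    filter_upwards [ae_fst_bound hR, ae_snd_bound hR] with p h1 h2
    exact (norm_sub_le _ _).trans (by linarith)
  have hanti : ∀ᵐ p : Euc d × Euc d ∂μ.prod μ, p.1 - p.2 = -(p.swap.1 - p.swap.2) := by
    refine Eventually.of_forall fun p => ?_
    simp [Prod.swap, neg_sub]
  have hconstr : ∀ᵐ x ∂μ, ∫ y, ((x, y).1 - (x, y).2) ∂μ
      = (μ Set.univ).toReal • (x - c) := by
    refine Eventually.of_forall fun x => ?_
    have : ∫ y, (x - y) ∂μ = (μ Set.univ).toReal • x - ∫ y, (y : Euc d) ∂μ := by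
      rw [integral_sub (integrable_const x) ((memℒp_id hR 1).integrable le_rfl),
        integral_const]
      rfl
    rw [this, integral_id_eq hμ0, smul_sub]
  have hmin := isSONMin_const_of_q hμ0 hR hqm hqb hanti hconstr
  refine ⟨(μ Set.univ).toReal⁻¹ * (R + R), ⟨by positivity, ?_⟩⟩
  exact ⟨fun _ => c, hmin, c, EventuallyEq.rfl⟩

lemma lambda1_nonneg (hμ0 : μ ≠ 0) {R : ℝ} (hR0 : 0 ≤ R) (hR : ∀ᵐ x ∂μ, ‖x‖ ≤ R) :
    0 ≤ lambda1 μ :=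
  le_csInf (Sset_nonempty hμ0 hR0 hR) fun _ hb => hb.1

/-- Cohesiveness holds at `λ₁` itself. -/
lemma isSONMin_at_lambda1 (hμ0 : μ ≠ 0) {R : ℝ} (hR0 : 0 ≤ R) (hR : ∀ᵐ x ∂μ, ‖x‖ ≤ R) :
    IsSONMin μ (lambda1 μ) (fun _ => muCentroid μ Set.univ) := by
  set c := muCentroid μ Set.univ with hc
  have hne := Sset_nonempty hμ0 hR0 hR
  refine ⟨memLp_const c, fun v hv => ?_⟩
  rw [SONJ_const]
  set Dv := ∫ x, ∫ y, ‖v x - v y‖ ∂μ ∂μ with hDv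
  have hDnn : 0 ≤ Dv :=
    integral_nonneg fun x => integral_nonneg fun y => norm_nonneg _
  refine le_of_forall_pos_le_add ?_
  intro ε hε
  obtain ⟨lam, hlamS, hlt⟩ := Real.lt_sInf_add_pos hne (show 0 < ε/(Dv+1) by positivity)
  have hmin := isSONMin_ctr_of_cohesive hμ0 hR hlamS.2
  have h1 : ∫ x, ‖c - x‖ ^ 2 ∂μ ≤ SONJ μ lam v := by
    rw [← SONJ_const (μ := μ) lam c]; exact hmin.2 v hv
  have hlam2 : lam * Dv ≤ lambda1 μ * Dv + ε := by
    have hle : lam ≤ lambda1 μ + ε/(Dv+1) := le_of_lt hlt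
    have hq : ε/(Dv+1) * Dv ≤ ε := by
      rw [div_mul_eq_mul_div, div_le_iff₀ (by positivity)]
      nlinarith
    nlinarith
  unfold SONJ at h1 ⊢
  rw [← hDv] at h1 ⊢
  linarith


lemma lambda1_le_of_QsetMem (hμ0 : μ ≠ 0) {R : ℝ} (hR0 : 0 ≤ R) (hR : ∀ᵐ x ∂μ, ‖x‖ ≤ R)
    {q' : Euc d → Euc d → Euc d} (hq : QsetMem μ q') :
    lambda1 μ ≤ (μ Set.univ).toReal⁻¹ *
      (eLpNorm (fun p : Euc d × Euc d => q' p.1 p.2) ⊤ (μ.prod μ)).toReal := by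
  obtain ⟨hmem, hanti, havg⟩ := hq
  set f := fun p : Euc d × Euc d => q' p.1 p.2 with hf
  set Λ := (eLpNorm f ⊤ (μ.prod μ)).toReal with hΛ
  have hfin : eLpNorm f ⊤ (μ.prod μ) < ⊤ := hmem.2
  have hqb : ∀ᵐ p ∂μ.prod μ, ‖f p‖ ≤ Λ := by
    filter_upwards [ae_le_eLpNormEssSup (f := f) (μ := μ.prod μ)] with p hp
    have h2 := ENNReal.toReal_mono
      (by rw [← eLpNorm_exponent_top]; exact hfin.ne) hp
    simpa [hΛ, eLpNorm_exponent_top] using h2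
  have hanti' : ∀ᵐ p : Euc d × Euc d ∂μ.prod μ, f p = - f p.swap := hanti
  have hconstr : ∀ᵐ x ∂μ, ∫ y, f (x, y) ∂μ
      = (μ Set.univ).toReal • (x - muCentroid μ Set.univ) := by
    filter_upwards [havg] with x hx
    rw [average_eq, measureReal_def] at hx
    rw [hx, smul_smul, mul_inv_cancel₀ (measM_pos hμ0).ne', one_smul]
  have hmin := isSONMin_const_of_q hμ0 hR hmem.1 hqb hanti' hconstr
  have hS : (μ Set.univ).toReal⁻¹ * Λ ∈ {lam : ℝ | 0 ≤ lam ∧ Cohesive μ lam} :=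
    ⟨mul_nonneg (inv_nonneg.2 ENNReal.toReal_nonneg) ENNReal.toReal_nonneg,
      ⟨_, hmin, _, EventuallyEq.rfl⟩⟩
  exact csInf_le ⟨0, fun x hx => hx.1⟩ hS


lemma memℒp_fst {v : Euc d → Euc d} (hv : MemLp v 2 μ) :
    MemLp (fun p : Euc d × Euc d => v p.1) 2 (μ.prod μ) := by
  have h1 : MemLp v 2 ((μ Set.univ) • μ) := hv.smul_measure (measure_ne_top μ _)
  rw [← Measure.map_fst_prod] at h1
  exact h1.comp_of_map measurable_fst.aemeasurable

lemma memℒp_snd {v : Euc d → Euc d} (hv : MemLp v 2 μ) :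
    MemLp (fun p : Euc d × Euc d => v p.2) 2 (μ.prod μ) := by
  have h1 : MemLp v 2 ((μ Set.univ) • μ) := hv.smul_measure (measure_ne_top μ _)
  rw [← Measure.map_snd_prod] at h1
  exact h1.comp_of_map measurable_snd.aemeasurable

/-- The subspace `W = {v(x) - v(y) : v ∈ L²(μ)}` of `L²(μ ⊗ μ)`. -/
def Wsub (μ : Measure (Euc d)) [IsFiniteMeasure μ] :
    Submodule ℝ (Lp (Euc d) 2 (μ.prod μ)) where
  carrier := {w | ∃ v : Euc d → Euc d, MemLp v 2 μ ∧
    (w : Euc d × Euc d → Euc d) =ᵐ[μ.prod μ] fun p => v p.1 - v p.2}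
  add_mem' := by
    rintro w₁ w₂ ⟨v₁, hv₁, he₁⟩ ⟨v₂, hv₂, he₂⟩
    refine ⟨v₁ + v₂, hv₁.add hv₂, (Lp.coeFn_add w₁ w₂).trans ?_⟩
    filter_upwards [he₁, he₂] with p h1 h2
    simp only [Pi.add_apply, h1, h2]
    abel
  zero_mem' := by
    refine ⟨0, MemLp.zero, (Lp.coeFn_zero _ _ _).trans ?_⟩
    refine Eventually.of_forall fun p => ?_
    simp
  smul_mem' := by
    rintro t w ⟨v, hv, he⟩
    refine ⟨t • v, hv.const_smul t, (Lp.coeFn_smul t w).trans ?_⟩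
    filter_upwards [he] with p h1
    simp only [Pi.smul_apply, h1, smul_sub]

/-- The linear functional `v ↦ 2⟨x - c, v⟩_{L²(μ)}`. -/
def phi0 (μ : Measure (Euc d)) (v : Euc d → Euc d) : ℝ :=
  2 * ∫ x, ⟪x - muCentroid μ Set.univ, v x⟫ ∂μ

lemma integrable_inner_ctr {R : ℝ} (hR : ∀ᵐ x ∂μ, ‖x‖ ≤ R) {v : Euc d → Euc d}
    (hv : Integrable v μ) :
    Integrable (fun x => ⟪x - muCentroid μ Set.univ, v x⟫) μ := by
  refine integrable_inner_of_bound
    (aestronglyMeasurable_id.sub aestronglyMeasurable_const)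
    (C := R + ‖muCentroid μ Set.univ‖) ?_ hv
  filter_upwards [hR] with x hx
  exact (norm_sub_le _ _).trans (by linarith)

lemma phi0_add {R : ℝ} (hR : ∀ᵐ x ∂μ, ‖x‖ ≤ R) {v v' : Euc d → Euc d}
    (hv : MemLp v 2 μ) (hv' : MemLp v' 2 μ) :
    phi0 μ (v + v') = phi0 μ v + phi0 μ v' := by
  unfold phi0
  rw [show ∫ x, ⟪x - muCentroid μ Set.univ, (v + v') x⟫ ∂μ
      = ∫ x, (⟪x - muCentroid μ Set.univ, v x⟫ + ⟪x - muCentroid μ Set.univ, v' x⟫) ∂μ from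
    integral_congr_ae (Eventually.of_forall fun x => by simp [inner_add_right]),
    integral_add (integrable_inner_ctr hR (hv.integrable one_le_two))
      (integrable_inner_ctr hR (hv'.integrable one_le_two))]
  ring

lemma phi0_smul (t : ℝ) (v : Euc d → Euc d) : phi0 μ (t • v) = t * phi0 μ v := by
  unfold phi0
  rw [show ∫ x, ⟪x - muCentroid μ Set.univ, (t • v) x⟫ ∂μ
      = ∫ x, t * ⟪x - muCentroid μ Set.univ, v x⟫ ∂μ from
    integral_congr_ae (Eventually.of_forall fun x => by
      show ⟪x - muCentroid μ Set.univ, (t • v) x⟫ = t * ⟪x - muCentroid μ Set.univ, v x⟫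
      rw [Pi.smul_apply, real_inner_smul_right]),
    integral_const_mul]
  ring

lemma phi0_sub {R : ℝ} (hR : ∀ᵐ x ∂μ, ‖x‖ ≤ R) {v v' : Euc d → Euc d}
    (hv : MemLp v 2 μ) (hv' : MemLp v' 2 μ) :
    phi0 μ (v - v') = phi0 μ v - phi0 μ v' := by
  have h1 : v - v' = v + (-1 : ℝ) • v' := by funext x; simp [sub_eq_add_neg]
  rw [h1, phi0_add hR hv (hv'.const_smul _), phi0_smul]
  ring

lemma phi0_zero_of_ae (hμ0 : μ ≠ 0) {R : ℝ} (hR : ∀ᵐ x ∂μ, ‖x‖ ≤ R)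
    {v : Euc d → Euc d} (hv : MemLp v 2 μ)
    (hz : (fun p : Euc d × Euc d => v p.1 - v p.2) =ᵐ[μ.prod μ] 0) :
    phi0 μ v = 0 := by
  have h2 : ∀ᵐ x ∂μ, ∀ᵐ y ∂μ, v x - v y = (0 : Euc d) := Measure.ae_ae_of_ae_prod hz
  haveI : (ae μ).NeBot := ae_neBot.2 hμ0
  obtain ⟨x₀, hx₀⟩ := h2.exists
  have hvc : v =ᵐ[μ] fun _ => v x₀ := by
    filter_upwards [hx₀] with y hy
    exact (sub_eq_zero.1 hy).symm
  unfold phi0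
  have hintc : Integrable (fun x : Euc d => x - muCentroid μ Set.univ) μ :=
    ((memℒp_id hR 1).integrable le_rfl).sub (integrable_const _)
  have hcalc : ∫ x, ⟪x - muCentroid μ Set.univ, v x⟫ ∂μ = 0 := by
    calc ∫ x, ⟪x - muCentroid μ Set.univ, v x⟫ ∂μ
        = ∫ x, ⟪v x₀, x - muCentroid μ Set.univ⟫ ∂μ := by
          refine integral_congr_ae ?_
          filter_upwards [hvc] with x hx
          rw [show v x = v x₀ from hx, real_inner_comm]
      _ = ⟪v x₀, ∫ x, (x - muCentroid μ Set.univ) ∂μ⟫ := integral_inner hintc (v x₀)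
      _ = 0 := by rw [integral_sub_ctr hμ0 hR, inner_zero_right]
  rw [hcalc, mul_zero]


lemma mem_Wsub_iff {w : Lp (Euc d) 2 (μ.prod μ)} :
    w ∈ Wsub μ ↔ ∃ v : Euc d → Euc d, MemLp v 2 μ ∧
      (w : Euc d × Euc d → Euc d) =ᵐ[μ.prod μ] fun p => v p.1 - v p.2 := Iff.rfl

/-- A chosen representative `v` with `w = v(x) - v(y)` a.e. -/
def wrep {w : Lp (Euc d) 2 (μ.prod μ)} (hw : w ∈ Wsub μ) : Euc d → Euc d :=
  (mem_Wsub_iff.1 hw).choose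

lemma wrep_memℒp {w : Lp (Euc d) 2 (μ.prod μ)} (hw : w ∈ Wsub μ) :
    MemLp (wrep hw) 2 μ := (mem_Wsub_iff.1 hw).choose_spec.1

lemma wrep_ae {w : Lp (Euc d) 2 (μ.prod μ)} (hw : w ∈ Wsub μ) :
    (w : Euc d × Euc d → Euc d) =ᵐ[μ.prod μ]
      fun p => wrep hw p.1 - wrep hw p.2 :=
  (mem_Wsub_iff.1 hw).choose_spec.2

lemma phi0_eq_of_ae (hμ0 : μ ≠ 0) {R : ℝ} (hR : ∀ᵐ x ∂μ, ‖x‖ ≤ R)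
    {v v' : Euc d → Euc d} (hv : MemLp v 2 μ) (hv' : MemLp v' 2 μ)
    (he : (fun p : Euc d × Euc d => v p.1 - v p.2)
      =ᵐ[μ.prod μ] fun p => v' p.1 - v' p.2) :
    phi0 μ v = phi0 μ v' := by
  have hz : (fun p : Euc d × Euc d => (v - v') p.1 - (v - v') p.2)
      =ᵐ[μ.prod μ] 0 := by
    filter_upwards [he] with p h1
    simp only [Pi.sub_apply, Pi.zero_apply]
    rw [sub_sub_sub_comm, h1, sub_self]
  have h0 := phi0_zero_of_ae hμ0 hR (hv.sub hv') hz
  rw [phi0_sub hR hv hv'] at h0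
  linarith

lemma Fval_eq (hμ0 : μ ≠ 0) {R : ℝ} (hR : ∀ᵐ x ∂μ, ‖x‖ ≤ R)
    {w : Lp (Euc d) 2 (μ.prod μ)} (hw : w ∈ Wsub μ)
    {v : Euc d → Euc d} (hv : MemLp v 2 μ)
    (he : (w : Euc d × Euc d → Euc d) =ᵐ[μ.prod μ] fun p => v p.1 - v p.2) :
    phi0 μ (wrep hw) = phi0 μ v :=
  phi0_eq_of_ae hμ0 hR (wrep_memℒp hw) hv ((wrep_ae hw).symm.trans he)

/-- The dual linear functional on `W`. -/
def Fmap (hμ0 : μ ≠ 0) {R : ℝ} (hR : ∀ᵐ x ∂μ, ‖x‖ ≤ R) : Wsub μ →ₗ[ℝ] ℝ where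
  toFun w := phi0 μ (wrep w.2)
  map_add' := by
    intro w₁ w₂
    have h1m := wrep_memℒp w₁.2
    have h2m := wrep_memℒp w₂.2
    have hsum : (((w₁ + w₂ : Wsub μ) : Lp (Euc d) 2 (μ.prod μ)) :
        Euc d × Euc d → Euc d) =ᵐ[μ.prod μ]
        fun p => (wrep w₁.2 + wrep w₂.2) p.1 - (wrep w₁.2 + wrep w₂.2) p.2 := by
      have hco : ((w₁ + w₂ : Wsub μ) : Lp (Euc d) 2 (μ.prod μ))
          = (w₁ : Lp (Euc d) 2 (μ.prod μ)) + (w₂ : Lp (Euc d) 2 (μ.prod μ)) := rfl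
      rw [hco]
      refine (Lp.coeFn_add _ _).trans ?_
      filter_upwards [wrep_ae w₁.2, wrep_ae w₂.2] with p e1 e2
      simp only [Pi.add_apply, e1, e2]
      abel
    rw [Fval_eq hμ0 hR (w₁ + w₂).2 (h1m.add h2m) hsum, phi0_add hR h1m h2m]
  map_smul' := by
    intro t w
    have h1m := wrep_memℒp w.2
    have hsm : (((t • w : Wsub μ) : Lp (Euc d) 2 (μ.prod μ)) :
        Euc d × Euc d → Euc d) =ᵐ[μ.prod μ]
        fun p => (t • wrep w.2) p.1 - (t • wrep w.2) p.2 := by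
      have hco : ((t • w : Wsub μ) : Lp (Euc d) 2 (μ.prod μ))
          = t • (w : Lp (Euc d) 2 (μ.prod μ)) := rfl
      rw [hco]
      refine (Lp.coeFn_smul _ _).trans ?_
      filter_upwards [wrep_ae w.2] with p e1
      simp only [Pi.smul_apply, e1, smul_sub]
    rw [Fval_eq hμ0 hR (t • w).2 (h1m.const_smul t) hsm, phi0_smul]
    simp [smul_eq_mul]

set_option maxHeartbeats 1000000 in
lemma exists_dual_q (hμ0 : μ ≠ 0) {R : ℝ} (hR0 : 0 ≤ R) (hR : ∀ᵐ x ∂μ, ‖x‖ ≤ R) :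
    ∃ q2 : Euc d → Euc d → Euc d,
      StronglyMeasurable (fun p : Euc d × Euc d => q2 p.1 p.2) ∧
      (∀ x y, q2 x y = - q2 y x) ∧
      (∀ᵐ p : Euc d × Euc d ∂μ.prod μ, ‖q2 p.1 p.2‖ ≤ lambda1 μ) ∧
      (∀ᵐ x ∂μ, ∫ y, q2 x y ∂μ = x - muCentroid μ Set.univ) := by
  classical
  have hlnn : 0 ≤ lambda1 μ := lambda1_nonneg hμ0 hR0 hR
  have hmin := isSONMin_at_lambda1 hμ0 hR0 hR
  have hvar : ∀ v : Euc d → Euc d, MemLp v 2 μ →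
      phi0 μ v ≤ lambda1 μ * ∫ x, ∫ y, ‖v x - v y‖ ∂μ ∂μ :=
    fun v hv => variational hμ0 hR hmin hv
  -- the sublinear functional
  set N : Lp (Euc d) 2 (μ.prod μ) → ℝ :=
    fun h => lambda1 μ * ∫ p, ‖h p‖ ∂(μ.prod μ) with hNdef
  have hN_int : ∀ h : Lp (Euc d) 2 (μ.prod μ),
      Integrable (fun p => ‖h p‖) (μ.prod μ) :=
    fun h => ((Lp.memLp h).integrable one_le_two).norm
  have hN_hom : ∀ t : ℝ, 0 < t → ∀ h : Lp (Euc d) 2 (μ.prod μ), N (t • h) = t * N h := by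
    intro t ht h
    have h1 : ∫ p, ‖(t • h : Lp (Euc d) 2 (μ.prod μ)) p‖ ∂(μ.prod μ)
        = t * ∫ p, ‖h p‖ ∂(μ.prod μ) := by
      rw [← integral_const_mul]
      refine integral_congr_ae ?_
      filter_upwards [Lp.coeFn_smul t h] with p hp
      rw [hp, Pi.smul_apply, norm_smul, Real.norm_eq_abs, abs_of_pos ht]
    rw [hNdef]; simp only
    rw [h1]; ring
  have hN_add : ∀ h₁ h₂ : Lp (Euc d) 2 (μ.prod μ), N (h₁ + h₂) ≤ N h₁ + N h₂ := by
    intro h₁ h₂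
    rw [hNdef]; simp only
    rw [← mul_add, ← integral_add (hN_int h₁) (hN_int h₂)]
    refine mul_le_mul_of_nonneg_left ?_ hlnn
    refine integral_mono_ae (hN_int _) ((hN_int h₁).add (hN_int h₂)) ?_
    filter_upwards [Lp.coeFn_add h₁ h₂] with p hp
    rw [hp, Pi.add_apply]
    exact norm_add_le _ _
  have hdom : ∀ w : Wsub μ, Fmap hμ0 hR w ≤ N ↑w := by
    intro w
    have h1m := wrep_memℒp w.2
    have h1e := wrep_ae w.2
    have hTint : Integrable
        (fun p : Euc d × Euc d => wrep w.2 p.1 - wrep w.2 p.2) (μ.prod μ) :=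
      (integrable_fst h1m).sub (integrable_snd h1m)
    have hdb : ∫ x, ∫ y, ‖wrep w.2 x - wrep w.2 y‖ ∂μ ∂μ
        = ∫ p : Euc d × Euc d, ‖wrep w.2 p.1 - wrep w.2 p.2‖ ∂(μ.prod μ) :=
      integral_integral (f := fun x y => ‖wrep w.2 x - wrep w.2 y‖) hTint.norm
    have hNw : N ↑w = lambda1 μ *
        ∫ p : Euc d × Euc d, ‖wrep w.2 p.1 - wrep w.2 p.2‖ ∂(μ.prod μ) := by
      rw [hNdef]; simp only
      congr 1
      refine integral_congr_ae ?_
      filter_upwards [h1e] with p hp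
      rw [hp]
    have h2 := hvar (wrep w.2) h1m
    rw [hdb] at h2
    rw [hNw]
    exact h2
  obtain ⟨g, hg_eq, hg_le⟩ :=
    exists_extension_of_le_sublinear ⟨Wsub μ, Fmap hμ0 hR⟩ N hN_hom hN_add hdom
  -- continuity of g
  set oneL : Lp ℝ 2 (μ.prod μ) := (memLp_const (1:ℝ)).toLp _ with honeL
  have hCS : ∀ h : Lp (Euc d) 2 (μ.prod μ),
      ∫ p, ‖h p‖ ∂(μ.prod μ) ≤ ‖oneL‖ * ‖h‖ := by
    intro h
    set nL : Lp ℝ 2 (μ.prod μ) := ((Lp.memLp h).norm).toLp _ with hnL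
    have hinner : ⟪nL, oneL⟫ = ∫ p, ‖h p‖ ∂(μ.prod μ) := by
      rw [L2.inner_def]
      refine integral_congr_ae ?_
      filter_upwards [MemLp.coeFn_toLp ((Lp.memLp h).norm),
        MemLp.coeFn_toLp (memLp_const (1:ℝ))] with p h1 h2
      rw [h1, h2]
      simp [RCLike.inner_apply]
    have hnorm : ‖nL‖ = ‖h‖ := by
      rw [hnL, Lp.norm_toLp, Lp.norm_def, eLpNorm_norm]
    calc ∫ p, ‖h p‖ ∂(μ.prod μ) = ⟪nL, oneL⟫ := hinner.symm
      _ ≤ ‖nL‖ * ‖oneL‖ := real_inner_le_norm _ _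
      _ = ‖oneL‖ * ‖h‖ := by rw [hnorm]; ring
  have hgb : ∀ h : Lp (Euc d) 2 (μ.prod μ),
      ‖g h‖ ≤ (lambda1 μ * ‖oneL‖) * ‖h‖ := by
    intro h
    have hNh : N h ≤ (lambda1 μ * ‖oneL‖) * ‖h‖ := by
      rw [hNdef]; simp only
      rw [mul_assoc]
      exact mul_le_mul_of_nonneg_left (hCS h) hlnn
    have hNneg : N (-h) = N h := by
      rw [hNdef]; simp only
      congr 1
      refine integral_congr_ae ?_
      filter_upwards [Lp.coeFn_neg h] with p hp
      rw [hp, Pi.neg_apply, norm_neg]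
    rw [Real.norm_eq_abs, abs_le]
    constructor
    · have h1 := hg_le (-h)
      rw [map_neg, hNneg] at h1
      linarith [hNh]
    · exact (hg_le h).trans hNh
  set G := g.mkContinuous _ hgb with hG
  set Qe := (InnerProductSpace.toDual ℝ (Lp (Euc d) 2 (μ.prod μ))).symm G with hQe
  have hQinner : ∀ fh : Lp (Euc d) 2 (μ.prod μ), ⟪Qe, fh⟫ = g fh := by
    intro fh
    rw [hQe]
    exact InnerProductSpace.toDual_symm_apply
  set qfun := (Lp.aestronglyMeasurable Qe).mk _ with hqfun
  have hqsm : StronglyMeasurable qfun := (Lp.aestronglyMeasurable Qe).stronglyMeasurable_mk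
  have hqae : (Qe : Euc d × Euc d → Euc d) =ᵐ[μ.prod μ] qfun :=
    (Lp.aestronglyMeasurable Qe).ae_eq_mk
  have hqmem : MemLp qfun 2 (μ.prod μ) := (Lp.memLp Qe).ae_eq hqae
  -- pointwise bound on qfun
  have hbound : ∀ᵐ p ∂μ.prod μ, ‖qfun p‖ ≤ lambda1 μ := by
    set Aset : Set (Euc d × Euc d) := {p | lambda1 μ < ‖qfun p‖} with hAset
    have hAmeas : MeasurableSet Aset :=
      measurableSet_lt measurable_const hqsm.norm.measurable
    set fA := Aset.indicator qfun with hfA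
    have hfA_mem : MemLp fA 2 (μ.prod μ) := hqmem.indicator hAmeas
    set fL := hfA_mem.toLp _ with hfL
    have hco : (fL : Euc d × Euc d → Euc d) =ᵐ[μ.prod μ] fA := hfA_mem.coeFn_toLp
    set s₁ : Euc d × Euc d → ℝ := fun p => ‖fA p‖ ^ 2 with hs₁
    set s₂ : Euc d × Euc d → ℝ := fun p => ‖fA p‖ with hs₂
    have I₁ : Integrable s₁ (μ.prod μ) := integrable_normsq hfA_mem
    have I₂ : Integrable s₂ (μ.prod μ) := (hfA_mem.integrable one_le_two).norm
    have comp1 : ⟪Qe, fL⟫ = ∫ p, s₁ p ∂(μ.prod μ) := by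
      rw [L2.inner_def]
      refine integral_congr_ae ?_
      filter_upwards [hqae, hco] with p h1 h2
      rw [h1, h2]
      by_cases hp : p ∈ Aset
      · simp only [hfA, Set.indicator_of_mem hp, hs₁]
        rw [real_inner_self_eq_norm_sq]
      · simp only [hfA, Set.indicator_of_notMem hp, hs₁]
        simp
    have comp2 : g fL ≤ lambda1 μ * ∫ p, s₂ p ∂(μ.prod μ) := by
      refine (hg_le fL).trans ?_
      rw [hNdef]; simp only
      refine mul_le_mul_of_nonneg_left (le_of_eq ?_) hlnn
      refine integral_congr_ae ?_
      filter_upwards [hco] with p hp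
      rw [hp]
    have hdiff : ∫ p, (s₁ p - lambda1 μ * s₂ p) ∂(μ.prod μ) ≤ 0 := by
      rw [integral_sub I₁ (I₂.const_mul _), integral_const_mul]
      have h2 : ∫ p, s₁ p ∂(μ.prod μ) ≤ lambda1 μ * ∫ p, s₂ p ∂(μ.prod μ) := by
        rw [← comp1, hQinner fL]
        exact comp2
      linarith
    have hnonneg : ∀ p, 0 ≤ s₁ p - lambda1 μ * s₂ p := by
      intro p
      by_cases hp : p ∈ Aset
      · have h1 : lambda1 μ < ‖qfun p‖ := hp
        simp only [hs₁, hs₂, hfA, Set.indicator_of_mem hp]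
        nlinarith [norm_nonneg (qfun p)]
      · simp only [hs₁, hs₂, hfA, Set.indicator_of_notMem hp]
        simp
    have hzero : (fun p => s₁ p - lambda1 μ * s₂ p) =ᵐ[μ.prod μ] 0 := by
      have heq : ∫ p, (s₁ p - lambda1 μ * s₂ p) ∂(μ.prod μ) = 0 :=
        le_antisymm hdiff (integral_nonneg hnonneg)
      exact (integral_eq_zero_iff_of_nonneg hnonneg
        (I₁.sub (I₂.const_mul _))).1 heq
    have hAnull : (μ.prod μ) Aset = 0 := by
      have hsub : Aset ⊆ {p | ¬ (s₁ p - lambda1 μ * s₂ p = 0)} := by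
        intro p hp
        have h1 : lambda1 μ < ‖qfun p‖ := hp
        simp only [Set.mem_setOf_eq, hs₁, hs₂, hfA, Set.indicator_of_mem hp]
        nlinarith [norm_nonneg (qfun p)]
      exact measure_mono_null hsub hzero
    rw [ae_iff]
    convert hAnull using 2
    ext p
    simp [hAset, not_le]
  -- representation property
  have hrep : ∀ v : Euc d → Euc d, MemLp v 2 μ →
      ∫ p, ⟪qfun p, v p.1 - v p.2⟫ ∂(μ.prod μ) = phi0 μ v := by
    intro v hv
    have hTmem : MemLp (fun p : Euc d × Euc d => v p.1 - v p.2) 2 (μ.prod μ) :=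
      (memℒp_fst hv).sub (memℒp_snd hv)
    set TvL := hTmem.toLp _ with hTvL
    have hTco : (TvL : Euc d × Euc d → Euc d)
        =ᵐ[μ.prod μ] fun p => v p.1 - v p.2 := hTmem.coeFn_toLp
    have hTW : TvL ∈ Wsub μ := ⟨v, hv, hTco⟩
    have h1 : g TvL = phi0 μ v := by
      have h2 := hg_eq ⟨TvL, hTW⟩
      have h3 : Fmap hμ0 hR ⟨TvL, hTW⟩ = phi0 μ v := Fval_eq hμ0 hR hTW hv hTco
      rw [← h3]
      exact h2
    rw [← h1, ← hQinner TvL, L2.inner_def]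
    refine integral_congr_ae ?_
    filter_upwards [hqae, hTco] with p e1 e2
    rw [e1, e2]
  -- symmetrization
  set q2 : Euc d → Euc d → Euc d :=
    fun x y => (2⁻¹ : ℝ) • (qfun (x, y) - qfun (y, x)) with hq2
  have hq2anti : ∀ x y, q2 x y = - q2 y x := by
    intro x y
    show (2⁻¹ : ℝ) • (qfun (x, y) - qfun (y, x))
      = -((2⁻¹ : ℝ) • (qfun (y, x) - qfun (x, y)))
    rw [← smul_neg, neg_sub]
  have hq2sm : StronglyMeasurable (fun p : Euc d × Euc d => q2 p.1 p.2) := by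
    have h1 : (fun p : Euc d × Euc d => q2 p.1 p.2)
        = fun p : Euc d × Euc d => (2⁻¹ : ℝ) • (qfun p - qfun p.swap) := rfl
    rw [h1]
    exact ((hqsm.sub (hqsm.comp_measurable measurable_swap)).const_smul (2⁻¹ : ℝ))
  have hswap_bd : ∀ᵐ p : Euc d × Euc d ∂μ.prod μ, ‖qfun p.swap‖ ≤ lambda1 μ :=
    (Measure.measurePreserving_swap (μ := μ) (ν := μ)).quasiMeasurePreserving.ae hbound
  have hq2b : ∀ᵐ p : Euc d × Euc d ∂μ.prod μ, ‖q2 p.1 p.2‖ ≤ lambda1 μ := by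
    filter_upwards [hbound, hswap_bd] with p h1 h2
    have h3 : q2 p.1 p.2 = (2⁻¹ : ℝ) • (qfun p - qfun p.swap) := rfl
    rw [h3, norm_smul, Real.norm_eq_abs]
    have h4 : ‖qfun p - qfun p.swap‖ ≤ 2 * lambda1 μ :=
      (norm_sub_le _ _).trans (by linarith)
    rw [abs_of_pos (by norm_num : (0:ℝ) < 2⁻¹)]
    linarith
  refine ⟨q2, hq2sm, hq2anti, hq2b, ?_⟩
  -- derive the constraint from the representation identity
  have hanti2 : ∀ᵐ p : Euc d × Euc d ∂μ.prod μ,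
      (fun p : Euc d × Euc d => q2 p.1 p.2) p
        = - (fun p : Euc d × Euc d => q2 p.1 p.2) p.swap :=
    Eventually.of_forall fun p => hq2anti p.1 p.2
  have hq2aesm : AEStronglyMeasurable (fun p : Euc d × Euc d => q2 p.1 p.2) (μ.prod μ) :=
    hq2sm.aestronglyMeasurable
  have hrep2 : ∀ v : Euc d → Euc d, MemLp v 2 μ →
      ∫ p, ⟪q2 p.1 p.2, v p.1 - v p.2⟫ ∂(μ.prod μ) = phi0 μ v := by
    intro v hv
    have hTint : Integrable (fun p : Euc d × Euc d => v p.1 - v p.2) (μ.prod μ) :=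
      (integrable_fst hv).sub (integrable_snd hv)
    have hI1 : Integrable (fun p : Euc d × Euc d => ⟪qfun p, v p.1 - v p.2⟫) (μ.prod μ) :=
      integrable_inner_of_bound hqsm.aestronglyMeasurable hbound hTint
    have hI2 : Integrable (fun p : Euc d × Euc d => ⟪qfun p.swap, v p.1 - v p.2⟫)
        (μ.prod μ) :=
      integrable_inner_of_bound
        ((hqsm.comp_measurable measurable_swap).aestronglyMeasurable) hswap_bd hTint
    have hsplit : ∫ p, ⟪q2 p.1 p.2, v p.1 - v p.2⟫ ∂(μ.prod μ)
        = (2⁻¹ : ℝ) * (∫ p, ⟪qfun p, v p.1 - v p.2⟫ ∂(μ.prod μ)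
            - ∫ p, ⟪qfun p.swap, v p.1 - v p.2⟫ ∂(μ.prod μ)) := by
      rw [← integral_sub hI1 hI2, ← integral_const_mul]
      refine integral_congr_ae (Eventually.of_forall fun p => ?_)
      show ⟪(2⁻¹ : ℝ) • (qfun p - qfun p.swap), v p.1 - v p.2⟫
        = 2⁻¹ * (⟪qfun p, v p.1 - v p.2⟫ - ⟪qfun p.swap, v p.1 - v p.2⟫)
      rw [real_inner_smul_left, inner_sub_left]
    have hswapint : ∫ p, ⟪qfun p.swap, v p.1 - v p.2⟫ ∂(μ.prod μ)
        = - ∫ p, ⟪qfun p, v p.1 - v p.2⟫ ∂(μ.prod μ) := by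
      have h1 : ∫ p : Euc d × Euc d, ⟪qfun p.swap, v p.1 - v p.2⟫ ∂(μ.prod μ)
          = ∫ p : Euc d × Euc d, ⟪qfun p, v p.2 - v p.1⟫ ∂(μ.prod μ) :=
        integral_prod_swap (fun z : Euc d × Euc d => ⟪qfun z, v z.2 - v z.1⟫)
      rw [h1, ← integral_neg]
      refine integral_congr_ae (Eventually.of_forall fun p => ?_)
      show ⟪qfun p, v p.2 - v p.1⟫ = -⟪qfun p, v p.1 - v p.2⟫
      rw [show v p.2 - v p.1 = -(v p.1 - v p.2) by abel, inner_neg_right]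
    rw [hsplit, hswapint, hrep v hv]
    ring
  have hslice_bd : ∀ᵐ x ∂μ, ∀ᵐ y ∂μ, ‖q2 x y‖ ≤ lambda1 μ :=
    Measure.ae_ae_of_ae_prod hq2b
  have hq2slice_sm : ∀ x : Euc d, StronglyMeasurable (fun y => q2 x y) :=
    fun x => hq2sm.comp_measurable measurable_prodMk_left
  have hIbd : ∀ᵐ x ∂μ, ‖∫ y, q2 x y ∂μ‖ ≤ lambda1 μ * (μ Set.univ).toReal := by
    filter_upwards [hslice_bd] with x hx
    calc ‖∫ y, q2 x y ∂μ‖ ≤ ∫ y, ‖q2 x y‖ ∂μ := norm_integral_le_integral_norm _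
      _ ≤ ∫ _, lambda1 μ ∂μ := by
          refine integral_mono_ae ?_ (integrable_const _) hx
          refine Integrable.mono' (integrable_const (lambda1 μ))
            (hq2slice_sm x).norm.aestronglyMeasurable ?_
          filter_upwards [hx] with y hy
          simpa using hy
      _ = lambda1 μ * (μ Set.univ).toReal := by
          rw [integral_const, smul_eq_mul, measureReal_def]; ring
  set Bf : Euc d → Euc d :=
    fun x => (∫ y, q2 x y ∂μ) - (x - muCentroid μ Set.univ) with hBf
  have hIntMeas : StronglyMeasurable (fun x : Euc d => ∫ y, q2 x y ∂μ) :=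
    hq2sm.integral_prod_right'
  have hBmeas : AEStronglyMeasurable Bf μ :=
    hIntMeas.aestronglyMeasurable.sub
      (aestronglyMeasurable_id.sub aestronglyMeasurable_const)
  have hBbd : ∀ᵐ x ∂μ, ‖Bf x‖
      ≤ lambda1 μ * (μ Set.univ).toReal + (R + ‖muCentroid μ Set.univ‖) := by
    filter_upwards [hIbd, hR] with x h1 h2
    refine (norm_sub_le _ _).trans ?_
    have h3 : ‖x - muCentroid μ Set.univ‖ ≤ R + ‖muCentroid μ Set.univ‖ :=
      (norm_sub_le _ _).trans (by linarith)
    linarith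
  have hBmem : MemLp Bf 2 μ := MemLp.of_bound hBmeas _ hBbd
  have hBrep : ∀ v : Euc d → Euc d, MemLp v 2 μ → ∫ x, ⟪Bf x, v x⟫ ∂μ = 0 := by
    intro v hv
    have h1 := hrep2 v hv
    rw [antisym_reduce hq2aesm hq2b hanti2 hv, fubini_inner hq2aesm hq2b hv] at h1
    have Ia : Integrable (fun x => ⟪∫ y, q2 x y ∂μ, v x⟫) μ :=
      integrable_inner_of_bound hIntMeas.aestronglyMeasurable hIbd
        (hv.integrable one_le_two)
    have Ib : Integrable (fun x => ⟪x - muCentroid μ Set.univ, v x⟫) μ :=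
      integrable_inner_ctr hR (hv.integrable one_le_two)
    have h2 : ∫ x, ⟪Bf x, v x⟫ ∂μ
        = ∫ x, ⟪∫ y, q2 x y ∂μ, v x⟫ ∂μ
          - ∫ x, ⟪x - muCentroid μ Set.univ, v x⟫ ∂μ := by
      rw [← integral_sub Ia Ib]
      refine integral_congr_ae (Eventually.of_forall fun x => ?_)
      show ⟪(∫ y, q2 x y ∂μ) - (x - muCentroid μ Set.univ), v x⟫
        = ⟪∫ y, q2 x y ∂μ, v x⟫ - ⟪x - muCentroid μ Set.univ, v x⟫
      rw [inner_sub_left]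
    rw [h2]
    have h3 : phi0 μ v = 2 * ∫ x, ⟪x - muCentroid μ Set.univ, v x⟫ ∂μ := rfl
    rw [h3] at h1
    linarith
  have hB0 : Bf =ᵐ[μ] 0 := by
    have h1 := hBrep Bf hBmem
    have h2 : ∫ x, ‖Bf x‖ ^ 2 ∂μ = 0 := by
      rw [← h1]
      refine integral_congr_ae (Eventually.of_forall fun x => ?_)
      show ‖Bf x‖ ^ 2 = ⟪Bf x, Bf x⟫
      exact (real_inner_self_eq_norm_sq _).symm
    have h3 : (fun x => ‖Bf x‖ ^ 2) =ᵐ[μ] 0 :=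
      (integral_eq_zero_iff_of_nonneg (fun x => sq_nonneg _)
        (integrable_normsq hBmem)).1 h2
    filter_upwards [h3] with x hx
    have h4 : ‖Bf x‖ ^ 2 = 0 := hx
    have h5 : ‖Bf x‖ = 0 := by nlinarith [norm_nonneg (Bf x)]
    simpa [norm_eq_zero] using h5
  filter_upwards [hB0] with x hx
  have h6 : (∫ y, q2 x y ∂μ) - (x - muCentroid μ Set.univ) = 0 := hx
  exact sub_eq_zero.1 h6

end Stmt7Aux

/-- **Theorem (dual characterization of `λ₁`).**
`λ₁(μ) = μ(ℝ^d)⁻¹ · min_{q ∈ Q(μ)} ‖q‖_{L^∞(μ⊗μ)}`, the minimum being attained. -/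
theorem stmt7
    (d : ℕ) (μ : Measure (Euc d)) [IsFiniteMeasure μ] (hμ0 : μ ≠ 0)
    (hsupp : ∃ K : Set (Euc d), IsCompact K ∧ μ Kᶜ = 0) :
    ∃ q : Euc d → Euc d → Euc d, QsetMem μ q ∧
      lambda1 μ = (μ Set.univ).toReal⁻¹ *
        (eLpNorm (fun p : Euc d × Euc d => q p.1 p.2) ⊤ (μ.prod μ)).toReal ∧
      ∀ q' : Euc d → Euc d → Euc d, QsetMem μ q' →
        eLpNorm (fun p : Euc d × Euc d => q p.1 p.2) ⊤ (μ.prod μ) ≤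
          eLpNorm (fun p : Euc d × Euc d => q' p.1 p.2) ⊤ (μ.prod μ) := by
  classical
  obtain ⟨R, hR0, hR⟩ := Stmt7Aux.exists_bound hsupp
  set M := (μ Set.univ).toReal with hM
  have hMpos : 0 < M := Stmt7Aux.measM_pos hμ0
  have hlnn : 0 ≤ lambda1 μ := Stmt7Aux.lambda1_nonneg hμ0 hR0 hR
  obtain ⟨q2, hq2sm, hq2anti, hq2b, hq2constr⟩ := Stmt7Aux.exists_dual_q hμ0 hR0 hR
  set q : Euc d → Euc d → Euc d := fun x y => M • q2 x y with hq
  have hfm : AEStronglyMeasurable (fun p : Euc d × Euc d => q p.1 p.2) (μ.prod μ) :=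
    (hq2sm.const_smul M).aestronglyMeasurable
  have hfb : ∀ᵐ p ∂μ.prod μ, ‖q p.1 p.2‖ ≤ lambda1 μ * M := by
    filter_upwards [hq2b] with p hp
    show ‖M • q2 p.1 p.2‖ ≤ _
    rw [norm_smul, Real.norm_eq_abs, abs_of_pos hMpos]
    calc M * ‖q2 p.1 p.2‖ ≤ M * lambda1 μ := mul_le_mul_of_nonneg_left hp hMpos.le
      _ = lambda1 μ * M := mul_comm _ _
  have hQmem : QsetMem μ q := by
    refine ⟨memLp_top_of_bound hfm _ hfb, ?_, ?_⟩
    · refine Eventually.of_forall fun p => ?_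
      show M • q2 p.1 p.2 = -(M • q2 p.2 p.1)
      rw [hq2anti p.1 p.2, smul_neg]
    · filter_upwards [hq2constr] with x hx
      rw [average_eq]
      show x - muCentroid μ Set.univ = M⁻¹ • ∫ z, M • q2 x z ∂μ
      rw [integral_smul, smul_smul, inv_mul_cancel₀ hMpos.ne', one_smul, hx]
  set Λ := eLpNorm (fun p : Euc d × Euc d => q p.1 p.2) ⊤ (μ.prod μ) with hΛ
  have hΛub : Λ ≤ ENNReal.ofReal (lambda1 μ * M) := by
    rw [hΛ, eLpNorm_exponent_top]
    exact eLpNormEssSup_le_of_ae_bound hfb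
  have hΛub' : Λ.toReal ≤ lambda1 μ * M :=
    ENNReal.toReal_le_of_le_ofReal (mul_nonneg hlnn hMpos.le) hΛub
  have hlow : lambda1 μ ≤ M⁻¹ * Λ.toReal :=
    Stmt7Aux.lambda1_le_of_QsetMem hμ0 hR0 hR hQmem
  have heq : lambda1 μ = M⁻¹ * Λ.toReal := by
    refine le_antisymm hlow ?_
    calc M⁻¹ * Λ.toReal ≤ M⁻¹ * (lambda1 μ * M) :=
          mul_le_mul_of_nonneg_left hΛub' (inv_nonneg.2 hMpos.le)
      _ = lambda1 μ := by field_simp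
  have hΛne : Λ ≠ ⊤ := (hΛub.trans_lt ENNReal.ofReal_lt_top).ne
  refine ⟨q, hQmem, heq, ?_⟩
  intro q' hq'
  have hlow' := Stmt7Aux.lambda1_le_of_QsetMem hμ0 hR0 hR hq'
  set Λ' := eLpNorm (fun p : Euc d × Euc d => q' p.1 p.2) ⊤ (μ.prod μ) with hΛ'
  have hΛ'ne : Λ' ≠ ⊤ := hq'.1.2.ne
  have h1 : lambda1 μ * M ≤ Λ'.toReal := by
    calc lambda1 μ * M ≤ (M⁻¹ * Λ'.toReal) * M :=
          mul_le_mul_of_nonneg_right hlow' hMpos.le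
      _ = Λ'.toReal := by field_simp
  exact (ENNReal.toReal_le_toReal hΛne hΛ'ne).1 (le_trans hΛub' h1)
end
end

section
/- (KKT characterization of the minimizer) Let μ be a nonzero finite Borel measure on ℝ^d with compact support, λ ≥ 0, and u ∈ L²(μ;ℝ^d). Then u = u_{μ,λ} if and only if there exists w ∈ L^∞(μ⊗μ; ℝ^d) such that, for μ-a.e. x, y ∈ ℝ^d: w(x,y) = −w(y,x); if u(x) ≠ u(y) then w(x,y) = sgn(u(x)−u(y)); |w(x,y)| ≤ 1; and x − u(x) = λ ∫ w(x,z) dμ(z). -/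
open MeasureTheory Filter Topology ProbabilityTheory
open scoped ENNReal NNReal symmDiff Classical RealInnerProductSpace

noncomputable section

/-- `sgn(z) = z / |z|` (junk value `0` at `z = 0`). -/
def sgnE {d : ℕ} (z : Euc d) : Euc d := ‖z‖⁻¹ • z

/-! ### Infrastructure -/

section Infra

variable {d : ℕ}

lemma sgnE_neg (z : Euc d) : sgnE (-z) = - sgnE z := by
  simp [sgnE]

lemma norm_sgnE_le (z : Euc d) : ‖sgnE z‖ ≤ 1 := by
  rcases eq_or_ne z 0 with h | h
  · simp [sgnE, h]
  · rw [sgnE, norm_smul, norm_inv, norm_norm, inv_mul_cancel₀ (norm_ne_zero_iff.2 h)]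

lemma inner_sgnE (z : Euc d) : ⟪sgnE z, z⟫ = ‖z‖ := by
  rcases eq_or_ne z 0 with h | h
  · simp [sgnE, h]
  · rw [sgnE, real_inner_smul_left, real_inner_self_eq_norm_sq]
    have : ‖z‖ ≠ 0 := norm_ne_zero_iff.2 h
    field_simp

lemma measurable_sgnE : Measurable (sgnE : Euc d → Euc d) :=
  (measurable_norm.inv).smul measurable_id

variable {μ : Measure (Euc d)} [IsFiniteMeasure μ]

lemma ae_prod_fst {P : Euc d → Prop} (h : ∀ᵐ x ∂μ, P x) :
    ∀ᵐ p ∂(μ.prod μ), P p.1 :=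
  Measure.quasiMeasurePreserving_fst.ae h

lemma ae_prod_snd {P : Euc d → Prop} (h : ∀ᵐ x ∂μ, P x) :
    ∀ᵐ p ∂(μ.prod μ), P p.2 :=
  Measure.quasiMeasurePreserving_snd.ae h

lemma ae_swap {P : Euc d × Euc d → Prop} (h : ∀ᵐ p ∂(μ.prod μ), P p) :
    ∀ᵐ p ∂(μ.prod μ), P p.swap :=
  (Measure.measurePreserving_swap).quasiMeasurePreserving.ae h

lemma memℒp_fst {f : Euc d → Euc d} {p : ℝ≥0∞} (hf : MemLp f p μ) :
    MemLp (fun q : Euc d × Euc d => f q.1) p (μ.prod μ) := by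
  have h1 : MeasurePreserving Prod.fst (μ.prod μ) ((μ Set.univ) • μ) :=
    ⟨measurable_fst, Measure.map_fst_prod⟩
  exact (hf.smul_measure (measure_ne_top μ _)).comp_measurePreserving h1

lemma memℒp_snd {f : Euc d → Euc d} {p : ℝ≥0∞} (hf : MemLp f p μ) :
    MemLp (fun q : Euc d × Euc d => f q.2) p (μ.prod μ) := by
  have h1 : MeasurePreserving Prod.snd (μ.prod μ) ((μ Set.univ) • μ) :=
    ⟨measurable_snd, Measure.map_snd_prod⟩
  exact (hf.smul_measure (measure_ne_top μ _)).comp_measurePreserving h1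

lemma integrable_sq_norm {f : Euc d → Euc d} (hf : MemLp f 2 μ) :
    Integrable (fun x => ‖f x‖ ^ 2) μ := by
  have h := hf.integrable_norm_rpow (by norm_num) (by norm_num)
  have : (2 : ℝ≥0∞).toReal = ((2 : ℕ) : ℝ) := by norm_num
  simpa [this, Real.rpow_natCast] using h

lemma memL2_id (hsupp : ∃ K : Set (Euc d), IsCompact K ∧ μ Kᶜ = 0) :
    MemLp (fun x : Euc d => x) 2 μ := by
  obtain ⟨K, hK, hKc⟩ := hsupp
  obtain ⟨C, hC⟩ := hK.isBounded.subset_closedBall 0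
  refine MemLp.of_bound aestronglyMeasurable_id C ?_
  have hae : ∀ᵐ x ∂μ, x ∈ K := by
    rw [ae_iff]
    simpa [Set.compl_def] using hKc
  filter_upwards [hae] with x hx
  simpa [mem_closedBall_zero_iff] using hC hx

end Infra
section Infra2

set_option linter.unusedSectionVars false

variable {d : ℕ} {α : Type*} [MeasurableSpace α] {ν : Measure α}

lemma integrable_inner_of_memL2 {f g : α → Euc d} (hf : MemLp f 2 ν) (hg : MemLp g 2 ν) :
    Integrable (fun a => ⟪f a, g a⟫) ν := by
  have h := L2.integrable_inner (𝕜 := ℝ) (hf.toLp f) (hg.toLp g)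
  apply h.congr
  filter_upwards [hf.coeFn_toLp, hg.coeFn_toLp] with a h1 h2
  rw [h1, h2]

variable {μ : Measure (Euc d)} [IsFiniteMeasure μ]

lemma integrable_norm_sub_prod {f g : Euc d → Euc d} (hf : MemLp f 2 μ) (hg : MemLp g 2 μ) :
    Integrable (fun p : Euc d × Euc d => ‖f p.1 - g p.2‖) (μ.prod μ) :=
  (((memℒp_fst hf).sub (memℒp_snd hg)).integrable one_le_two).norm

/-- Expand `SONJ` with a product-measure double integral. -/
lemma sonj_eq {lam : ℝ} {v : Euc d → Euc d} (hv : MemLp v 2 μ) :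
    SONJ μ lam v
      = ∫ x, ‖v x - x‖ ^ 2 ∂μ + lam * ∫ p, ‖v p.1 - v p.2‖ ∂(μ.prod μ) := by
  unfold SONJ
  congr 1
  congr 1
  exact integral_integral (f := fun x y => ‖v x - v y‖) (integrable_norm_sub_prod hv hv)

end Infra2
section Backward

variable {d : ℕ} {μ : Measure (Euc d)} [IsFiniteMeasure μ]

lemma isSONMin_of_certificate
    (hsupp : ∃ K : Set (Euc d), IsCompact K ∧ μ Kᶜ = 0)
    {lam : ℝ} (hlam : 0 ≤ lam)
    {u : Euc d → Euc d} (hu2 : MemLp u 2 μ)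
    {w : Euc d → Euc d → Euc d}
    (hwm : AEStronglyMeasurable (fun p : Euc d × Euc d => w p.1 p.2) (μ.prod μ))
    (hanti : ∀ᵐ p ∂μ.prod μ, w p.1 p.2 = -w p.2 p.1)
    (hsgn : ∀ᵐ p ∂μ.prod μ, u p.1 ≠ u p.2 → w p.1 p.2 = sgnE (u p.1 - u p.2))
    (hbd : ∀ᵐ p ∂μ.prod μ, ‖w p.1 p.2‖ ≤ 1)
    (hEL : ∀ᵐ x ∂μ, x - u x = lam • ∫ z, w x z ∂μ) :
    IsSONMin μ lam u := by
  refine ⟨hu2, fun v hv2 => ?_⟩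
  have hid : MemLp (fun x : Euc d => x) 2 μ := memL2_id hsupp
  set g : Euc d → Euc d := fun x => v x - u x with hg_def
  have hg2 : MemLp g 2 μ := hv2.sub hu2
  set W : Euc d × Euc d → Euc d := fun p => w p.1 p.2 with hW_def
  -- integrabilities
  have iu2 : Integrable (fun x => ‖u x - x‖ ^ 2) μ := integrable_sq_norm (hu2.sub hid)
  have iv2 : Integrable (fun x => ‖v x - x‖ ^ 2) μ := integrable_sq_norm (hv2.sub hid)
  have iuu : Integrable (fun p : Euc d × Euc d => ‖u p.1 - u p.2‖) (μ.prod μ) :=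
    integrable_norm_sub_prod hu2 hu2
  have ivv : Integrable (fun p : Euc d × Euc d => ‖v p.1 - v p.2‖) (μ.prod μ) :=
    integrable_norm_sub_prod hv2 hv2
  have iW : Integrable W (μ.prod μ) :=
    (MemLp.of_bound hwm 1 hbd).integrable one_le_two
  have igg1 : Integrable (fun p : Euc d × Euc d => ‖g p.1‖) (μ.prod μ) :=
    ((memℒp_fst hg2).integrable one_le_two).norm
  have igg2 : Integrable (fun p : Euc d × Euc d => ‖g p.2‖) (μ.prod μ) :=
    ((memℒp_snd hg2).integrable one_le_two).norm
  have iWg1 : Integrable (fun p : Euc d × Euc d => ⟪W p, g p.1⟫) (μ.prod μ) := by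
    refine Integrable.mono' igg1 (hwm.inner (memℒp_fst hg2).aestronglyMeasurable) ?_
    filter_upwards [hbd] with p hp
    calc ‖⟪W p, g p.1⟫‖ ≤ ‖W p‖ * ‖g p.1‖ := norm_inner_le_norm _ _
    _ ≤ 1 * ‖g p.1‖ := by gcongr
    _ = ‖g p.1‖ := one_mul _
  have iWg2 : Integrable (fun p : Euc d × Euc d => ⟪W p, g p.2⟫) (μ.prod μ) := by
    refine Integrable.mono' igg2 (hwm.inner (memℒp_snd hg2).aestronglyMeasurable) ?_
    filter_upwards [hbd] with p hp
    calc ‖⟪W p, g p.2⟫‖ ≤ ‖W p‖ * ‖g p.2‖ := norm_inner_le_norm _ _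
    _ ≤ 1 * ‖g p.2‖ := by gcongr
    _ = ‖g p.2‖ := one_mul _
  have iug : Integrable (fun x => ⟪u x - x, g x⟫) μ :=
    integrable_inner_of_memL2 (hu2.sub hid) hg2
  -- pointwise inequalities
  have key1 : ∀ x, ‖u x - x‖ ^ 2 + 2 * ⟪u x - x, g x⟫ ≤ ‖v x - x‖ ^ 2 := by
    intro x
    have hvx : v x - x = (u x - x) + g x := by simp only [hg_def]; abel
    rw [hvx, norm_add_sq_real]
    nlinarith [sq_nonneg ‖g x‖]
  have key2 : ∀ᵐ p ∂(μ.prod μ),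
      ‖u p.1 - u p.2‖ + ⟪W p, g p.1 - g p.2⟫ ≤ ‖v p.1 - v p.2‖ := by
    filter_upwards [hsgn, hbd] with p h1 h2
    have hdec : v p.1 - v p.2 = (u p.1 - u p.2) + (g p.1 - g p.2) := by
      simp only [hg_def]; abel
    have hWu : ⟪W p, u p.1 - u p.2⟫ = ‖u p.1 - u p.2‖ := by
      rcases eq_or_ne (u p.1) (u p.2) with he | he
      · simp [he]
      · have hWp : W p = sgnE (u p.1 - u p.2) := h1 he
        rw [hWp]; exact inner_sgnE _
    have hWv : ⟪W p, v p.1 - v p.2⟫ ≤ ‖v p.1 - v p.2‖ := by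
      calc ⟪W p, v p.1 - v p.2⟫ ≤ ‖W p‖ * ‖v p.1 - v p.2‖ := real_inner_le_norm _ _
      _ ≤ 1 * ‖v p.1 - v p.2‖ := by gcongr
      _ = _ := one_mul _
    rw [hdec] at hWv ⊢
    rw [inner_add_right] at hWv
    linarith
  -- integrated inequalities
  have main1 : ∫ x, ‖u x - x‖ ^ 2 ∂μ + 2 * ∫ x, ⟪u x - x, g x⟫ ∂μ
      ≤ ∫ x, ‖v x - x‖ ^ 2 ∂μ := by
    have h := integral_mono_ae (iu2.add (iug.const_mul 2)) iv2 (ae_of_all _ key1)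
    simp only [Pi.add_apply] at h
    rwa [integral_add iu2 (iug.const_mul 2), integral_const_mul] at h
  have iWgg : Integrable (fun p : Euc d × Euc d => ⟪W p, g p.1 - g p.2⟫) (μ.prod μ) := by
    have he : (fun p : Euc d × Euc d => ⟪W p, g p.1 - g p.2⟫)
        = fun p => ⟪W p, g p.1⟫ - ⟪W p, g p.2⟫ := by
      funext p; rw [inner_sub_right]
    rw [he]; exact iWg1.sub iWg2
  have main2 : ∫ p, ‖u p.1 - u p.2‖ ∂(μ.prod μ) + ∫ p, ⟪W p, g p.1 - g p.2⟫ ∂(μ.prod μ)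
      ≤ ∫ p, ‖v p.1 - v p.2‖ ∂(μ.prod μ) := by
    have h := integral_mono_ae (iuu.add iWgg) ivv key2
    simp only [Pi.add_apply] at h
    rwa [integral_add iuu iWgg] at h
  -- antisymmetry: second slot integral is minus first slot integral
  have hswap : ∫ p, ⟪W p, g p.2⟫ ∂(μ.prod μ) = - ∫ p, ⟪W p, g p.1⟫ ∂(μ.prod μ) := by
    have hs := integral_prod_swap (μ := μ) (ν := μ) (fun p : Euc d × Euc d => ⟪W p, g p.1⟫)
    have hae : (fun z : Euc d × Euc d => ⟪W z, g z.2⟫)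
        =ᵐ[μ.prod μ] fun z => -((fun p : Euc d × Euc d => ⟪W p, g p.1⟫) z.swap) := by
      filter_upwards [hanti] with z hz
      show ⟪w z.1 z.2, g z.2⟫ = -⟪w z.2 z.1, g z.2⟫
      rw [hz, inner_neg_left]
    rw [integral_congr_ae hae, integral_neg, hs]
  have hdouble : ∫ p, ⟪W p, g p.1 - g p.2⟫ ∂(μ.prod μ)
      = 2 * ∫ p, ⟪W p, g p.1⟫ ∂(μ.prod μ) := by
    have he : (fun p : Euc d × Euc d => ⟪W p, g p.1 - g p.2⟫)
        = fun p => ⟪W p, g p.1⟫ - ⟪W p, g p.2⟫ := by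
      funext p; rw [inner_sub_right]
    rw [he, integral_sub iWg1 iWg2, hswap]; ring
  -- Euler-Lagrange
  have hslice : ∀ᵐ x ∂μ, Integrable (fun z => w x z) μ := iW.prod_right_ae
  have hinner : ∀ᵐ x ∂μ, lam * ∫ z, ⟪w x z, g x⟫ ∂μ = - ⟪u x - x, g x⟫ := by
    filter_upwards [hslice, hEL] with x hx hel
    have h1 : ∫ z, ⟪w x z, g x⟫ ∂μ = ⟪∫ z, w x z ∂μ, g x⟫ := by
      calc ∫ z, ⟪w x z, g x⟫ ∂μ = ∫ z, ⟪g x, w x z⟫ ∂μ := by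
            apply integral_congr_ae; filter_upwards with z using real_inner_comm _ _
      _ = ⟪g x, ∫ z, w x z ∂μ⟫ := integral_inner hx (g x)
      _ = _ := real_inner_comm _ _
    rw [h1, ← real_inner_smul_left, ← hel]
    have hxe : x - u x = -(u x - x) := by abel
    rw [hxe, inner_neg_left]
  have hEL2 : lam * ∫ p, ⟪W p, g p.1⟫ ∂(μ.prod μ) = - ∫ x, ⟪u x - x, g x⟫ ∂μ := by
    rw [integral_prod _ iWg1]
    calc lam * ∫ x, ∫ y, ⟪w x y, g x⟫ ∂μ ∂μ
        = ∫ x, lam * ∫ y, ⟪w x y, g x⟫ ∂μ ∂μ := (integral_const_mul _ _).symm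
      _ = ∫ x, -⟪u x - x, g x⟫ ∂μ := integral_congr_ae hinner
      _ = - ∫ x, ⟪u x - x, g x⟫ ∂μ := integral_neg _
  -- assemble
  rw [sonj_eq hu2, sonj_eq hv2]
  have hlam2 := mul_le_mul_of_nonneg_left main2 hlam
  have hexp : lam * (∫ p, ‖u p.1 - u p.2‖ ∂(μ.prod μ) + ∫ p, ⟪W p, g p.1 - g p.2⟫ ∂(μ.prod μ))
      = lam * ∫ p, ‖u p.1 - u p.2‖ ∂(μ.prod μ) - 2 * ∫ x, ⟪u x - x, g x⟫ ∂μ := by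
    rw [hdouble]
    have hr : lam * (∫ p, ‖u p.1 - u p.2‖ ∂(μ.prod μ)
          + 2 * ∫ p, ⟪W p, g p.1⟫ ∂(μ.prod μ))
        = lam * ∫ p, ‖u p.1 - u p.2‖ ∂(μ.prod μ)
          + 2 * (lam * ∫ p, ⟪W p, g p.1⟫ ∂(μ.prod μ)) := by ring
    rw [hr, hEL2]; ring
  rw [hexp] at hlam2
  linarith
end Backward
section Slope

variable {d : ℕ}

lemma inner_sgnE_smul (a b : Euc d) : ⟪sgnE a, b⟫ = ‖a‖⁻¹ * ⟪a, b⟫ := by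
  rw [sgnE, real_inner_smul_left]

/-- Pointwise limit of difference quotients of the norm. -/
lemma tendsto_slope_norm (a b : Euc d) :
    Tendsto (fun n : ℕ => (‖a + ((n : ℝ) + 1)⁻¹ • b‖ - ‖a‖) / ((n : ℝ) + 1)⁻¹) atTop
      (𝓝 (if a = 0 then ‖b‖ else ⟪sgnE a, b⟫)) := by
  have htn : ∀ n : ℕ, (0 : ℝ) < ((n : ℝ) + 1)⁻¹ := fun n => by positivity
  rcases eq_or_ne a 0 with rfl | ha
  · rw [if_pos rfl]
    have : ∀ n : ℕ, (‖(0 : Euc d) + ((n : ℝ) + 1)⁻¹ • b‖ - ‖(0 : Euc d)‖) / ((n : ℝ) + 1)⁻¹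
        = ‖b‖ := by
      intro n
      rw [zero_add, norm_zero, sub_zero, norm_smul, Real.norm_eq_abs,
        abs_of_pos (htn n), mul_comm, mul_div_assoc, div_self (htn n).ne', mul_one]
    simpa only [this] using tendsto_const_nhds
  · rw [if_neg ha]
    -- the function t ↦ ‖a + t • b‖ has derivative ⟪sgnE a, b⟫ at 0
    have hf : HasDerivAt (fun t : ℝ => a + t • b) b 0 := by
      exact ((hasDerivAt_const (0:ℝ) a).add ((hasDerivAt_id (0:ℝ)).smul_const b)).congr_deriv (by simp)
    have hinner : HasDerivAt (fun t : ℝ => ⟪a + t • b, a + t • b⟫)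
        (⟪a + (0:ℝ) • b, b⟫ + ⟪b, a + (0:ℝ) • b⟫) 0 := HasDerivAt.inner ℝ hf hf
    have hinner' : HasDerivAt (fun t : ℝ => ⟪a + t • b, a + t • b⟫) (2 * ⟪a, b⟫) 0 := by
      have : ⟪a + (0:ℝ) • b, b⟫ + ⟪b, a + (0:ℝ) • b⟫ = 2 * ⟪a, b⟫ := by
        rw [zero_smul, add_zero, real_inner_comm b a]; ring
      rwa [this] at hinner
    have haa : ⟪a + (0:ℝ) • b, a + (0:ℝ) • b⟫ = ⟪a, a⟫ := by simp
    have haa_ne : ⟪a + (0:ℝ) • b, a + (0:ℝ) • b⟫ ≠ 0 := by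
      rw [haa]
      exact fun hc => ha (inner_self_eq_zero.mp hc)
    have hsq := (Real.hasDerivAt_sqrt haa_ne).comp 0 hinner'
    have hval : Real.sqrt ⟪a + (0:ℝ) • b, a + (0:ℝ) • b⟫ = ‖a‖ := by
      rw [haa, real_inner_self_eq_norm_sq, Real.sqrt_sq (norm_nonneg _)]
    have hnorm : (fun t : ℝ => Real.sqrt ⟪a + t • b, a + t • b⟫)
        = fun t : ℝ => ‖a + t • b‖ := by
      funext t
      rw [real_inner_self_eq_norm_sq, Real.sqrt_sq (norm_nonneg _)]
    have hderiv : HasDerivAt (fun t : ℝ => ‖a + t • b‖) (⟪sgnE a, b⟫) 0 := by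
      have h1 := hsq
      rw [Function.comp_def, hnorm] at h1
      have h2 : 1 / (2 * Real.sqrt ⟪a + (0:ℝ) • b, a + (0:ℝ) • b⟫) * (2 * ⟪a, b⟫)
          = ⟪sgnE a, b⟫ := by
        rw [hval, inner_sgnE_smul]
        have : ‖a‖ ≠ 0 := norm_ne_zero_iff.2 ha
        field_simp
      rwa [h2] at h1
    have hslope := hasDerivAt_iff_tendsto_slope.mp hderiv
    have hseq : Tendsto (fun n : ℕ => ((n : ℝ) + 1)⁻¹) atTop (𝓝[≠] (0:ℝ)) := by
      apply tendsto_nhdsWithin_of_tendsto_nhds_of_eventually_within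
      · simpa [one_div] using tendsto_one_div_add_atTop_nhds_zero_nat (𝕜 := ℝ)
      · exact Eventually.of_forall fun n => (htn n).ne'
    have hcomp := hslope.comp hseq
    apply hcomp.congr
    intro n
    show slope (fun t : ℝ => ‖a + t • b‖) 0 (((n : ℝ) + 1)⁻¹) = _
    rw [slope_def_field]
    simp

end Slope
section GradIneq

variable {d : ℕ} {μ : Measure (Euc d)} [IsFiniteMeasure μ]

/-- First-order optimality condition for the minimizer. -/
lemma grad_ineq
    (hsupp : ∃ K : Set (Euc d), IsCompact K ∧ μ Kᶜ = 0)
    {lam : ℝ} {u : Euc d → Euc d} (hmin : IsSONMin μ lam u)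
    {h : Euc d → Euc d} (hh2 : MemLp h 2 μ) :
    ∫ x, ⟪x - u x, h x⟫ ∂μ ≤ (lam / 2) *
      ∫ p, (if u p.1 - u p.2 = 0 then ‖h p.1 - h p.2‖
        else ⟪sgnE (u p.1 - u p.2), h p.1 - h p.2⟫) ∂(μ.prod μ) := by
  obtain ⟨hu2, hminle⟩ := hmin
  have hid : MemLp (fun x : Euc d => x) 2 μ := memL2_id hsupp
  set t : ℕ → ℝ := fun n => ((n : ℝ) + 1)⁻¹ with ht_def
  have htpos : ∀ n, 0 < t n := fun n => by positivity
  set Du : Euc d × Euc d → Euc d := fun p => u p.1 - u p.2 with hDu_def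
  set Dh : Euc d × Euc d → Euc d := fun p => h p.1 - h p.2 with hDh_def
  set ψ : Euc d × Euc d → ℝ :=
    fun p => if Du p = 0 then ‖Dh p‖ else ⟪sgnE (Du p), Dh p⟫ with hψ_def
  set q : ℕ → Euc d × Euc d → ℝ :=
    fun n p => (‖Du p + t n • Dh p‖ - ‖Du p‖) / t n with hq_def
  -- measurability of components
  have hDu2 : MemLp Du 2 (μ.prod μ) := (memℒp_fst hu2).sub (memℒp_snd hu2)
  have hDh2 : MemLp Dh 2 (μ.prod μ) := (memℒp_fst hh2).sub (memℒp_snd hh2)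
  have hDhint : Integrable (fun p => ‖Dh p‖) (μ.prod μ) :=
    (hDh2.integrable one_le_two).norm
  -- pointwise convergence
  have hpt : ∀ p, Tendsto (fun n => q n p) atTop (𝓝 (ψ p)) := fun p => by
    simpa [hq_def, hψ_def, ht_def] using tendsto_slope_norm (Du p) (Dh p)
  -- uniform bound
  have hbd : ∀ n p, ‖q n p‖ ≤ ‖Dh p‖ := by
    intro n p
    rw [hq_def]
    have h1 : |‖Du p + t n • Dh p‖ - ‖Du p‖| ≤ ‖t n • Dh p‖ := by
      have := abs_norm_sub_norm_le (Du p + t n • Dh p) (Du p)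
      simpa using this
    rw [Real.norm_eq_abs, abs_div, abs_of_pos (htpos n)]
    rw [div_le_iff₀ (htpos n)]
    calc |‖Du p + t n • Dh p‖ - ‖Du p‖| ≤ ‖t n • Dh p‖ := h1
    _ = t n * ‖Dh p‖ := by rw [norm_smul, Real.norm_eq_abs, abs_of_pos (htpos n)]
    _ = ‖Dh p‖ * t n := mul_comm _ _
  -- a.e. measurability of q n
  have hqm : ∀ n, AEStronglyMeasurable (q n) (μ.prod μ) := by
    intro n
    have h1 : AEStronglyMeasurable (fun p => Du p + t n • Dh p) (μ.prod μ) :=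
      hDu2.aestronglyMeasurable.add (hDh2.aestronglyMeasurable.const_smul (t n))
    have he : (q n) = fun p => (‖Du p + t n • Dh p‖ - ‖Du p‖) * (t n)⁻¹ := by
      funext p; show _ / _ = _; rw [div_eq_mul_inv]
    rw [he]
    exact ((h1.norm.sub hDu2.aestronglyMeasurable.norm).mul aestronglyMeasurable_const)
  -- dominated convergence
  have hDCT : Tendsto (fun n => ∫ p, q n p ∂(μ.prod μ)) atTop
      (𝓝 (∫ p, ψ p ∂(μ.prod μ))) := by
    refine tendsto_integral_of_dominated_convergence (fun p => ‖Dh p‖) hqm hDhint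
      (fun n => Eventually.of_forall (hbd n)) (Eventually.of_forall hpt)
  -- integrability bits
  have iu2 : Integrable (fun x => ‖u x - x‖ ^ 2) μ := integrable_sq_norm (hu2.sub hid)
  have iuh : Integrable (fun x => ⟪u x - x, h x⟫) μ :=
    integrable_inner_of_memL2 (hu2.sub hid) hh2
  have ih2 : Integrable (fun x => ‖h x‖ ^ 2) μ := integrable_sq_norm hh2
  have iuu : Integrable (fun p : Euc d × Euc d => ‖u p.1 - u p.2‖) (μ.prod μ) :=
    integrable_norm_sub_prod hu2 hu2
  have iqn : ∀ n, Integrable (q n) (μ.prod μ) := by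
    intro n
    refine Integrable.mono' hDhint (hqm n) (Eventually.of_forall (hbd n))
  -- main inequality for fixed n
  have key : ∀ n, 0 ≤ 2 * ∫ x, ⟪u x - x, h x⟫ ∂μ + t n * ∫ x, ‖h x‖ ^ 2 ∂μ
      + lam * ∫ p, q n p ∂(μ.prod μ) := by
    intro n
    set v : Euc d → Euc d := fun x => u x + t n • h x with hv_def
    have hv2 : MemLp v 2 μ := hu2.add (hh2.const_smul (t n))
    have hJ := hminle v hv2
    rw [sonj_eq hu2, sonj_eq hv2] at hJ
    -- quadratic part expansion
    have hquad : ∫ x, ‖v x - x‖ ^ 2 ∂μ = ∫ x, ‖u x - x‖ ^ 2 ∂μ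
        + t n * (2 * ∫ x, ⟪u x - x, h x⟫ ∂μ) + (t n) ^ 2 * ∫ x, ‖h x‖ ^ 2 ∂μ := by
      have hptw : ∀ x, ‖v x - x‖ ^ 2
          = ‖u x - x‖ ^ 2 + t n * (2 * ⟪u x - x, h x⟫) + (t n) ^ 2 * ‖h x‖ ^ 2 := by
        intro x
        have hvx : v x - x = (u x - x) + t n • h x := by
          simp only [hv_def]; abel
        rw [hvx, norm_add_sq_real, real_inner_smul_right, norm_smul,
          Real.norm_eq_abs, mul_pow, sq_abs]
        ring
      calc ∫ x, ‖v x - x‖ ^ 2 ∂μ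
          = ∫ x, (‖u x - x‖ ^ 2 + t n * (2 * ⟪u x - x, h x⟫) + (t n) ^ 2 * ‖h x‖ ^ 2) ∂μ :=
            integral_congr_ae (Eventually.of_forall hptw)
        _ = _ := by
            have i2 : Integrable (fun x => t n * (2 * ⟪u x - x, h x⟫)) μ := by
              exact (iuh.const_mul 2).const_mul (t n)
            have i3 : Integrable (fun x => (t n) ^ 2 * ‖h x‖ ^ 2) μ := ih2.const_mul _
            have i12 : Integrable
                (fun x => ‖u x - x‖ ^ 2 + t n * (2 * ⟪u x - x, h x⟫)) μ := by
              exact iu2.add i2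
            rw [integral_add i12 i3, integral_add iu2 i2, integral_const_mul,
              integral_const_mul, integral_const_mul]
    -- double-integral part expansion
    have hdbl : ∫ p, ‖v p.1 - v p.2‖ ∂(μ.prod μ)
        = ∫ p, ‖u p.1 - u p.2‖ ∂(μ.prod μ) + t n * ∫ p, q n p ∂(μ.prod μ) := by
      have hptw : ∀ p : Euc d × Euc d, ‖v p.1 - v p.2‖ = ‖u p.1 - u p.2‖ + t n * q n p := by
        intro p
        have hvp : v p.1 - v p.2 = Du p + t n • Dh p := by
          simp only [hv_def, hDu_def, hDh_def, smul_sub]; abel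
        rw [hvp, hq_def]
        show ‖Du p + t n • Dh p‖ = ‖Du p‖ + t n * ((‖Du p + t n • Dh p‖ - ‖Du p‖) / t n)
        rw [mul_div_assoc', mul_div_cancel_left₀ _ (htpos n).ne']
        ring
      calc ∫ p, ‖v p.1 - v p.2‖ ∂(μ.prod μ)
          = ∫ p, (‖u p.1 - u p.2‖ + t n * q n p) ∂(μ.prod μ) :=
            integral_congr_ae (Eventually.of_forall hptw)
        _ = _ := by
            have i4 : Integrable (fun p : Euc d × Euc d => t n * q n p) (μ.prod μ) :=
              (iqn n).const_mul _
            rw [integral_add iuu i4, integral_const_mul]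
    rw [hquad, hdbl] at hJ
    have hJ' : 0 ≤ t n * (2 * ∫ x, ⟪u x - x, h x⟫ ∂μ) + (t n) ^ 2 * ∫ x, ‖h x‖ ^ 2 ∂μ
        + lam * (t n * ∫ p, q n p ∂(μ.prod μ)) := by nlinarith [hJ]
    have hfac : t n * (2 * ∫ x, ⟪u x - x, h x⟫ ∂μ) + (t n) ^ 2 * ∫ x, ‖h x‖ ^ 2 ∂μ
        + lam * (t n * ∫ p, q n p ∂(μ.prod μ))
        = t n * (2 * ∫ x, ⟪u x - x, h x⟫ ∂μ + t n * ∫ x, ‖h x‖ ^ 2 ∂μ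
            + lam * ∫ p, q n p ∂(μ.prod μ)) := by ring
    rw [hfac] at hJ'
    by_contra hX
    push_neg at hX
    nlinarith [htpos n]
  -- take the limit
  have hlim : Tendsto (fun n => 2 * ∫ x, ⟪u x - x, h x⟫ ∂μ + t n * ∫ x, ‖h x‖ ^ 2 ∂μ
      + lam * ∫ p, q n p ∂(μ.prod μ)) atTop
      (𝓝 (2 * ∫ x, ⟪u x - x, h x⟫ ∂μ + 0 * ∫ x, ‖h x‖ ^ 2 ∂μ
        + lam * ∫ p, ψ p ∂(μ.prod μ))) := by
    have ht0 : Tendsto t atTop (𝓝 (0:ℝ)) := by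
      simpa [ht_def, one_div] using tendsto_one_div_add_atTop_nhds_zero_nat (𝕜 := ℝ)
    exact (tendsto_const_nhds.add (ht0.mul_const _)).add (hDCT.const_mul lam)
  have hfinal : 0 ≤ 2 * ∫ x, ⟪u x - x, h x⟫ ∂μ + 0 * ∫ x, ‖h x‖ ^ 2 ∂μ
      + lam * ∫ p, ψ p ∂(μ.prod μ) := ge_of_tendsto' hlim key
  have hneg : ∫ x, ⟪x - u x, h x⟫ ∂μ = - ∫ x, ⟪u x - x, h x⟫ ∂μ := by
    rw [← integral_neg]
    apply integral_congr_ae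
    filter_upwards with x
    have : x - u x = -(u x - x) := by abel
    rw [this, inner_neg_left]
  rw [hneg]
  have hψeq : ∫ p, ψ p ∂(μ.prod μ)
      = ∫ p, (if u p.1 - u p.2 = 0 then ‖h p.1 - h p.2‖
          else ⟪sgnE (u p.1 - u p.2), h p.1 - h p.2⟫) ∂(μ.prod μ) := rfl
  rw [← hψeq]
  linarith

end GradIneq
section FA

set_option maxHeartbeats 1000000
set_option synthInstance.maxHeartbeats 400000

variable {d : ℕ}

/-- The constraint set for the dual certificate, inside `L²(μ⊗μ; ℝ^d)`. -/
def OKset (μ : Measure (Euc d)) [IsFiniteMeasure μ] (u : Euc d → Euc d) :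
    Set (Lp (Euc d) 2 (μ.prod μ)) :=
  {W | (∀ᵐ p ∂μ.prod μ, (↑↑W : Euc d × Euc d → Euc d) (Prod.swap p)
          = - (↑↑W : Euc d × Euc d → Euc d) p) ∧
       (∀ᵐ p ∂μ.prod μ, ‖(↑↑W : Euc d × Euc d → Euc d) p‖ ≤ 1) ∧
       (∀ᵐ p ∂μ.prod μ, u p.1 ≠ u p.2 →
          (↑↑W : Euc d × Euc d → Euc d) p = sgnE (u p.1 - u p.2))}

variable {μ : Measure (Euc d)} [IsFiniteMeasure μ] {u : Euc d → Euc d}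

lemma mem_okset_iff {W : Lp (Euc d) 2 (μ.prod μ)} : W ∈ OKset μ u ↔
    (∀ᵐ p ∂μ.prod μ, (↑↑W : Euc d × Euc d → Euc d) (Prod.swap p)
        = - (↑↑W : Euc d × Euc d → Euc d) p) ∧
    (∀ᵐ p ∂μ.prod μ, ‖(↑↑W : Euc d × Euc d → Euc d) p‖ ≤ 1) ∧
    (∀ᵐ p ∂μ.prod μ, u p.1 ≠ u p.2 →
        (↑↑W : Euc d × Euc d → Euc d) p = sgnE (u p.1 - u p.2)) := Iff.rfl

lemma okset_convex : Convex ℝ (OKset μ u) := by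
  intro W hW W' hW' a b ha hb hab
  rw [mem_okset_iff] at hW hW' ⊢
  have hc : ∀ᵐ p ∂μ.prod μ, (↑↑(a • W + b • W') : Euc d × Euc d → Euc d) p
      = a • (↑↑W : Euc d × Euc d → Euc d) p + b • (↑↑W' : Euc d × Euc d → Euc d) p := by
    filter_upwards [Lp.coeFn_add (a • W) (b • W'), Lp.coeFn_smul a W, Lp.coeFn_smul b W']
      with p h1 h2 h3
    rw [h1, Pi.add_apply, h2, h3, Pi.smul_apply, Pi.smul_apply]
  have hcs := ae_swap hc
  refine ⟨?_, ?_, ?_⟩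
  · filter_upwards [hc, hcs, hW.1, hW'.1] with p h1 h2 h3 h4
    rw [h2, h1, h3, h4]
    simp only [smul_neg]
    abel
  · filter_upwards [hc, hW.2.1, hW'.2.1] with p h1 h2 h3
    rw [h1]
    calc ‖a • (↑↑W : Euc d × Euc d → Euc d) p + b • (↑↑W' : Euc d × Euc d → Euc d) p‖
        ≤ ‖a • (↑↑W : Euc d × Euc d → Euc d) p‖
          + ‖b • (↑↑W' : Euc d × Euc d → Euc d) p‖ := norm_add_le _ _
    _ = a * ‖(↑↑W : Euc d × Euc d → Euc d) p‖
          + b * ‖(↑↑W' : Euc d × Euc d → Euc d) p‖ := by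
        rw [norm_smul, norm_smul, Real.norm_eq_abs, Real.norm_eq_abs,
          abs_of_nonneg ha, abs_of_nonneg hb]
    _ ≤ a * 1 + b * 1 := by gcongr
    _ = 1 := by rw [mul_one, mul_one, hab]
  · filter_upwards [hc, hW.2.2, hW'.2.2] with p h1 h2 h3 hne
    rw [h1, h2 hne, h3 hne, ← add_smul, hab, one_smul]

lemma okset_closed : IsClosed (OKset μ u) := by
  refine IsSeqClosed.isClosed ?_
  intro Wn W hWn hconv
  have h1 : Tendsto (fun n => ‖Wn n - W‖) atTop (𝓝 0) :=
    tendsto_iff_norm_sub_tendsto_zero.mp hconv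
  have h0 : Tendsto (fun n => eLpNorm ((↑↑(Wn n) : Euc d × Euc d → Euc d)
      - (↑↑W : Euc d × Euc d → Euc d)) 2 (μ.prod μ)) atTop (𝓝 0) := by
    have h2 : ∀ n, eLpNorm ((↑↑(Wn n) : Euc d × Euc d → Euc d)
        - (↑↑W : Euc d × Euc d → Euc d)) 2 (μ.prod μ)
        = ENNReal.ofReal ‖Wn n - W‖ := by
      intro n
      rw [Lp.norm_def, ENNReal.ofReal_toReal (Lp.eLpNorm_ne_top _)]
      exact (eLpNorm_congr_ae (Lp.coeFn_sub _ _)).symm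
    simp only [h2]
    rw [show (0 : ℝ≥0∞) = ENNReal.ofReal 0 by simp]
    exact (ENNReal.continuous_ofReal.tendsto 0).comp h1
  have hmeas : TendstoInMeasure (μ.prod μ) (fun n => (↑↑(Wn n) : Euc d × Euc d → Euc d))
      atTop (↑↑W : Euc d × Euc d → Euc d) :=
    tendstoInMeasure_of_tendsto_eLpNorm (by norm_num)
      (fun n => Lp.aestronglyMeasurable _) (Lp.aestronglyMeasurable _) h0
  obtain ⟨ns, hns, hae⟩ := hmeas.exists_seq_tendsto_ae
  have haes := ae_swap hae
  rw [mem_okset_iff]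
  refine ⟨?_, ?_, ?_⟩
  · have hall : ∀ᵐ p ∂μ.prod μ, ∀ i, (↑↑(Wn (ns i)) : Euc d × Euc d → Euc d) (Prod.swap p)
        = - (↑↑(Wn (ns i)) : Euc d × Euc d → Euc d) p :=
      ae_all_iff.2 fun i => (hWn (ns i)).1
    filter_upwards [hae, haes, hall] with p h1 h2 h3
    refine tendsto_nhds_unique h2 ?_
    exact h1.neg.congr fun i => (h3 i).symm
  · have hall : ∀ᵐ p ∂μ.prod μ, ∀ i, ‖(↑↑(Wn (ns i)) : Euc d × Euc d → Euc d) p‖ ≤ 1 :=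
      ae_all_iff.2 fun i => (hWn (ns i)).2.1
    filter_upwards [hae, hall] with p h1 h2
    exact le_of_tendsto h1.norm (Eventually.of_forall h2)
  · have hall : ∀ᵐ p ∂μ.prod μ, ∀ i, u p.1 ≠ u p.2 →
        (↑↑(Wn (ns i)) : Euc d × Euc d → Euc d) p = sgnE (u p.1 - u p.2) :=
      ae_all_iff.2 fun i => (hWn (ns i)).2.2
    filter_upwards [hae, hall] with p h1 h2 hne
    exact tendsto_nhds_unique h1 (tendsto_const_nhds.congr fun i => (h2 i hne).symm)

/-- Norm bound on the constraint set. -/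
def RCbd (μ : Measure (Euc d)) [IsFiniteMeasure μ] : ℝ :=
  (measureUnivNNReal (μ.prod μ) : ℝ) ^ (2 : ℝ≥0∞).toReal⁻¹

lemma okset_norm_le {W : Lp (Euc d) 2 (μ.prod μ)} (hW : W ∈ OKset μ u) : ‖W‖ ≤ RCbd μ := by
  have h := Lp.norm_le_of_ae_bound (f := W) zero_le_one (mem_okset_iff.mp hW).2.1
  simpa [RCbd] using h

end FA
section TCdef

set_option maxHeartbeats 1000000
set_option synthInstance.maxHeartbeats 400000

variable {d : ℕ} {μ : Measure (Euc d)} [IsFiniteMeasure μ]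

lemma memℒp_tFun (lam : ℝ) {W : Lp (Euc d) 2 (μ.prod μ)}
    (hb : ∀ᵐ p ∂μ.prod μ, ‖(↑↑W : Euc d × Euc d → Euc d) p‖ ≤ 1) :
    MemLp (fun x => lam • ∫ z, (↑↑W : Euc d × Euc d → Euc d) (x, z) ∂μ) 2 μ := by
  have hm : AEStronglyMeasurable
      (fun x => ∫ z, (↑↑W : Euc d × Euc d → Euc d) (x, z) ∂μ) μ :=
    (Lp.aestronglyMeasurable W).integral_prod_right'
  refine MemLp.of_bound (hm.const_smul lam) (‖lam‖ * (1 * (μ Set.univ).toReal)) ?_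
  filter_upwards [Measure.ae_ae_of_ae_prod hb] with x hx
  rw [norm_smul]
  gcongr
  exact norm_integral_le_of_norm_le_const hx

/-- The (affine-on-`OKset`) operator `W ↦ (x ↦ λ ∫ W(x,z) dμ(z))`. -/
def TCmap (μ : Measure (Euc d)) [IsFiniteMeasure μ] (lam : ℝ)
    (W : Lp (Euc d) 2 (μ.prod μ)) : Lp (Euc d) 2 μ :=
  if hb : (∀ᵐ p ∂μ.prod μ, ‖(↑↑W : Euc d × Euc d → Euc d) p‖ ≤ 1) then
    (memℒp_tFun lam hb).toLp _ else 0

lemma TCmap_coe {lam : ℝ} {W : Lp (Euc d) 2 (μ.prod μ)}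
    (hb : ∀ᵐ p ∂μ.prod μ, ‖(↑↑W : Euc d × Euc d → Euc d) p‖ ≤ 1) :
    (↑↑(TCmap μ lam W) : Euc d → Euc d)
      =ᵐ[μ] fun x => lam • ∫ z, (↑↑W : Euc d × Euc d → Euc d) (x, z) ∂μ := by
  rw [TCmap, dif_pos hb]
  exact MemLp.coeFn_toLp _

lemma memℒp_gfun (lam : ℝ) (h : Lp (Euc d) 2 μ) :
    MemLp (fun p : Euc d × Euc d => lam • (↑↑h : Euc d → Euc d) p.1) 2 (μ.prod μ) :=
  (memℒp_fst (Lp.memLp h)).const_smul lam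

/-- The element of `L²(μ⊗μ)` representing `W ↦ ⟪TCmap W, h⟫`. -/
def gmap (μ : Measure (Euc d)) [IsFiniteMeasure μ] (lam : ℝ) (h : Lp (Euc d) 2 μ) :
    Lp (Euc d) 2 (μ.prod μ) :=
  (memℒp_gfun lam h).toLp _

/-- Key duality identity:  `⟪TCmap W, h⟫ = ⟪W, gmap h⟫`. -/
lemma inner_TCmap {lam : ℝ} {W : Lp (Euc d) 2 (μ.prod μ)}
    (hb : ∀ᵐ p ∂μ.prod μ, ‖(↑↑W : Euc d × Euc d → Euc d) p‖ ≤ 1)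
    (h : Lp (Euc d) 2 μ) :
    (⟪TCmap μ lam W, h⟫ : ℝ) = ⟪W, gmap μ lam h⟫ := by
  have iWp : Integrable (↑↑W : Euc d × Euc d → Euc d) (μ.prod μ) :=
    (Lp.memLp W).integrable one_le_two
  have islice := iWp.prod_right_ae
  have iprod : Integrable
      (fun p : Euc d × Euc d =>
        (⟪(↑↑W : Euc d × Euc d → Euc d) p, lam • (↑↑h : Euc d → Euc d) p.1⟫ : ℝ))
      (μ.prod μ) :=
    integrable_inner_of_memL2 (Lp.memLp W) (memℒp_gfun lam h)
  calc (⟪TCmap μ lam W, h⟫ : ℝ)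
      = ∫ x, ⟪(↑↑(TCmap μ lam W) : Euc d → Euc d) x, (↑↑h : Euc d → Euc d) x⟫ ∂μ :=
        L2.inner_def _ _
    _ = ∫ x, ⟪lam • ∫ z, (↑↑W : Euc d × Euc d → Euc d) (x, z) ∂μ,
          (↑↑h : Euc d → Euc d) x⟫ ∂μ := by
        apply integral_congr_ae
        filter_upwards [TCmap_coe hb] with x hx
        rw [hx]
    _ = ∫ x, ∫ z, ⟪(↑↑W : Euc d × Euc d → Euc d) (x, z),
          lam • (↑↑h : Euc d → Euc d) x⟫ ∂μ ∂μ := by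
        apply integral_congr_ae
        filter_upwards [islice] with x hx
        rw [real_inner_smul_left]
        have h1 : ∫ z, (⟪(↑↑W : Euc d × Euc d → Euc d) (x, z),
            lam • (↑↑h : Euc d → Euc d) x⟫ : ℝ) ∂μ
            = lam * ⟪∫ z, (↑↑W : Euc d × Euc d → Euc d) (x, z) ∂μ,
                (↑↑h : Euc d → Euc d) x⟫ := by
          calc ∫ z, (⟪(↑↑W : Euc d × Euc d → Euc d) (x, z),
                lam • (↑↑h : Euc d → Euc d) x⟫ : ℝ) ∂μ
              = ∫ z, lam * ⟪(↑↑h : Euc d → Euc d) x,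
                  (↑↑W : Euc d × Euc d → Euc d) (x, z)⟫ ∂μ := by
                apply integral_congr_ae
                filter_upwards with z
                rw [real_inner_smul_right, real_inner_comm]
            _ = lam * ∫ z, ⟪(↑↑h : Euc d → Euc d) x,
                  (↑↑W : Euc d × Euc d → Euc d) (x, z)⟫ ∂μ := integral_const_mul _ _
            _ = lam * ⟪(↑↑h : Euc d → Euc d) x,
                  ∫ z, (↑↑W : Euc d × Euc d → Euc d) (x, z) ∂μ⟫ := by
                rw [integral_inner hx]
            _ = _ := by rw [real_inner_comm]
        rw [h1]
    _ = ∫ p, ⟪(↑↑W : Euc d × Euc d → Euc d) p,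
          lam • (↑↑h : Euc d → Euc d) p.1⟫ ∂(μ.prod μ) := (integral_prod _ iprod).symm
    _ = ⟪W, gmap μ lam h⟫ := by
        rw [L2.inner_def]
        apply integral_congr_ae
        filter_upwards [(memℒp_gfun lam h).coeFn_toLp] with p hp
        rw [show (↑↑(gmap μ lam h) : Euc d × Euc d → Euc d) p
            = lam • (↑↑h : Euc d → Euc d) p.1 from hp]

end TCdef
section Compactness

set_option maxHeartbeats 1000000
set_option synthInstance.maxHeartbeats 400000

variable {d : ℕ} {μ : Measure (Euc d)} [IsFiniteMeasure μ] {u : Euc d → Euc d}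

/-- The image of `OKset` under `W ↦ ⟪W, ·⟫`, characterized by closed conditions. -/
lemma ev_image_okset :
    (fun (W : Lp (Euc d) 2 (μ.prod μ)) => fun g => (⟪W, g⟫ : ℝ)) '' OKset μ u
    = {φ : Lp (Euc d) 2 (μ.prod μ) → ℝ |
        (∀ g₁ g₂, φ (g₁ + g₂) = φ g₁ + φ g₂) ∧
        (∀ (c : ℝ) g, φ (c • g) = c * φ g) ∧
        (∀ g, |φ g| ≤ RCbd μ * ‖g‖) ∧
        (∀ g c', (∀ W ∈ OKset μ u, (⟪W, g⟫ : ℝ) ≤ c') → φ g ≤ c')} := by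
  ext φ
  constructor
  · rintro ⟨W, hW, rfl⟩
    refine ⟨fun g₁ g₂ => inner_add_right _ _ _, fun c g => real_inner_smul_right _ _ _,
      fun g => ?_, fun g c' hc => hc W hW⟩
    calc |(⟪W, g⟫ : ℝ)| ≤ ‖W‖ * ‖g‖ := abs_real_inner_le_norm _ _
    _ ≤ RCbd μ * ‖g‖ := by
        have := okset_norm_le (u := u) hW
        gcongr
  · rintro ⟨hadd, hsmul, hbd, hdual⟩
    set F : Lp (Euc d) 2 (μ.prod μ) →ₗ[ℝ] ℝ :=
      { toFun := φ, map_add' := hadd, map_smul' := hsmul } with hF_def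
    set Fc : Lp (Euc d) 2 (μ.prod μ) →L[ℝ] ℝ :=
      F.mkContinuous (RCbd μ) (fun g => by
        rw [Real.norm_eq_abs]; exact hbd g) with hFc_def
    set W := (InnerProductSpace.toDual ℝ (Lp (Euc d) 2 (μ.prod μ))).symm Fc with hW_def
    have hWval : ∀ g, (⟪W, g⟫ : ℝ) = φ g := by
      intro g
      have h1 : (⟪W, g⟫ : ℝ) = Fc g := InnerProductSpace.toDual_symm_apply
      rw [h1]; rfl
    have hWmem : W ∈ OKset μ u := by
      by_contra hWn
      obtain ⟨f, c₀, hfa, hfW⟩ :=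
        geometric_hahn_banach_closed_point (okset_convex (u := u)) okset_closed hWn
      set y := (InnerProductSpace.toDual ℝ (Lp (Euc d) 2 (μ.prod μ))).symm f with hy_def
      have hyval : ∀ g, (⟪y, g⟫ : ℝ) = f g := fun g => InnerProductSpace.toDual_symm_apply
      have h1 : φ y ≤ c₀ := by
        refine hdual y c₀ fun W' hW' => ?_
        have := hfa W' hW'
        rw [← hyval W', real_inner_comm] at this
        exact this.le
      have h2 : φ y = f W := by rw [← hWval y, real_inner_comm, hyval W]
      rw [h2] at h1
      exact absurd h1 (not_le.mpr hfW)
    exact ⟨W, hWmem, funext fun g => hWval g⟩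

lemma ev_image_okset_compact :
    IsCompact ((fun (W : Lp (Euc d) 2 (μ.prod μ)) => fun g => (⟪W, g⟫ : ℝ)) '' OKset μ u) := by
  rw [ev_image_okset]
  have hsub : {φ : Lp (Euc d) 2 (μ.prod μ) → ℝ |
        (∀ g₁ g₂, φ (g₁ + g₂) = φ g₁ + φ g₂) ∧
        (∀ (c : ℝ) g, φ (c • g) = c * φ g) ∧
        (∀ g, |φ g| ≤ RCbd μ * ‖g‖) ∧
        (∀ g c', (∀ W ∈ OKset μ u, (⟪W, g⟫ : ℝ) ≤ c') → φ g ≤ c')}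
      ⊆ Set.univ.pi (fun g => Set.Icc (-(RCbd μ * ‖g‖)) (RCbd μ * ‖g‖)) := by
    intro φ hφ g _
    exact abs_le.mp (hφ.2.2.1 g)
  have hKcomp : IsCompact (Set.univ.pi
      (fun g : Lp (Euc d) 2 (μ.prod μ) => Set.Icc (-(RCbd μ * ‖g‖)) (RCbd μ * ‖g‖))) :=
    isCompact_univ_pi fun g => isCompact_Icc
  refine IsCompact.of_isClosed_subset hKcomp ?_ hsub
  have hset : {φ : Lp (Euc d) 2 (μ.prod μ) → ℝ |
        (∀ g₁ g₂, φ (g₁ + g₂) = φ g₁ + φ g₂) ∧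
        (∀ (c : ℝ) g, φ (c • g) = c * φ g) ∧
        (∀ g, |φ g| ≤ RCbd μ * ‖g‖) ∧
        (∀ g c', (∀ W ∈ OKset μ u, (⟪W, g⟫ : ℝ) ≤ c') → φ g ≤ c')}
      = (⋂ g₁, ⋂ g₂, {φ : Lp (Euc d) 2 (μ.prod μ) → ℝ | φ (g₁ + g₂) = φ g₁ + φ g₂})
        ∩ ((⋂ (c : ℝ), ⋂ g, {φ : Lp (Euc d) 2 (μ.prod μ) → ℝ | φ (c • g) = c * φ g})
        ∩ ((⋂ g, {φ : Lp (Euc d) 2 (μ.prod μ) → ℝ | |φ g| ≤ RCbd μ * ‖g‖})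
        ∩ (⋂ g, ⋂ (c' : ℝ), ⋂ (_ : ∀ W ∈ OKset μ u, (⟪W, g⟫ : ℝ) ≤ c'),
            {φ : Lp (Euc d) 2 (μ.prod μ) → ℝ | φ g ≤ c'}))) := by
    ext φ
    simp only [Set.mem_setOf_eq, Set.mem_inter_iff, Set.mem_iInter]
  rw [hset]
  refine IsClosed.inter ?_ (IsClosed.inter ?_ (IsClosed.inter ?_ ?_))
  · exact isClosed_iInter fun g₁ => isClosed_iInter fun g₂ =>
      isClosed_eq (continuous_apply _) ((continuous_apply g₁).add (continuous_apply g₂))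
  · exact isClosed_iInter fun c => isClosed_iInter fun g =>
      isClosed_eq (continuous_apply _) (continuous_const.mul (continuous_apply _))
  · exact isClosed_iInter fun g =>
      isClosed_le ((continuous_apply _).abs) continuous_const
  · exact isClosed_iInter fun g => isClosed_iInter fun c' => isClosed_iInter fun _ =>
      isClosed_le (continuous_apply _) continuous_const

end Compactness
section Exist

set_option maxHeartbeats 1000000
set_option synthInstance.maxHeartbeats 400000

variable {d : ℕ} {μ : Measure (Euc d)} [IsFiniteMeasure μ] {u : Euc d → Euc d} {lam : ℝ}

lemma TC_image_convex : Convex ℝ (TCmap μ lam '' OKset μ u) := by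
  rintro s ⟨W, hW, rfl⟩ s' ⟨W', hW', rfl⟩ a b ha hb hab
  have hcomb := okset_convex (u := u) hW hW' ha hb hab
  refine ⟨a • W + b • W', hcomb, ?_⟩
  apply ext_inner_right ℝ
  intro h
  rw [inner_TCmap (mem_okset_iff.mp hcomb).2.1 h, inner_add_left, real_inner_smul_left,
    real_inner_smul_left, inner_add_left, real_inner_smul_left, real_inner_smul_left,
    inner_TCmap (mem_okset_iff.mp hW).2.1 h, inner_TCmap (mem_okset_iff.mp hW').2.1 h]

lemma TC_image_closed : IsClosed (TCmap μ lam '' OKset μ u) := by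
  refine IsSeqClosed.isClosed ?_
  intro s y hs hy
  set G : (Lp (Euc d) 2 (μ.prod μ) → ℝ) → (Lp (Euc d) 2 μ → ℝ) :=
    fun φ h => φ (gmap μ lam h) with hG_def
  have hGcont : Continuous G := continuous_pi fun h => continuous_apply _
  have hGA := (ev_image_okset_compact (u := u)).image hGcont
  have hmem : ∀ n, (fun h => (⟪s n, h⟫ : ℝ)) ∈
      G '' ((fun (W : Lp (Euc d) 2 (μ.prod μ)) => fun g => (⟪W, g⟫ : ℝ)) '' OKset μ u) := by
    intro n
    obtain ⟨W, hW, hTW⟩ := hs n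
    refine ⟨fun g => ⟪W, g⟫, Set.mem_image_of_mem _ hW, ?_⟩
    funext h
    show (⟪W, gmap μ lam h⟫ : ℝ) = ⟪s n, h⟫
    rw [← inner_TCmap (mem_okset_iff.mp hW).2.1 h, hTW]
  have hconv : Tendsto (fun n => (fun h => (⟪s n, h⟫ : ℝ))) atTop
      (𝓝 (fun h => (⟪y, h⟫ : ℝ))) := by
    rw [tendsto_pi_nhds]
    intro h
    exact hy.inner tendsto_const_nhds
  have hyin := hGA.isClosed.mem_of_tendsto hconv (Eventually.of_forall hmem)
  obtain ⟨φ, hφmem, hφ⟩ := hyin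
  obtain ⟨W, hW, rfl⟩ := hφmem
  refine ⟨W, hW, ?_⟩
  apply ext_inner_right ℝ
  intro h
  rw [inner_TCmap (mem_okset_iff.mp hW).2.1 h]
  exact congrFun hφ h

/-- Existence of the KKT certificate for a minimizer. -/
lemma exists_kkt (hsupp : ∃ K : Set (Euc d), IsCompact K ∧ μ Kᶜ = 0)
    (hlam : 0 ≤ lam) (hmin : IsSONMin μ lam u) :
    ∃ W ∈ OKset μ u, ∀ᵐ x ∂μ, x - u x
      = lam • ∫ z, (↑↑W : Euc d × Euc d → Euc d) (x, z) ∂μ := by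
  have hu2 := hmin.1
  have hid := memL2_id hsupp
  have hbmem : MemLp (fun x : Euc d => x - u x) 2 μ := hid.sub hu2
  set bY := hbmem.toLp _ with hbY_def
  have hbin : bY ∈ TCmap μ lam '' OKset μ u := by
    by_contra hnot
    obtain ⟨f, c₀, hfb, hfS⟩ :=
      geometric_hahn_banach_point_closed TC_image_convex TC_image_closed hnot
    set y₀ := (InnerProductSpace.toDual ℝ (Lp (Euc d) 2 μ)).symm f with hy₀
    have hyval : ∀ g, (⟪y₀, g⟫ : ℝ) = f g := fun g => InnerProductSpace.toDual_symm_apply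
    set h : Lp (Euc d) 2 μ := -y₀ with hh_def
    have hlt : ∀ s ∈ TCmap μ lam '' OKset μ u, (⟪s, h⟫ : ℝ) < ⟪bY, h⟫ := by
      intro s hs
      have h1 : (⟪s, h⟫ : ℝ) = -(f s) := by
        rw [hh_def, inner_neg_right, real_inner_comm, hyval]
      have h2 : (⟪bY, h⟫ : ℝ) = -(f bY) := by
        rw [hh_def, inner_neg_right, real_inner_comm, hyval]
      rw [h1, h2]
      have := hfS s hs
      linarith [hfb, this]
    -- construct the competitor W_h
    set u' : Euc d → Euc d := hu2.1.mk u with hu'_def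
    have hu'm : Measurable u' := hu2.1.stronglyMeasurable_mk.measurable
    have huu' : u =ᵐ[μ] u' := hu2.1.ae_eq_mk
    set hf : Euc d → Euc d := ↑↑h with hhf_def
    have hfm : Measurable hf := (Lp.stronglyMeasurable h).measurable
    set Wf : Euc d × Euc d → Euc d := fun p =>
      if u' p.1 - u' p.2 = 0 then sgnE (hf p.1 - hf p.2) else sgnE (u' p.1 - u' p.2)
      with hWf_def
    have hA : MeasurableSet {p : Euc d × Euc d | u' p.1 - u' p.2 = 0} := by
      have hm : Measurable (fun p : Euc d × Euc d => u' p.1 - u' p.2) :=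
        (hu'm.comp measurable_fst).sub (hu'm.comp measurable_snd)
      exact hm (measurableSet_singleton 0)
    have hWfm : Measurable Wf := by
      refine Measurable.ite hA ?_ ?_
      · exact measurable_sgnE.comp ((hfm.comp measurable_fst).sub (hfm.comp measurable_snd))
      · exact measurable_sgnE.comp ((hu'm.comp measurable_fst).sub (hu'm.comp measurable_snd))
    have hWfbd : ∀ p, ‖Wf p‖ ≤ 1 := by
      intro p
      simp only [hWf_def]
      split_ifs <;> exact norm_sgnE_le _
    have hWfanti : ∀ p : Euc d × Euc d, Wf (Prod.swap p) = - Wf p := by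
      intro p
      rw [hWf_def]
      simp only [Prod.fst_swap, Prod.snd_swap]
      rcases eq_or_ne (u' p.1 - u' p.2) 0 with hz | hz
      · have hz' : u' p.2 - u' p.1 = 0 := by
          rw [sub_eq_zero] at hz ⊢; exact hz.symm
        rw [if_pos hz', if_pos hz]
        have : hf p.2 - hf p.1 = -(hf p.1 - hf p.2) := by abel
        rw [this, sgnE_neg]
      · have hz' : u' p.2 - u' p.1 ≠ 0 := by
          rw [ne_eq, sub_eq_zero] at hz ⊢
          exact fun hc => hz hc.symm
        rw [if_neg hz', if_neg hz]
        have : u' p.2 - u' p.1 = -(u' p.1 - u' p.2) := by abel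
        rw [this, sgnE_neg]
    have hWfmem : MemLp Wf 2 (μ.prod μ) :=
      MemLp.of_bound hWfm.aestronglyMeasurable 1 (Eventually.of_forall hWfbd)
    set WH := hWfmem.toLp _ with hWH_def
    have hcoe : (↑↑WH : Euc d × Euc d → Euc d) =ᵐ[μ.prod μ] Wf := hWfmem.coeFn_toLp
    have huu'1 : ∀ᵐ p ∂μ.prod μ, u p.1 = u' p.1 := ae_prod_fst huu'
    have huu'2 : ∀ᵐ p ∂μ.prod μ, u p.2 = u' p.2 := ae_prod_snd huu'
    have hWHmem : WH ∈ OKset μ u := by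
      rw [mem_okset_iff]
      refine ⟨?_, ?_, ?_⟩
      · filter_upwards [hcoe, ae_swap hcoe] with p h1 h2
        rw [h1, h2, hWfanti]
      · filter_upwards [hcoe] with p h1
        rw [h1]; exact hWfbd p
      · filter_upwards [hcoe, huu'1, huu'2] with p h1 h2 h3 hne
        rw [h1]
        simp only [hWf_def]
        have hz : u' p.1 - u' p.2 ≠ 0 := by
          rw [ne_eq, sub_eq_zero, ← h2, ← h3]
          exact hne
        rw [if_neg hz, ← h2, ← h3]
    -- the inequality ⟪bY, h⟫ ≤ ⟪TCmap WH, h⟫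
    have hineq : (⟪bY, h⟫ : ℝ) ≤ ⟪TCmap μ lam WH, h⟫ := by
      -- left side
      have hL : (⟪bY, h⟫ : ℝ) = ∫ x, ⟪x - u x, hf x⟫ ∂μ := by
        rw [L2.inner_def]
        apply integral_congr_ae
        filter_upwards [hbmem.coeFn_toLp] with x hx
        rw [hx]
      -- gradient inequality
      have hgrad := grad_ineq hsupp hmin (Lp.memLp h)
      -- right side
      have ihf1 : Integrable (fun p : Euc d × Euc d => (⟪Wf p, hf p.1⟫ : ℝ)) (μ.prod μ) := by
        refine Integrable.mono' (((memℒp_fst (Lp.memLp h)).integrable one_le_two).norm)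
          (hWfm.aestronglyMeasurable.inner (memℒp_fst (Lp.memLp h)).aestronglyMeasurable) ?_
        filter_upwards with p
        calc ‖(⟪Wf p, hf p.1⟫ : ℝ)‖ ≤ ‖Wf p‖ * ‖hf p.1‖ := norm_inner_le_norm _ _
        _ ≤ 1 * ‖hf p.1‖ := by gcongr; exact hWfbd p
        _ = ‖hf p.1‖ := one_mul _
      have iswap : ∫ p, (⟪Wf p, hf p.2⟫ : ℝ) ∂(μ.prod μ)
          = - ∫ p, (⟪Wf p, hf p.1⟫ : ℝ) ∂(μ.prod μ) := by
        have hs := integral_prod_swap (μ := μ) (ν := μ)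
          (fun p : Euc d × Euc d => (⟪Wf p, hf p.1⟫ : ℝ))
        have hae : (fun z : Euc d × Euc d => (⟪Wf z, hf z.2⟫ : ℝ))
            =ᵐ[μ.prod μ]
            fun z => -((fun p : Euc d × Euc d => (⟪Wf p, hf p.1⟫ : ℝ)) z.swap) := by
          filter_upwards with z
          show (⟪Wf z, hf z.2⟫ : ℝ) = -(⟪Wf z.swap, hf z.2⟫ : ℝ)
          rw [hWfanti z, inner_neg_left, neg_neg]
        rw [integral_congr_ae hae, integral_neg, hs]
      -- pointwise identity with ψ'
      have hpsi : ∀ p : Euc d × Euc d, (⟪Wf p, hf p.1 - hf p.2⟫ : ℝ)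
          = if u' p.1 - u' p.2 = 0 then ‖hf p.1 - hf p.2‖
            else ⟪sgnE (u' p.1 - u' p.2), hf p.1 - hf p.2⟫ := by
        intro p
        simp only [hWf_def]
        rcases eq_or_ne (u' p.1 - u' p.2) 0 with hz | hz
        · rw [if_pos hz, if_pos hz]
          exact inner_sgnE _
        · rw [if_neg hz, if_neg hz]
      have ihf2 : Integrable (fun p : Euc d × Euc d => (⟪Wf p, hf p.2⟫ : ℝ)) (μ.prod μ) := by
        refine Integrable.mono' (((memℒp_snd (Lp.memLp h)).integrable one_le_two).norm)
          (hWfm.aestronglyMeasurable.inner (memℒp_snd (Lp.memLp h)).aestronglyMeasurable) ?_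
        filter_upwards with p
        calc ‖(⟪Wf p, hf p.2⟫ : ℝ)‖ ≤ ‖Wf p‖ * ‖hf p.2‖ := norm_inner_le_norm _ _
        _ ≤ 1 * ‖hf p.2‖ := by gcongr; exact hWfbd p
        _ = ‖hf p.2‖ := one_mul _
      have hsub : ∫ p, (⟪Wf p, hf p.1 - hf p.2⟫ : ℝ) ∂(μ.prod μ)
          = 2 * ∫ p, (⟪Wf p, hf p.1⟫ : ℝ) ∂(μ.prod μ) := by
        have he : (fun p : Euc d × Euc d => (⟪Wf p, hf p.1 - hf p.2⟫ : ℝ))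
            = fun p => (⟪Wf p, hf p.1⟫ : ℝ) - ⟪Wf p, hf p.2⟫ := by
          funext p; rw [inner_sub_right]
        rw [he, integral_sub ihf1 ihf2, iswap]; ring
      -- compute the right side
      have hR : (⟪TCmap μ lam WH, h⟫ : ℝ)
          = lam * ∫ p, (⟪Wf p, hf p.1⟫ : ℝ) ∂(μ.prod μ) := by
        rw [inner_TCmap (mem_okset_iff.mp hWHmem).2.1 h, L2.inner_def]
        have : ∫ p, ⟪(↑↑WH : Euc d × Euc d → Euc d) p,
            (↑↑(gmap μ lam h) : Euc d × Euc d → Euc d) p⟫ ∂(μ.prod μ)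
            = ∫ p, lam * (⟪Wf p, hf p.1⟫ : ℝ) ∂(μ.prod μ) := by
          apply integral_congr_ae
          filter_upwards [hcoe, (memℒp_gfun lam h).coeFn_toLp] with p h1 h2
          rw [h1, show (↑↑(gmap μ lam h) : Euc d × Euc d → Euc d) p
              = lam • (↑↑h : Euc d → Euc d) p.1 from h2, real_inner_smul_right]
        rw [this, integral_const_mul]
      -- connect ψ and ψ'
      have hpsieq : ∫ p, (if u p.1 - u p.2 = 0 then ‖(↑↑h : Euc d → Euc d) p.1
            - (↑↑h : Euc d → Euc d) p.2‖
          else ⟪sgnE (u p.1 - u p.2), (↑↑h : Euc d → Euc d) p.1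
            - (↑↑h : Euc d → Euc d) p.2⟫) ∂(μ.prod μ)
          = ∫ p, (⟪Wf p, hf p.1 - hf p.2⟫ : ℝ) ∂(μ.prod μ) := by
        apply integral_congr_ae
        filter_upwards [huu'1, huu'2] with p h2 h3
        rw [hpsi p, ← h2, ← h3]
      rw [hL, hR]
      calc ∫ x, ⟪x - u x, hf x⟫ ∂μ
          ≤ (lam / 2) * ∫ p, (if u p.1 - u p.2 = 0 then ‖(↑↑h : Euc d → Euc d) p.1
              - (↑↑h : Euc d → Euc d) p.2‖
            else ⟪sgnE (u p.1 - u p.2), (↑↑h : Euc d → Euc d) p.1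
              - (↑↑h : Euc d → Euc d) p.2⟫) ∂(μ.prod μ) := hgrad
        _ = (lam / 2) * (2 * ∫ p, (⟪Wf p, hf p.1⟫ : ℝ) ∂(μ.prod μ)) := by
            rw [hpsieq, hsub]
        _ = lam * ∫ p, (⟪Wf p, hf p.1⟫ : ℝ) ∂(μ.prod μ) := by ring
    have hmemS : TCmap μ lam WH ∈ TCmap μ lam '' OKset μ u :=
      Set.mem_image_of_mem _ hWHmem
    exact absurd hineq (not_le.mpr (hlt _ hmemS))
  obtain ⟨W, hW, hTW⟩ := hbin
  refine ⟨W, hW, ?_⟩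
  have h1 := TCmap_coe (μ := μ) (lam := lam) (mem_okset_iff.mp hW).2.1
  rw [hTW] at h1
  filter_upwards [h1, hbmem.coeFn_toLp] with x hx1 hx2
  rw [← hx1, hx2]

end Exist
/-- **Theorem (KKT characterization of the minimizer).**  `u ∈ L²(μ;ℝ^d)` is the
minimizer `u_{μ,λ}` if and only if there is a `μ⊗μ`-a.e. antisymmetric
`w ∈ L^∞(μ⊗μ;ℝ^d)` with `|w| ≤ 1`, `w(x,y) = sgn(u x - u y)` whenever `u x ≠ u y`,
and `x - u x = λ ∫ w(x,z) dμ(z)` for `μ`-a.e. `x`. -/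
theorem stmt8
    (d : ℕ) (μ : Measure (Euc d)) [IsFiniteMeasure μ] (hμ0 : μ ≠ 0)
    (hsupp : ∃ K : Set (Euc d), IsCompact K ∧ μ Kᶜ = 0)
    (lam : ℝ) (hlam : 0 ≤ lam)
    (u : Euc d → Euc d) (hu2 : MemLp u 2 μ) :
    IsSONMin μ lam u ↔
      ∃ w : Euc d → Euc d → Euc d,
        AEStronglyMeasurable (fun p : Euc d × Euc d => w p.1 p.2) (μ.prod μ) ∧
        (∀ᵐ p ∂μ.prod μ, w p.1 p.2 = -w p.2 p.1) ∧
        (∀ᵐ p ∂μ.prod μ, u p.1 ≠ u p.2 → w p.1 p.2 = sgnE (u p.1 - u p.2)) ∧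
        (∀ᵐ p ∂μ.prod μ, ‖w p.1 p.2‖ ≤ 1) ∧
        (∀ᵐ x ∂μ, x - u x = lam • ∫ z, w x z ∂μ) := by
  constructor
  · intro hmin
    obtain ⟨W, hW, hEL⟩ := exists_kkt hsupp hlam hmin
    obtain ⟨hanti, hbd, hsgn⟩ := mem_okset_iff.mp hW
    refine ⟨fun x y => (↑↑W : Euc d × Euc d → Euc d) (x, y), ?_, ?_, ?_, ?_, ?_⟩
    · exact Lp.aestronglyMeasurable W
    · filter_upwards [hanti] with p hp
      show (↑↑W : Euc d × Euc d → Euc d) p = -(↑↑W : Euc d × Euc d → Euc d) (Prod.swap p)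
      rw [hp, neg_neg]
    · filter_upwards [hsgn] with p hp
      exact hp
    · filter_upwards [hbd] with p hp
      exact hp
    · exact hEL
  · rintro ⟨w, hwm, hanti, hsgn, hbd, hEL⟩
    exact isSONMin_of_certificate hsupp hlam hu2 hwm hanti hsgn hbd hEL
end
end
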